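/- arXiv:1305.7319 — 6 statements merged into one kernel-verified Lean document; each statement's English description precedes it below -/
import Mathlib

section
/- Let p = Σ_{J ⊆ [n]} p_J x^J be a square-free polynomial in n variables with p(0) = 0, let p_max be its maximum over the hypercube [0,1]^n, and let t be an integer with deg(p) ≤ t ≤ n. For J ⊆ [n] set λ_J = (C(n−1,t−1) − C(n−|J|,t−|J|))/C(n−1,t−1), where C(a,b) denotes the binomial coefficient. Then the Handelman bound of order t satisfies p_han^{(t)} ≤ (n/t)·p_max + Σ_{J ⊆ [n], |J| ≥ 2, p_J > 0} p_J λ_J. In particular, if p_J ≤ 0 for all J with |J| ≥ 2, then p_han^{(t)} ≤ (n/t)·p_max. -/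
open MvPolynomial Finset

noncomputable def handTerm {V : Type*} [DecidableEq V] (T I : Finset V) : MvPolynomial V ℝ :=
  (∏ i ∈ I, X i) * ∏ j ∈ T \ I, (1 - X j)

def InHandelman {V : Type*} [Fintype V] [DecidableEq V] (t : ℕ)
    (p : MvPolynomial V ℝ) : Prop :=
  ∃ c : Finset V → Finset V → ℝ,
    (∀ T I, 0 ≤ c T I) ∧
    p = ∑ T ∈ Finset.univ.filter (fun T : Finset V => T.card ≤ t),
          ∑ I ∈ T.powerset, C (c T I) * handTerm T I

/-- The multilinear exponent vector of a subset `J ⊆ [n]`, so that `x^J` has exponents `monOf J`. -/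
noncomputable def monOf {n : ℕ} (J : Finset (Fin n)) : Fin n →₀ ℕ :=
  ∑ i ∈ J, Finsupp.single i 1

variable {n : ℕ}

lemma monOf_apply (J : Finset (Fin n)) (i : Fin n) :
    monOf J i = if i ∈ J then 1 else 0 := by
  classical
  simp only [monOf, Finset.sum_apply', Finsupp.single_apply]
  by_cases h : i ∈ J
  · rw [Finset.sum_eq_single i (fun b _ hb => if_neg hb) (fun h' => absurd h h')]
    simp [h]
  · rw [Finset.sum_eq_zero, if_neg h]
    intro b hb
    refine if_neg fun e => h ?_
    rwa [e] at hb

lemma monOf_support (J : Finset (Fin n)) : (monOf J).support = J := by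
  ext i; simp [Finsupp.mem_support_iff, monOf_apply]

lemma monOf_injective : Function.Injective (monOf (n := n)) := by
  intro a b h
  rw [← monOf_support a, ← monOf_support b, h]

lemma monomial_monOf (J : Finset (Fin n)) (c : ℝ) :
    (monomial (monOf J) c : MvPolynomial (Fin n) ℝ) = C c * ∏ i ∈ J, X i := by
  rw [monomial_eq]
  congr 1
  rw [Finsupp.prod, monOf_support]
  exact Finset.prod_congr rfl fun i hi => by rw [monOf_apply, if_pos hi, pow_one]

lemma sq_free_repr (p : MvPolynomial (Fin n) ℝ)
    (hsf : ∀ m ∈ p.support, ∀ i, m i ≤ 1) :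
    p = ∑ J : Finset (Fin n), C (p.coeff (monOf J)) * ∏ i ∈ J, X i := by
  classical
  have hmem : ∀ m ∈ p.support, m = monOf m.support := by
    intro m hm
    ext i
    rw [monOf_apply]
    by_cases h : i ∈ m.support
    · rw [if_pos h]
      have h1 := hsf m hm i
      have h2 : m i ≠ 0 := Finsupp.mem_support_iff.mp h
      omega
    · rw [if_neg h]
      exact Finsupp.notMem_support_iff.mp h
  have h1 : ∑ J : Finset (Fin n), C (p.coeff (monOf J)) * ∏ i ∈ J, X i
      = ∑ J : Finset (Fin n), monomial (monOf J) (p.coeff (monOf J)) :=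
    Finset.sum_congr rfl fun J _ => (monomial_monOf J _).symm
  have h2 : ∑ J : Finset (Fin n), (monomial (monOf J)) (p.coeff (monOf J))
      = ∑ m ∈ Finset.univ.image (monOf (n := n)), monomial m (p.coeff m) :=
    (Finset.sum_image (g := monOf) (f := fun m => monomial m (p.coeff m)) (s := Finset.univ) (fun a _ b _ h => monOf_injective h)).symm
  rw [h1, h2]
  conv_lhs => rw [← support_sum_monomial_coeff p]
  apply Finset.sum_subset
  · intro m hm
    rw [Finset.mem_image]
    exact ⟨m.support, Finset.mem_univ _, (hmem m hm).symm⟩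
  · intro m _ hm
    rw [MvPolynomial.notMem_support_iff.mp hm, monomial_zero]

lemma handTerm_insert_left {a : Fin n} {s I : Finset (Fin n)} (ha : a ∉ s) (hI : I ⊆ s) :
    handTerm (insert a s) I = (1 - X a) * handTerm s I := by
  have haI : a ∉ I := fun h => ha (hI h)
  rw [handTerm, handTerm, Finset.insert_sdiff_of_notMem _ haI,
    Finset.prod_insert (fun h => ha (Finset.mem_sdiff.mp h).1)]
  ring

lemma handTerm_insert_both {a : Fin n} {s I : Finset (Fin n)} (ha : a ∉ s) (hI : I ⊆ s) :
    handTerm (insert a s) (insert a I) = X a * handTerm s I := by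
  have haI : a ∉ I := fun h => ha (hI h)
  have hset : insert a s \ insert a I = s \ I := by
    ext x
    simp only [Finset.mem_sdiff, Finset.mem_insert]
    constructor
    · rintro ⟨hx1 | hx1, hx2⟩
      · exact absurd (Or.inl hx1) hx2
      · exact ⟨hx1, fun h => hx2 (Or.inr h)⟩
    · rintro ⟨hx1, hx2⟩
      exact ⟨Or.inr hx1, fun h => h.elim (fun e => ha (e ▸ hx1)) hx2⟩
  rw [handTerm, handTerm, hset, Finset.prod_insert haI]
  ring

lemma interp (c : Finset (Fin n) → ℝ) (T : Finset (Fin n)) :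
    ∑ I ∈ T.powerset, C (∑ J ∈ I.powerset, c J) * handTerm T I
      = ∑ J ∈ T.powerset, C (c J) * ∏ i ∈ J, X i := by
  classical
  induction T using Finset.induction generalizing c with
  | empty => simp [handTerm]
  | @insert a s ha ih =>
    rw [Finset.sum_powerset_insert ha, Finset.sum_powerset_insert ha]
    have step1 : ∀ I ∈ s.powerset,
        C (∑ J ∈ I.powerset, c J) * handTerm (insert a s) I
          = (1 - X a) * (C (∑ J ∈ I.powerset, c J) * handTerm s I) := by
      intro I hI
      rw [handTerm_insert_left ha (Finset.mem_powerset.mp hI)]; ring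
    have step2 : ∀ I ∈ s.powerset,
        C (∑ J ∈ (insert a I).powerset, c J) * handTerm (insert a s) (insert a I)
          = X a * (C (∑ J ∈ I.powerset, c J) * handTerm s I)
            + X a * (C (∑ J ∈ I.powerset, c (insert a J)) * handTerm s I) := by
      intro I hI
      have haI : a ∉ I := fun h => ha (Finset.mem_powerset.mp hI h)
      rw [handTerm_insert_both ha (Finset.mem_powerset.mp hI),
          Finset.sum_powerset_insert haI, map_add]
      ring
    rw [Finset.sum_congr rfl step1, Finset.sum_congr rfl step2, Finset.sum_add_distrib,
        ← Finset.mul_sum, ← Finset.mul_sum, ← Finset.mul_sum]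
    rw [ih c, ih (fun J => c (insert a J))]
    have step3 : ∀ J ∈ s.powerset,
        C (c (insert a J)) * ∏ i ∈ insert a J, X i
          = X a * (C (c (insert a J)) * ∏ i ∈ J, X i) := by
      intro J hJ
      rw [Finset.prod_insert (fun h => ha (Finset.mem_powerset.mp hJ h))]; ring
    rw [Finset.sum_congr rfl step3, ← Finset.mul_sum]
    ring

lemma prod_ind01 (I J : Finset (Fin n)) :
    (∏ i ∈ J, (if i ∈ I then (1 : ℝ) else 0)) = if J ⊆ I then 1 else 0 := by
  by_cases h : J ⊆ I
  · rw [if_pos h, Finset.prod_eq_one]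
    intro i hi; rw [if_pos (h hi)]
  · rw [if_neg h]
    obtain ⟨i, hiJ, hiI⟩ := Finset.not_subset.mp h
    exact Finset.prod_eq_zero hiJ (if_neg hiI)

lemma eval_indicator (p : MvPolynomial (Fin n) ℝ)
    (hsf : ∀ m ∈ p.support, ∀ i, m i ≤ 1) (I : Finset (Fin n)) :
    eval (fun i => if i ∈ I then (1 : ℝ) else 0) p
      = ∑ J ∈ I.powerset, p.coeff (monOf J) := by
  classical
  conv_lhs => rw [sq_free_repr p hsf]
  rw [map_sum]
  have : ∀ J : Finset (Fin n),
      eval (fun i => if i ∈ I then (1 : ℝ) else 0) (C (p.coeff (monOf J)) * ∏ i ∈ J, X i)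
        = if J ⊆ I then p.coeff (monOf J) else 0 := by
    intro J
    rw [map_mul, eval_C, map_prod]
    simp only [eval_X]
    rw [prod_ind01]
    by_cases h : J ⊆ I <;> simp [h]
  rw [Finset.sum_congr rfl fun J _ => this J, Finset.sum_ite, Finset.sum_const_zero, add_zero]
  apply Finset.sum_congr _ (fun _ _ => rfl)
  ext J
  simp [Finset.mem_powerset]

lemma eval_le_bound (p : MvPolynomial (Fin n) ℝ) (x : Fin n → ℝ)
    (hx : ∀ i, x i ∈ Set.Icc (0 : ℝ) 1) :
    eval x p ≤ ∑ m ∈ p.support, |p.coeff m| := by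
  rw [eval_eq]
  apply Finset.sum_le_sum
  intro m _
  have h1 : 0 ≤ ∏ i ∈ m.support, x i ^ m i :=
    Finset.prod_nonneg fun i _ => pow_nonneg (hx i).1 _
  have h2 : ∏ i ∈ m.support, x i ^ m i ≤ 1 :=
    Finset.prod_le_one (fun i _ => pow_nonneg (hx i).1 _)
      (fun i _ => pow_le_one₀ (hx i).1 (hx i).2)
  calc p.coeff m * ∏ i ∈ m.support, x i ^ m i
      ≤ |p.coeff m| * ∏ i ∈ m.support, x i ^ m i := by
        exact mul_le_mul_of_nonneg_right (le_abs_self _) h1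
    _ ≤ |p.coeff m| * 1 := mul_le_mul_of_nonneg_left h2 (abs_nonneg _)
    _ = |p.coeff m| := mul_one _

lemma choose_pred_le {x y : ℕ} (h : y ≤ x) :
    Nat.choose (x - 1) (y - 1) ≤ Nat.choose x y := by
  match x, y with
  | x, 0 => simp
  | 0, y + 1 => omega
  | x + 1, y + 1 =>
    simp only [Nat.add_sub_cancel, Nat.choose_succ_succ]
    exact Nat.le_add_right _ _

lemma choose_sub_le (k : ℕ) {a b : ℕ} (h : b ≤ a) :
    Nat.choose (a - k) (b - k) ≤ Nat.choose a b := by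
  induction k with
  | zero => simp
  | succ k ih =>
    have h1 : a - (k + 1) = (a - k) - 1 := by omega
    have h2 : b - (k + 1) = (b - k) - 1 := by omega
    rw [h1, h2]
    exact le_trans (choose_pred_le (by omega)) ih

lemma counting {t : ℕ} (J : Finset (Fin n)) (hJ : J.card ≤ t) (htn : t ≤ n) :
    (Finset.univ.filter fun T : Finset (Fin n) => T.card = t ∧ J ⊆ T).card
      = Nat.choose (n - J.card) (t - J.card) := by
  classical
  have hc : n - J.card = Jᶜ.card := by rw [Finset.card_compl, Fintype.card_fin]
  rw [hc, ← Finset.card_powersetCard (t - J.card) Jᶜ]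
  apply Finset.card_bij' (fun T _ => T \ J) (fun S _ => S ∪ J)
  · intro T hT
    rw [Finset.mem_filter] at hT
    obtain ⟨-, hcard, hsub⟩ := hT
    rw [Finset.mem_powersetCard]
    constructor
    · intro x hx
      rw [Finset.mem_compl]
      exact (Finset.mem_sdiff.mp hx).2
    · rw [Finset.card_sdiff_of_subset hsub, hcard]
  · intro S hS
    rw [Finset.mem_powersetCard] at hS
    obtain ⟨hsub, hcard⟩ := hS
    have hdisj : Disjoint S J := fun u h1 h2 x hx =>
      absurd (hsub (h1 hx)) (by simpa using h2 hx)
    rw [Finset.mem_filter]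
    refine ⟨Finset.mem_univ _, ?_, Finset.subset_union_right⟩
    rw [Finset.card_union_of_disjoint hdisj, hcard]
    omega
  · intro T hT
    rw [Finset.mem_filter] at hT
    exact Finset.sdiff_union_of_subset hT.2.2
  · intro S hS
    rw [Finset.mem_powersetCard] at hS
    have hdisj : Disjoint S J := fun u h1 h2 x hx =>
      absurd (hS.1 (h1 hx)) (by simpa using h2 hx)
    rw [Finset.union_sdiff_cancel_right hdisj]


lemma monOf_sum_eq_card (J : Finset (Fin n)) : ((monOf J).sum fun _ e => e) = J.card := by
  rw [Finsupp.sum, monOf_support]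
  rw [Finset.sum_congr rfl fun i hi => by rw [monOf_apply, if_pos hi]]
  simp

lemma pc_zero {t : ℕ} (p : MvPolynomial (Fin n) ℝ) (hdeg : p.totalDegree ≤ t)
    (J : Finset (Fin n)) (h : t < J.card) : p.coeff (monOf J) = 0 := by
  by_contra h'
  have hmem : monOf J ∈ p.support := MvPolynomial.mem_support_iff.mpr h'
  have := MvPolynomial.le_totalDegree hmem
  rw [monOf_sum_eq_card] at this
  omega

lemma handTerm_self (T : Finset (Fin n)) : handTerm T T = ∏ i ∈ T, X i := by
  rw [handTerm, Finset.sdiff_self, Finset.prod_empty, mul_one]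

lemma partition_unity (T : Finset (Fin n)) :
    ∑ I ∈ T.powerset, handTerm T I = 1 := by
  classical
  have h := interp (fun J => if J = ∅ then (1 : ℝ) else 0) T
  have h1 : ∀ I ∈ T.powerset,
      C (∑ J ∈ I.powerset, if J = ∅ then (1 : ℝ) else 0) * handTerm T I = handTerm T I := by
    intro I _
    rw [Finset.sum_ite_eq' I.powerset ∅ (fun _ => (1:ℝ)), if_pos (Finset.empty_mem_powerset I),
      map_one, one_mul]
  rw [Finset.sum_congr rfl h1] at h
  have h2 : ∀ J ∈ T.powerset, C (if J = ∅ then (1:ℝ) else 0) * ∏ i ∈ J, X i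
      = if J = ∅ then C (1:ℝ) * ∏ i ∈ J, X i else 0 := by
    intro J _; split <;> simp
  rw [h, Finset.sum_congr rfl h2, Finset.sum_ite_eq' T.powerset ∅
    (fun J => C (1:ℝ) * ∏ i ∈ J, X i), if_pos (Finset.empty_mem_powerset T)]
  simp

noncomputable def lamR (n t j : ℕ) : ℝ :=
  ((Nat.choose (n - 1) (t - 1) : ℝ) - (Nat.choose (n - j) (t - j) : ℝ)) /
    (Nat.choose (n - 1) (t - 1) : ℝ)

lemma monOf_empty : monOf (∅ : Finset (Fin n)) = 0 := by simp [monOf]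


lemma main_identity {t : ℕ} (p : MvPolynomial (Fin n) ℝ)
    (hsf : ∀ m ∈ p.support, ∀ i, m i ≤ 1) (h0 : p.coeff 0 = 0)
    (hdeg : p.totalDegree ≤ t) (htn : t ≤ n) (ht : 1 ≤ t)
    (pmax : ℝ) (hpm : ∀ I : Finset (Fin n), ∑ J ∈ I.powerset, p.coeff (monOf J) ≤ pmax) :
    InHandelman t (C (((n : ℝ) / t) * pmax +
      ∑ J ∈ Finset.univ.filter
          (fun J : Finset (Fin n) => 2 ≤ J.card ∧ 0 < p.coeff (monOf J)),
        p.coeff (monOf J) * lamR n t J.card) - p) := by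
  classical
  set pc : Finset (Fin n) → ℝ := fun J => p.coeff (monOf J) with hpc
  set ch : ℝ := (Nat.choose (n - 1) (t - 1) : ℝ) with hch
  have hchpos : (0 : ℝ) < ch := by
    rw [hch]
    exact_mod_cast Nat.choose_pos (by omega)
  set w : ℝ := 1 / ch with hw
  have hwnn : 0 ≤ w := by positivity
  have hlam_nonneg : ∀ J : Finset (Fin n), 1 ≤ J.card → 0 ≤ lamR n t J.card := by
    intro J hJ
    have h1 : Nat.choose (n - J.card) (t - J.card) ≤ Nat.choose (n - 1) (t - 1) := by
      have := choose_sub_le (J.card - 1) (a := n - 1) (b := t - 1) (by omega)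
      have e1 : n - 1 - (J.card - 1) = n - J.card := by omega
      have e2 : t - 1 - (J.card - 1) = t - J.card := by omega
      rwa [e1, e2] at this
    rw [lamR]
    apply div_nonneg _ (le_of_lt hchpos)
    rw [sub_nonneg]
    exact_mod_cast h1
  set corr : Finset (Fin n) → Finset (Fin n) → ℝ := fun T I =>
    if 2 ≤ T.card then
      (if 0 < pc T then (if I = T then 0 else pc T * lamR n t T.card)
       else (if I = T then -(pc T) * lamR n t T.card else 0))
    else 0 with hcorr
  set pval : Finset (Fin n) → ℝ := fun I => ∑ J ∈ I.powerset, pc J with hpval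
  refine ⟨fun T I => (if T.card = t then w * (pmax - pval I) else 0) + corr T I, ?_, ?_⟩
  · intro T I
    apply add_nonneg
    · split
      · exact mul_nonneg hwnn (by linarith [hpm I])
      · exact le_refl 0
    · rw [hcorr]
      dsimp only
      split
      · rename_i h2
        split
        · rename_i hq
          split
          · exact le_refl 0
          · exact mul_nonneg (le_of_lt hq) (hlam_nonneg T (by omega))
        · rename_i hq
          push_neg at hq
          split
          · exact mul_nonneg (by linarith) (hlam_nonneg T (by omega))
          · exact le_refl 0
      · exact le_refl 0
  · -- the polynomial identity
    set cf : Finset (Fin n) → ℝ := fun J => -(w * pc J) + (if J = ∅ then w * pmax else 0)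
      with hcf
    set cnt : Finset (Fin n) → ℕ := fun J => Nat.choose (n - J.card) (t - J.card) with hcnt
    set e : Finset (Fin n) → ℝ :=
      fun J => if 2 ≤ J.card then pc J * lamR n t J.card else 0 with he
    have hpczero : ∀ J : Finset (Fin n), t < J.card → pc J = 0 := fun J h => pc_zero p hdeg J h
    have hpc0 : pc ∅ = 0 := by rw [hpc]; dsimp only; rw [monOf_empty]; exact h0
    have hnat : Nat.choose n t * t = n * Nat.choose (n - 1) (t - 1) := by
      have h1 : n - 1 + 1 = n := by omega
      have h2 : t - 1 + 1 = t := by omega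
      have := Nat.add_one_mul_choose_eq (n - 1) (t - 1)
      rw [h1, h2] at this
      omega
    have hnt : (Nat.choose n t : ℝ) * (w * pmax) = ((n : ℝ) / t) * pmax := by
      have htpos : (0 : ℝ) < t := by exact_mod_cast ht
      rw [hw, hch]
      have hcast : (Nat.choose n t : ℝ) * t = (n : ℝ) * ((n - 1).choose (t - 1) : ℝ) := by
        exact_mod_cast congrArg (Nat.cast : ℕ → ℝ) hnat
      have hne : ((n - 1).choose (t - 1) : ℝ) ≠ 0 := by rw [← hch]; exact hchpos.ne'
      field_simp
      linear_combination pmax * hcast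
    -- split the sum into the two parts
    have hsplit : ∑ T ∈ Finset.univ.filter (fun T : Finset (Fin n) => T.card ≤ t),
          ∑ I ∈ T.powerset,
            C ((if T.card = t then w * (pmax - pval I) else 0) + corr T I) * handTerm T I
        = (∑ T ∈ Finset.univ.filter (fun T : Finset (Fin n) => T.card ≤ t),
            ∑ I ∈ T.powerset,
              C (if T.card = t then w * (pmax - pval I) else 0) * handTerm T I)
          + ∑ T ∈ Finset.univ.filter (fun T : Finset (Fin n) => T.card ≤ t),
              ∑ I ∈ T.powerset, C (corr T I) * handTerm T I := by
      rw [← Finset.sum_add_distrib]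
      refine Finset.sum_congr rfl fun T _ => ?_
      rw [← Finset.sum_add_distrib]
      exact Finset.sum_congr rfl fun I _ => by rw [map_add, add_mul]
    -- Part 1
    have hS1 : (∑ T ∈ Finset.univ.filter (fun T : Finset (Fin n) => T.card ≤ t),
          ∑ I ∈ T.powerset,
            C (if T.card = t then w * (pmax - pval I) else 0) * handTerm T I)
        = ∑ J : Finset (Fin n), C ((cnt J : ℝ) * cf J) * ∏ i ∈ J, X i := by
      have hsub : Finset.univ.filter (fun T : Finset (Fin n) => T.card = t)
          ⊆ Finset.univ.filter (fun T : Finset (Fin n) => T.card ≤ t) := by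
        intro T hT
        rw [Finset.mem_filter] at hT ⊢
        exact ⟨hT.1, le_of_eq hT.2⟩
      have hzero : ∀ T ∈ Finset.univ.filter (fun T : Finset (Fin n) => T.card ≤ t),
          T ∉ Finset.univ.filter (fun T : Finset (Fin n) => T.card = t) →
          (∑ I ∈ T.powerset,
            C (if T.card = t then w * (pmax - pval I) else 0) * handTerm T I) = 0 := by
        intro T _ hT
        rw [Finset.mem_filter] at hT
        push_neg at hT
        apply Finset.sum_eq_zero
        intro I _
        rw [if_neg (hT (Finset.mem_univ T)), map_zero, zero_mul]
      rw [← Finset.sum_subset hsub hzero]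
      have hkey : ∀ I : Finset (Fin n), w * (pmax - pval I) = ∑ J ∈ I.powerset, cf J := by
        intro I
        rw [hcf]
        dsimp only
        rw [Finset.sum_add_distrib, Finset.sum_ite_eq' I.powerset ∅ (fun _ => w * pmax),
          if_pos (Finset.empty_mem_powerset I), Finset.sum_neg_distrib, ← Finset.mul_sum]
        rw [hpval]
        ring
      have hT1 : ∀ T ∈ Finset.univ.filter (fun T : Finset (Fin n) => T.card = t),
          (∑ I ∈ T.powerset,
            C (if T.card = t then w * (pmax - pval I) else 0) * handTerm T I)
          = ∑ J ∈ T.powerset, C (cf J) * ∏ i ∈ J, X i := by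
        intro T hT
        rw [Finset.mem_filter] at hT
        rw [← interp cf T]
        refine Finset.sum_congr rfl fun I hI => ?_
        rw [if_pos hT.2, hkey I]
      rw [Finset.sum_congr rfl hT1]
      -- swap sums
      have hps : ∀ T : Finset (Fin n),
          (∑ J ∈ T.powerset, C (cf J) * ∏ i ∈ J, X i)
          = ∑ J : Finset (Fin n), if J ⊆ T then C (cf J) * ∏ i ∈ J, X i else 0 := by
        intro T
        rw [← Finset.sum_filter]
        apply Finset.sum_congr _ fun _ _ => rfl
        ext J; simp [Finset.mem_powerset]
      rw [Finset.sum_congr rfl fun T _ => hps T, Finset.sum_comm]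
      refine Finset.sum_congr rfl fun J _ => ?_
      rw [← Finset.sum_filter, Finset.sum_const, Finset.filter_filter]
      by_cases hJt : J.card ≤ t
      · rw [counting J hJt htn]
        rw [nsmul_eq_mul,
          show ((Nat.choose (n - J.card) (t - J.card) : ℕ) : MvPolynomial (Fin n) ℝ)
            = C ((Nat.choose (n - J.card) (t - J.card) : ℕ) : ℝ) from (map_natCast _ _).symm,
          ← mul_assoc, ← map_mul]
      · push_neg at hJt
        have hJne : J ≠ ∅ := by
          intro h
          rw [h, Finset.card_empty] at hJt
          omega
        have : cf J = 0 := by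
          rw [hcf]; dsimp only
          rw [hpczero J hJt, if_neg hJne]
          ring
        rw [this, show (cnt J : ℝ) * (0:ℝ) = 0 by ring, map_zero, zero_mul, smul_zero]
    -- Part 2
    have hS2 : (∑ T ∈ Finset.univ.filter (fun T : Finset (Fin n) => T.card ≤ t),
          ∑ I ∈ T.powerset, C (corr T I) * handTerm T I)
        = C (∑ J ∈ Finset.univ.filter
              (fun J : Finset (Fin n) => 2 ≤ J.card ∧ 0 < pc J), pc J * lamR n t J.card)
          - ∑ J : Finset (Fin n), C (e J) * ∏ i ∈ J, X i := by
      have hinner : ∀ T : Finset (Fin n),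
          (∑ I ∈ T.powerset, C (corr T I) * handTerm T I)
          = (if 2 ≤ T.card ∧ 0 < pc T then C (pc T * lamR n t T.card) else 0)
            - C (e T) * ∏ i ∈ T, X i := by
        intro T
        by_cases h2 : 2 ≤ T.card
        · by_cases hq : 0 < pc T
          · have hstep : ∀ I ∈ T.powerset, C (corr T I) * handTerm T I
                = C (pc T * lamR n t T.card) * handTerm T I
                  - (if I = T then C (pc T * lamR n t T.card) * handTerm T I else 0) := by
              intro I _
              rw [hcorr]; dsimp only; rw [if_pos h2, if_pos hq]
              by_cases hIT : I = T
              · rw [if_pos hIT, if_pos hIT, map_zero, zero_mul]; ring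
              · rw [if_neg hIT, if_neg hIT, sub_zero]
            rw [Finset.sum_congr rfl hstep, Finset.sum_sub_distrib, ← Finset.mul_sum,
              partition_unity, Finset.sum_ite_eq' T.powerset T
                (fun I => C (pc T * lamR n t T.card) * handTerm T I),
              if_pos (Finset.mem_powerset_self T), handTerm_self, if_pos ⟨h2, hq⟩,
              he]
            dsimp only
            rw [if_pos h2, mul_one]
          · have hstep : ∀ I ∈ T.powerset, C (corr T I) * handTerm T I
                = if I = T then C (-(pc T) * lamR n t T.card) * handTerm T I else 0 := by
              intro I _
              rw [hcorr]; dsimp only; rw [if_pos h2, if_neg hq]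
              by_cases hIT : I = T
              · rw [if_pos hIT, if_pos hIT]
              · rw [if_neg hIT, if_neg hIT, map_zero, zero_mul]
            rw [Finset.sum_congr rfl hstep, Finset.sum_ite_eq' T.powerset T
                (fun I => C (-(pc T) * lamR n t T.card) * handTerm T I),
              if_pos (Finset.mem_powerset_self T), handTerm_self,
              if_neg (fun hc => hq hc.2), he]
            dsimp only
            rw [if_pos h2, neg_mul, map_neg, zero_sub, neg_mul]
        · have hstep : ∀ I ∈ T.powerset, C (corr T I) * handTerm T I = 0 := by
            intro I _
            rw [hcorr]; dsimp only; rw [if_neg h2, map_zero, zero_mul]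
          rw [Finset.sum_congr rfl hstep, Finset.sum_const_zero, he]
          dsimp only
          rw [if_neg (fun hc => h2 hc.1), if_neg h2, map_zero, zero_mul, sub_zero]
      rw [Finset.sum_congr rfl fun T _ => hinner T, Finset.sum_sub_distrib]
      congr 1
      · rw [← Finset.sum_filter, Finset.filter_filter, map_sum]
        apply Finset.sum_congr _ fun _ _ => rfl
        ext T
        simp only [Finset.mem_filter, Finset.mem_univ, true_and]
        constructor
        · rintro ⟨-, h⟩; exact h
        · intro h
          refine ⟨?_, h⟩
          by_contra hc
          push_neg at hc
          exact absurd (hpczero T hc) (ne_of_gt h.2)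
      · apply Finset.sum_subset (Finset.filter_subset _ _)
        intro T _ hT
        rw [Finset.mem_filter] at hT
        push_neg at hT
        have htT : t < T.card := hT (Finset.mem_univ T)
        rw [he]
        dsimp only
        by_cases h2 : 2 ≤ T.card
        · rw [if_pos h2, hpczero T htT, zero_mul, map_zero, zero_mul]
        · rw [if_neg h2, map_zero, zero_mul]
    rw [hsplit, hS1, hS2]
    -- final per-J identity
    have hfin : ∀ J : Finset (Fin n),
        C ((cnt J : ℝ) * cf J) * ∏ i ∈ J, X i
          = (if J = ∅ then C (((n : ℝ) / t) * pmax) else 0)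
            + C (e J - pc J) * ∏ i ∈ J, X i := by
      intro J
      rcases Nat.lt_or_ge J.card 2 with hc2 | hc2
      · rcases Nat.lt_or_ge J.card 1 with hc1 | hc1
        · have hJe : J = ∅ := Finset.card_eq_zero.mp (by omega)
          subst hJe
          rw [if_pos rfl, he, hcf, hcnt]
          dsimp only
          simp only [Finset.card_empty, Nat.sub_zero, Finset.prod_empty, mul_one]
          simp only [show ¬ (2:ℕ) ≤ 0 by omega, ↓reduceIte]
          rw [hpc0]
          rw [show -(w * 0) + w * pmax = w * pmax by ring, show (0:ℝ) - 0 = 0 by ring,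
            map_zero, add_zero, hnt]
        · have hc1' : J.card = 1 := by omega
          have hJne : J ≠ ∅ := by
            intro h; rw [h, Finset.card_empty] at hc1'; omega
          rw [if_neg hJne, he, hcf, hcnt]
          dsimp only
          rw [if_neg (show ¬ 2 ≤ J.card by omega), hc1', if_neg hJne, add_zero, zero_sub,
            ← hch, show ch * -(w * pc J) = -(pc J) by rw [hw]; field_simp,
            map_neg, neg_mul, zero_add]
      · have hJne : J ≠ ∅ := by
          intro h; rw [h, Finset.card_empty] at hc2; omega
        rw [if_neg hJne, he, hcf, hcnt]
        dsimp only
        rw [if_pos hc2, if_neg hJne, zero_add, add_zero]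
        congr 1
        rw [lamR, ← hch]
        have : (Nat.choose (n - J.card) (t - J.card) : ℝ) * -(w * pc J)
            = pc J * ((ch - (Nat.choose (n - J.card) (t - J.card) : ℝ)) / ch) - pc J := by
          rw [hw]
          field_simp
          ring
        rw [this]
    rw [Finset.sum_congr rfl fun J _ => hfin J, Finset.sum_add_distrib,
      Finset.sum_ite_eq' Finset.univ ∅ (fun _ => C (((n : ℝ) / t) * pmax)),
      if_pos (Finset.mem_univ ∅)]
    have hp : p = ∑ J : Finset (Fin n), C (pc J) * ∏ i ∈ J, X i := sq_free_repr p hsf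
    have hsub2 : ∑ J : Finset (Fin n), C (e J - pc J) * ∏ i ∈ J, X i
        = (∑ J : Finset (Fin n), C (e J) * ∏ i ∈ J, X i)
          - ∑ J : Finset (Fin n), C (pc J) * ∏ i ∈ J, X i := by
      rw [← Finset.sum_sub_distrib]
      exact Finset.sum_congr rfl fun J _ => by rw [map_sub, sub_mul]
    rw [hsub2, ← hp, map_add]
    simp only [hpc]
    ring

lemma handTerm_eval_zero (T I : Finset (Fin n)) :
    eval (fun _ : Fin n => (0 : ℝ)) (handTerm T I) = if I = ∅ then 1 else 0 := by
  simp only [handTerm, map_mul, map_prod, map_sub, eval_X, map_one, sub_zero,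
    Finset.prod_const, one_pow, mul_one]
  by_cases hI : I = ∅
  · simp [hI]
  · rw [if_neg hI, zero_pow (Finset.card_ne_zero.mpr (Finset.nonempty_iff_ne_empty.mpr hI))]

lemma mem_nonneg {t : ℕ} (p : MvPolynomial (Fin n) ℝ)
    (hsf : ∀ m ∈ p.support, ∀ i, m i ≤ 1) (h0 : p.coeff 0 = 0)
    (lam : ℝ) (h : InHandelman t (C lam - p)) : 0 ≤ lam := by
  obtain ⟨c, hc, hrep⟩ := h
  have hz : (fun i : Fin n => if i ∈ (∅ : Finset (Fin n)) then (1:ℝ) else 0)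
      = fun _ => 0 := by funext i; simp
  have hev0 : eval (fun _ : Fin n => (0:ℝ)) p = 0 := by
    rw [← hz, eval_indicator p hsf ∅, Finset.powerset_empty, Finset.sum_singleton,
      monOf_empty, h0]
  have := congrArg (eval (fun _ : Fin n => (0:ℝ))) hrep
  rw [map_sub, eval_C, hev0, sub_zero, map_sum] at this
  rw [this]
  apply Finset.sum_nonneg
  intro T _
  rw [map_sum]
  apply Finset.sum_nonneg
  intro I _
  rw [map_mul, eval_C, handTerm_eval_zero]
  split
  · rw [mul_one]; exact hc T I
  · rw [mul_zero]

/-- Error bound for the Handelman hierarchy on the hypercube: if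
`p = Σ_J p_J x^J` is square-free with `p(0) = 0`, `p_max` is its maximum over `[0,1]^n` and
`deg p ≤ t ≤ n`, then `p_han^{(t)} ≤ (n/t)·p_max + Σ_{|J| ≥ 2, p_J > 0} p_J λ_J`, where
`λ_J = (C(n−1,t−1) − C(n−|J|,t−|J|))/C(n−1,t−1)`.  In particular, if `p_J ≤ 0` for all
`|J| ≥ 2` then `p_han^{(t)} ≤ (n/t)·p_max`. -/
theorem handelman_error_bound {n : ℕ} (p : MvPolynomial (Fin n) ℝ)
    (hsf : ∀ m ∈ p.support, ∀ i, m i ≤ 1) (h0 : p.coeff 0 = 0)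
    (t : ℕ) (hdeg : p.totalDegree ≤ t) (htn : t ≤ n)
    (pmax : ℝ)
    (hpmax : pmax = sSup {v : ℝ | ∃ x : Fin n → ℝ,
      (∀ i, x i ∈ Set.Icc (0 : ℝ) 1) ∧ v = eval x p}) :
    (sInf {lam : ℝ | InHandelman t (C lam - p)} ≤ ((n : ℝ) / t) * pmax +
      ∑ J ∈ Finset.univ.filter
          (fun J : Finset (Fin n) => 2 ≤ J.card ∧ 0 < p.coeff (monOf J)),
        p.coeff (monOf J) *
          (((Nat.choose (n - 1) (t - 1) : ℝ) - (Nat.choose (n - J.card) (t - J.card) : ℝ)) /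
            (Nat.choose (n - 1) (t - 1) : ℝ))) ∧
    ((∀ J : Finset (Fin n), 2 ≤ J.card → p.coeff (monOf J) ≤ 0) →
      sInf {lam : ℝ | InHandelman t (C lam - p)} ≤ ((n : ℝ) / t) * pmax) := by
  classical
  have hbdd : BddBelow {lam : ℝ | InHandelman t (C lam - p)} :=
    ⟨0, fun lam hlam => mem_nonneg p hsf h0 lam hlam⟩
  have key : sInf {lam : ℝ | InHandelman t (C lam - p)} ≤ ((n : ℝ) / t) * pmax +
      ∑ J ∈ Finset.univ.filter
          (fun J : Finset (Fin n) => 2 ≤ J.card ∧ 0 < p.coeff (monOf J)),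
        p.coeff (monOf J) * lamR n t J.card := by
    rcases Nat.eq_zero_or_pos t with ht0 | ht
    · -- degenerate case t = 0 : p = 0
      subst ht0
      have hp0 : p = 0 := by
        by_contra hne
        have hsupp := (MvPolynomial.totalDegree_eq_zero_iff _ p).mp (Nat.le_zero.mp hdeg)
        obtain ⟨m, hm⟩ := Finset.nonempty_iff_ne_empty.mpr
          (fun h => hne (MvPolynomial.support_eq_empty.mp h))
        have hm0 : m = 0 := Finsupp.ext fun i => hsupp m hm i
        rw [hm0] at hm
        exact (MvPolynomial.mem_support_iff.mp hm) h0
      have hmem : (0 : ℝ) ∈ {lam : ℝ | InHandelman 0 (C lam - p)} := by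
        refine ⟨fun _ _ => 0, fun _ _ => le_refl 0, ?_⟩
        rw [hp0, map_zero, sub_zero]
        symm
        apply Finset.sum_eq_zero
        intro T _
        apply Finset.sum_eq_zero
        intro I _
        rw [map_zero, zero_mul]
      have hle : sInf {lam : ℝ | InHandelman 0 (C lam - p)} ≤ 0 := csInf_le hbdd hmem
      have hsum0 : ∑ J ∈ Finset.univ.filter
          (fun J : Finset (Fin n) => 2 ≤ J.card ∧ 0 < p.coeff (monOf J)),
          p.coeff (monOf J) * lamR n 0 J.card = 0 := by
        apply Finset.sum_eq_zero
        intro J hJ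
        rw [hp0] at hJ
        simp at hJ
      rw [hsum0, Nat.cast_zero, div_zero, zero_mul, add_zero]
      exact hle
    · -- main case
      have hSetup : ∀ I : Finset (Fin n), ∑ J ∈ I.powerset, p.coeff (monOf J) ≤ pmax := by
        intro I
        rw [← eval_indicator p hsf I, hpmax]
        apply le_csSup
        · obtain ⟨M, hM⟩ : ∃ M, ∀ v ∈ {v : ℝ | ∃ x : Fin n → ℝ,
              (∀ i, x i ∈ Set.Icc (0 : ℝ) 1) ∧ v = eval x p}, v ≤ M := by
            refine ⟨∑ m ∈ p.support, |p.coeff m|, ?_⟩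
            rintro v ⟨x, hx, rfl⟩
            exact eval_le_bound p x hx
          exact ⟨M, hM⟩
        · exact ⟨fun i => if i ∈ I then 1 else 0, fun i => by by_cases h : i ∈ I <;> simp [h], rfl⟩
      have hmem := main_identity p hsf h0 hdeg htn ht pmax hSetup
      exact csInf_le hbdd hmem
  constructor
  · exact key
  · intro hneg
    have hempty : ∑ J ∈ Finset.univ.filter
        (fun J : Finset (Fin n) => 2 ≤ J.card ∧ 0 < p.coeff (monOf J)),
        p.coeff (monOf J) * lamR n t J.card = 0 := by
      apply Finset.sum_eq_zero
      intro J hJ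
      rw [Finset.mem_filter] at hJ
      exact absurd hJ.2.2 (not_lt.mpr (hneg J hJ.2.1))
    have := key
    rw [hempty, add_zero] at this
    exact this
end

section
/- Let p ∈ ℝ[x_1,…,x_n] be a square-free polynomial and t ≥ 1 an integer. Then the following are equivalent: (i) p ∈ 𝓗_t; (ii) p ∈ H_t + 𝓘; (iii) p ∈ H_t. In particular, for a square-free polynomial p, inf{λ : λ − p ∈ 𝓗_t} = inf{λ : λ − p ∈ H_t}. -/
open MvPolynomial Finset

/-- Membership in the Handelman set `𝓗_t`: a conic combination of the products
`x^α (1−x)^β` over pairs `(α,β)` with `|α + β| ≤ t`. -/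
def InCalH {n : ℕ} (t : ℕ) (p : MvPolynomial (Fin n) ℝ) : Prop :=
  ∃ (S : Finset ((Fin n → ℕ) × (Fin n → ℕ))) (c : (Fin n → ℕ) × (Fin n → ℕ) → ℝ),
    (∀ ab ∈ S, 0 ≤ c ab ∧ (∑ i, (ab.1 i + ab.2 i)) ≤ t) ∧
    p = ∑ ab ∈ S, C (c ab) *
      ((∏ i, X i ^ ab.1 i) * ∏ i, ((1 : MvPolynomial (Fin n) ℝ) - X i) ^ ab.2 i)

namespace CalHAux

variable {n t : ℕ}

/-! ### The ideal and the multilinearization map -/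

noncomputable def J (n : ℕ) : Ideal (MvPolynomial (Fin n) ℝ) :=
  Ideal.span (Set.range fun i : Fin n => (X i) ^ 2 - X i)

noncomputable def τ (m : Fin n →₀ ℕ) : Fin n →₀ ℕ := m.mapRange (fun a => min a 1) (by simp)

noncomputable def L : MvPolynomial (Fin n) ℝ →ₗ[ℝ] MvPolynomial (Fin n) ℝ :=
  { toFun := AddMonoidAlgebra.mapDomain τ
    map_add' := AddMonoidAlgebra.mapDomain_add τ
    map_smul' := fun a x => by
      apply AddMonoidAlgebra.coeff_injective
      simp [AddMonoidAlgebra.mapDomain, Finsupp.mapDomain_smul] }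

lemma L_monomial (m : Fin n →₀ ℕ) (a : ℝ) : L (monomial m a) = monomial (τ m) a := by
  rw [← single_eq_monomial, ← single_eq_monomial]; exact AddMonoidAlgebra.mapDomain_single

lemma L_fix {p : MvPolynomial (Fin n) ℝ} (h : ∀ m ∈ p.support, ∀ i, m i ≤ 1) : L p = p := by
  have : Finsupp.mapDomain τ (AddMonoidAlgebra.coeff p) =
      Finsupp.mapDomain id (AddMonoidAlgebra.coeff p) := by
    apply Finsupp.mapDomain_congr
    intro m hm
    ext i
    simp only [τ, Finsupp.mapRange_apply, id]
    have := h m hm i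
    omega
  show AddMonoidAlgebra.ofCoeff (Finsupp.mapDomain τ (AddMonoidAlgebra.coeff p)) = p
  rw [this, Finsupp.mapDomain_id]

lemma L_mul_gen (f : MvPolynomial (Fin n) ℝ) (i : Fin n) :
    L (f * ((X i) ^ 2 - X i)) = 0 := by
  induction f using MvPolynomial.induction_on' with
  | monomial u a =>
    have h2 : (X (R := ℝ) i) ^ 2 = monomial (Finsupp.single i 2) 1 := X_pow_eq_monomial
    have h1 : (X (R := ℝ) i) = monomial (Finsupp.single i 1) 1 := by
      rw [← pow_one (X (R := ℝ) i), X_pow_eq_monomial]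
    rw [mul_sub, h2, h1, monomial_mul, monomial_mul, sub_eq_add_neg, ← map_neg (monomial _),
      map_add L, L_monomial, L_monomial]
    have : τ (u + Finsupp.single i 2) = τ (u + Finsupp.single i 1) := by
      ext j
      simp only [τ, Finsupp.mapRange_apply, Finsupp.add_apply, Finsupp.single_apply]
      by_cases h : i = j <;> simp [h]
    rw [this, ← map_add (monomial _)]
    simp
  | add p q hp hq => rw [add_mul, map_add, hp, hq, add_zero]

lemma L_J {r : MvPolynomial (Fin n) ℝ} (hr : r ∈ J n) : L r = 0 := by
  rw [J, Ideal.mem_span_range_iff_exists_fun] at hr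
  obtain ⟨c, hc⟩ := hr
  rw [← hc, map_sum]
  refine Finset.sum_eq_zero fun i _ => ?_
  rw [L_mul_gen]

/-! ### Square-free polynomials -/

def SF (p : MvPolynomial (Fin n) ℝ) : Prop := ∀ m ∈ p.support, ∀ i, m i ≤ 1

lemma degreeOf_prod_le {σ : Type*} (j : σ) (s : Finset (Fin n)) (f : Fin n → MvPolynomial σ ℝ) :
    degreeOf j (∏ i ∈ s, f i) ≤ ∑ i ∈ s, degreeOf j (f i) := by
  induction s using Finset.cons_induction with
  | empty =>
    rw [Finset.prod_empty, Finset.sum_empty, ← C_1, Nat.le_zero]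
    exact degreeOf_C 1 j
  | cons a s ha ih =>
    rw [Finset.prod_cons, Finset.sum_cons]
    exact le_trans (degreeOf_mul_le _ _ _) (Nat.add_le_add le_rfl ih)

lemma degreeOf_one_sub_X (j i : Fin n) :
    degreeOf j ((1 : MvPolynomial (Fin n) ℝ) - X i) ≤ if j = i then 1 else 0 := by
  rw [degreeOf_le_iff]
  intro m hm
  have := support_sub _ _ _ hm
  rw [Finset.mem_union, support_X] at this
  rcases this with h | h
  · have h1 : m ∈ (monomial (0 : Fin n →₀ ℕ) (1:ℝ)).support := by
      rwa [← C_1, C_apply] at h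
    rw [support_monomial, if_neg one_ne_zero] at h1
    simp only [Finset.mem_singleton] at h1
    simp [h1]
  · simp only [Finset.mem_singleton] at h
    subst h
    rw [Finsupp.single_apply]
    split_ifs with h1 h2 h2 <;> omega

lemma degreeOf_handTerm_le (T I : Finset (Fin n)) (j : Fin n) :
    degreeOf j (handTerm T I) ≤ (if j ∈ I then 1 else 0) + (if j ∈ T \ I then 1 else 0) := by
  refine le_trans (degreeOf_mul_le _ _ _) (Nat.add_le_add ?_ ?_)
  · refine le_trans (degreeOf_prod_le j I _) ?_
    calc ∑ i ∈ I, degreeOf j (X i : MvPolynomial (Fin n) ℝ)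
        ≤ ∑ i ∈ I, if j = i then 1 else 0 :=
          Finset.sum_le_sum fun i _ => le_of_eq (degreeOf_X j i)
      _ = if j ∈ I then 1 else 0 := Finset.sum_ite_eq I j (fun _ => 1)
  · refine le_trans (degreeOf_prod_le j (T \ I) _) ?_
    calc ∑ i ∈ T \ I, degreeOf j ((1:MvPolynomial (Fin n) ℝ) - X i)
        ≤ ∑ i ∈ T \ I, if j = i then 1 else 0 :=
          Finset.sum_le_sum fun i _ => degreeOf_one_sub_X j i
      _ = if j ∈ T \ I then 1 else 0 := Finset.sum_ite_eq (T \ I) j (fun _ => 1)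

lemma SF_handTerm (T I : Finset (Fin n)) : SF (handTerm T I) := by
  intro m hm j
  have h1 := degreeOf_handTerm_le T I j
  have h2 : m j ≤ degreeOf j (handTerm T I) := degreeOf_le_iff.mp le_rfl m hm
  by_cases hI : j ∈ I
  · have hT : j ∉ T \ I := fun hT => (Finset.mem_sdiff.mp hT).2 hI
    rw [if_pos hI, if_neg hT] at h1; omega
  · rw [if_neg hI] at h1
    split_ifs at h1 <;> omega

lemma SF_Cmul {a : ℝ} {p : MvPolynomial (Fin n) ℝ} (h : SF p) : SF (C a * p) := by
  intro m hm
  rw [← smul_eq_C_mul] at hm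
  exact h m (Finsupp.support_smul hm)

lemma SF_sum {α : Type*} (s : Finset α) (f : α → MvPolynomial (Fin n) ℝ)
    (h : ∀ k ∈ s, SF (f k)) : SF (∑ k ∈ s, f k) := by
  induction s using Finset.cons_induction with
  | empty => intro m hm; simp at hm
  | cons a s ha ih =>
    rw [Finset.sum_cons]
    intro m hm i
    rcases Finset.mem_union.mp (support_add hm) with h1 | h1
    · exact h a (Finset.mem_cons_self a s) m h1 i
    · exact ih (fun k hk => h k (Finset.mem_cons_of_mem hk)) m h1 i

/-! ### Closure properties -/

lemma IH_zero : InHandelman t (0 : MvPolynomial (Fin n) ℝ) :=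
  ⟨0, fun _ _ => le_rfl, by simp⟩

lemma IH_add {p q : MvPolynomial (Fin n) ℝ} (hp : InHandelman t p) (hq : InHandelman t q) :
    InHandelman t (p + q) := by
  obtain ⟨c, hc, rfl⟩ := hp
  obtain ⟨c', hc', rfl⟩ := hq
  refine ⟨fun T I => c T I + c' T I, fun T I => add_nonneg (hc T I) (hc' T I), ?_⟩
  rw [← Finset.sum_add_distrib]
  refine Finset.sum_congr rfl fun T _ => ?_
  rw [← Finset.sum_add_distrib]
  refine Finset.sum_congr rfl fun I _ => ?_
  rw [map_add, add_mul]

lemma IH_smul {a : ℝ} (ha : 0 ≤ a) {p : MvPolynomial (Fin n) ℝ} (hp : InHandelman t p) :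
    InHandelman t (C a * p) := by
  obtain ⟨c, hc, rfl⟩ := hp
  refine ⟨fun T I => a * c T I, fun T I => mul_nonneg ha (hc T I), ?_⟩
  rw [Finset.mul_sum]
  refine Finset.sum_congr rfl fun T _ => ?_
  rw [Finset.mul_sum]
  refine Finset.sum_congr rfl fun I _ => ?_
  rw [map_mul, mul_assoc]

lemma IH_sum {α : Type*} (s : Finset α) (f : α → MvPolynomial (Fin n) ℝ)
    (h : ∀ k ∈ s, InHandelman t (f k)) : InHandelman t (∑ k ∈ s, f k) := by
  induction s using Finset.cons_induction with
  | empty => simpa using IH_zero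
  | cons a s ha ih =>
    rw [Finset.sum_cons]
    exact IH_add (h a (Finset.mem_cons_self a s)) (ih fun k hk => h k (Finset.mem_cons_of_mem hk))

lemma IH_term {T I : Finset (Fin n)} (hI : I ⊆ T) (hT : T.card ≤ t) :
    InHandelman t (handTerm T I) := by
  classical
  refine ⟨fun T' I' => if T' = T ∧ I' = I then 1 else 0,
    fun T' I' => by dsimp only; split_ifs <;> norm_num, ?_⟩
  have hTmem : T ∈ Finset.univ.filter (fun T' : Finset (Fin n) => T'.card ≤ t) := by
    simp [hT]
  have hImem : I ∈ T.powerset := Finset.mem_powerset.mpr hI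
  rw [Finset.sum_eq_single_of_mem T hTmem, Finset.sum_eq_single_of_mem I hImem]
  · simp
  · intro I' _ hne
    dsimp only
    rw [if_neg (fun h => hne h.2), map_zero, zero_mul]
  · intro T' _ hne
    refine Finset.sum_eq_zero fun I' _ => ?_
    dsimp only
    rw [if_neg (fun h => hne h.1), map_zero, zero_mul]

lemma CH_zero : InCalH t (0 : MvPolynomial (Fin n) ℝ) := ⟨∅, 0, by simp, by simp⟩

lemma CH_add {p q : MvPolynomial (Fin n) ℝ} (hp : InCalH t p) (hq : InCalH t q) :
    InCalH t (p + q) := by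
  classical
  obtain ⟨S, c, hc, rfl⟩ := hp
  obtain ⟨S', c', hc', rfl⟩ := hq
  refine ⟨S ∪ S', fun ab => (if ab ∈ S then c ab else 0) + (if ab ∈ S' then c' ab else 0),
    fun ab hab => ?_, ?_⟩
  · constructor
    · apply add_nonneg <;> split_ifs with h
      · exact (hc ab h).1
      · exact le_rfl
      · exact (hc' ab h).1
      · exact le_rfl
    · rcases Finset.mem_union.mp hab with h | h
      · exact (hc ab h).2
      · exact (hc' ab h).2
  · have split : ∀ ab ∈ S ∪ S', C ((if ab ∈ S then c ab else 0) + (if ab ∈ S' then c' ab else 0)) *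
        ((∏ i, X i ^ ab.1 i) * ∏ i, ((1 : MvPolynomial (Fin n) ℝ) - X i) ^ ab.2 i)
        = C (if ab ∈ S then c ab else 0) * ((∏ i, X i ^ ab.1 i) * ∏ i, ((1 : MvPolynomial (Fin n) ℝ) - X i) ^ ab.2 i)
        + C (if ab ∈ S' then c' ab else 0) * ((∏ i, X i ^ ab.1 i) * ∏ i, ((1 : MvPolynomial (Fin n) ℝ) - X i) ^ ab.2 i) := by
      intro ab _
      rw [map_add, add_mul]
    rw [Finset.sum_congr rfl split, Finset.sum_add_distrib]
    congr 1
    · rw [← Finset.sum_subset Finset.subset_union_left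
        (fun ab _ hab => by rw [if_neg hab, map_zero, zero_mul])]
      exact Finset.sum_congr rfl fun ab hab => by rw [if_pos hab]
    · rw [← Finset.sum_subset Finset.subset_union_right
        (fun ab _ hab => by rw [if_neg hab, map_zero, zero_mul])]
      exact Finset.sum_congr rfl fun ab hab => by rw [if_pos hab]

lemma CH_single {a : ℝ} (ha : 0 ≤ a) {α β : Fin n → ℕ} (hw : (∑ i, (α i + β i)) ≤ t) :
    InCalH t (C a * ((∏ i, X i ^ α i) * ∏ i, ((1 : MvPolynomial (Fin n) ℝ) - X i) ^ β i)) :=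
  ⟨{(α, β)}, fun _ => a, fun ab hab => by
      simp only [Finset.mem_singleton] at hab
      subst hab; exact ⟨ha, hw⟩,
    by rw [Finset.sum_singleton]⟩

lemma CH_sum {α : Type*} (s : Finset α) (f : α → MvPolynomial (Fin n) ℝ)
    (h : ∀ k ∈ s, InCalH t (f k)) : InCalH t (∑ k ∈ s, f k) := by
  induction s using Finset.cons_induction with
  | empty => simpa using CH_zero
  | cons a s ha ih =>
    rw [Finset.sum_cons]
    exact CH_add (h a (Finset.mem_cons_self a s)) (ih fun k hk => h k (Finset.mem_cons_of_mem hk))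

/-! ### The inclusion `H_t ⊆ 𝓗_t` -/

lemma prod_pow_ind (f : Fin n → MvPolynomial (Fin n) ℝ) (s : Finset (Fin n)) :
    (∏ i, f i ^ (if i ∈ s then (1:ℕ) else 0)) = ∏ i ∈ s, f i := by
  rw [← Finset.prod_subset (Finset.subset_univ s) (fun i _ hi => by rw [if_neg hi, pow_zero])]
  exact Finset.prod_congr rfl fun i hi => by rw [if_pos hi, pow_one]

lemma IH_to_CH {p : MvPolynomial (Fin n) ℝ} (h : InHandelman t p) : InCalH t p := by
  obtain ⟨c, hc, rfl⟩ := h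
  refine CH_sum _ _ fun T hT => CH_sum _ _ fun I hI => ?_
  have hIT : I ⊆ T := Finset.mem_powerset.mp hI
  have hTt : T.card ≤ t := (Finset.mem_filter.mp hT).2
  have e1 : handTerm T I = (∏ i, X i ^ (if i ∈ I then (1:ℕ) else 0)) *
      ∏ i, ((1:MvPolynomial (Fin n) ℝ) - X i) ^ (if i ∈ T \ I then (1:ℕ) else 0) := by
    rw [handTerm, prod_pow_ind, prod_pow_ind]
  rw [e1]
  refine CH_single (hc T I) ?_
  have : ∑ i, ((if i ∈ I then (1:ℕ) else 0) + (if i ∈ T \ I then 1 else 0)) = T.card := by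
    rw [Finset.sum_add_distrib, Finset.sum_ite_mem, Finset.sum_ite_mem, Finset.univ_inter,
      Finset.univ_inter, ← Finset.card_eq_sum_ones, ← Finset.card_eq_sum_ones,
      Finset.card_sdiff_of_subset hIT]
    have := Finset.card_le_card hIT
    omega
  omega

/-! ### Reduction of generators modulo the ideal -/

lemma y_idem (i : Fin n) : IsIdempotentElem (Ideal.Quotient.mk (J n) (X i)) := by
  show Ideal.Quotient.mk (J n) (X i) * Ideal.Quotient.mk (J n) (X i) = _
  rw [← map_mul, ← pow_two]
  exact Ideal.Quotient.eq.mpr (Ideal.subset_span ⟨i, rfl⟩)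

lemma prod_pow_idem {R : Type*} [CommRing R] (z : Fin n → R)
    (hz : ∀ i, IsIdempotentElem (z i)) (e : Fin n → ℕ) :
    ∏ i, z i ^ e i = ∏ i ∈ Finset.univ.filter (fun i => e i ≠ 0), z i := by
  rw [← Finset.prod_subset (Finset.filter_subset (fun i => e i ≠ 0) Finset.univ)
    (fun i _ hi => by
      simp only [Finset.mem_filter, Finset.mem_univ, true_and, not_not] at hi
      rw [hi, pow_zero])]
  refine Finset.prod_congr rfl fun i hi => ?_
  obtain ⟨k, hk⟩ := Nat.exists_eq_succ_of_ne_zero (Finset.mem_filter.mp hi).2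
  rw [hk, (hz i).pow_succ_eq k]

lemma lemA (t : ℕ) (α β : Fin n → ℕ) (hw : (∑ i, (α i + β i)) ≤ t) :
    ∃ q : MvPolynomial (Fin n) ℝ, InHandelman t q ∧
      (∏ i, X i ^ α i) * (∏ i, ((1:MvPolynomial (Fin n) ℝ) - X i) ^ β i) - q ∈ J n := by
  classical
  set A := Finset.univ.filter (fun i => α i ≠ 0) with hA
  set B := Finset.univ.filter (fun i => β i ≠ 0) with hB
  set Q := Ideal.Quotient.mk (J n) with hQdef
  have hQg : Q ((∏ i, X i ^ α i) * ∏ i, ((1:MvPolynomial (Fin n) ℝ) - X i) ^ β i)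
      = (∏ i ∈ A, Q (X i)) * ∏ i ∈ B, (1 - Q (X i)) := by
    rw [map_mul, map_prod, map_prod]
    congr 1
    · simp_rw [map_pow]
      exact prod_pow_idem _ y_idem α
    · simp_rw [map_pow, map_sub, map_one]
      exact prod_pow_idem _ (fun i => (y_idem i).one_sub) β
  -- cardinality bound
  have hcard : (A ∪ B).card ≤ t := by
    have h1 : (A ∪ B).card ≤ A.card + B.card := Finset.card_union_le _ _
    have h2 : A.card ≤ ∑ i ∈ A, α i := by
      rw [Finset.card_eq_sum_ones]
      exact Finset.sum_le_sum fun i hi =>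
        Nat.one_le_iff_ne_zero.mpr (Finset.mem_filter.mp hi).2
    have h3 : B.card ≤ ∑ i ∈ B, β i := by
      rw [Finset.card_eq_sum_ones]
      exact Finset.sum_le_sum fun i hi =>
        Nat.one_le_iff_ne_zero.mpr (Finset.mem_filter.mp hi).2
    have h4 : ∑ i ∈ A, α i ≤ ∑ i, α i :=
      Finset.sum_le_sum_of_subset (Finset.subset_univ A)
    have h5 : ∑ i ∈ B, β i ≤ ∑ i, β i :=
      Finset.sum_le_sum_of_subset (Finset.subset_univ B)
    have h6 : (∑ i, α i) + ∑ i, β i = ∑ i, (α i + β i) := Finset.sum_add_distrib.symm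
    omega
  by_cases hAB : A ∩ B = ∅
  · have hdisj : Disjoint A B := Finset.disjoint_iff_inter_eq_empty.mpr hAB
    refine ⟨handTerm (A ∪ B) A, IH_term Finset.subset_union_left hcard, ?_⟩
    rw [← Ideal.Quotient.eq]
    show Q _ = Q _
    rw [hQg, handTerm, map_mul, map_prod, map_prod, Finset.union_sdiff_cancel_left hdisj]
    simp only [map_sub, map_one]
  · obtain ⟨i0, hi0⟩ := Finset.nonempty_iff_ne_empty.mpr hAB
    obtain ⟨hiA, hiB⟩ := Finset.mem_inter.mp hi0
    refine ⟨0, IH_zero, ?_⟩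
    rw [sub_zero, ← Ideal.Quotient.eq_zero_iff_mem]
    show Q _ = 0
    rw [hQg, ← Finset.mul_prod_erase A _ hiA, ← Finset.mul_prod_erase B _ hiB,
      mul_mul_mul_comm]
    have h0 : Q (X i0) * (1 - Q (X i0)) = 0 := by
      rw [mul_one_sub, (y_idem i0).eq, sub_self]
    rw [h0, zero_mul]

/-! ### The decomposition and the reverse step -/

lemma CH_decomp {p : MvPolynomial (Fin n) ℝ} (h : InCalH t p) :
    ∃ q r : MvPolynomial (Fin n) ℝ, InHandelman t q ∧ r ∈ J n ∧ p = q + r := by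
  obtain ⟨S, c, hc, rfl⟩ := h
  have H : ∀ ab ∈ S, ∃ q : MvPolynomial (Fin n) ℝ, InHandelman t q ∧
      (∏ i, X i ^ (ab : (Fin n → ℕ) × (Fin n → ℕ)).1 i) *
        (∏ i, ((1:MvPolynomial (Fin n) ℝ) - X i) ^ ab.2 i) - q ∈ J n :=
    fun ab hab => lemA t ab.1 ab.2 (hc ab hab).2
  choose! qf hq1 hq2 using H
  refine ⟨∑ ab ∈ S, C (c ab) * qf ab,
    (∑ ab ∈ S, C (c ab) * ((∏ i, X i ^ ab.1 i) * ∏ i, ((1:MvPolynomial (Fin n) ℝ) - X i) ^ ab.2 i))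
      - ∑ ab ∈ S, C (c ab) * qf ab,
    IH_sum _ _ (fun ab hab => IH_smul (hc ab hab).1 (hq1 ab hab)), ?_, by ring⟩
  rw [← Finset.sum_sub_distrib]
  refine Ideal.sum_mem _ fun ab hab => ?_
  rw [← mul_sub]
  exact Ideal.mul_mem_left _ _ (hq2 ab hab)

lemma decomp_to_IH {p : MvPolynomial (Fin n) ℝ} (hsf : SF p) {q r : MvPolynomial (Fin n) ℝ}
    (hq : InHandelman t q) (hr : r ∈ J n) (hpqr : p = q + r) : InHandelman t p := by
  have hSFq : SF q := by
    obtain ⟨c, hc, rfl⟩ := hq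
    exact SF_sum _ _ fun T _ => SF_sum _ _ fun I _ => SF_Cmul (SF_handTerm T I)
  have hpq : p = q := by
    have h := congrArg L hpqr
    rwa [map_add, L_J hr, add_zero, L_fix hsf, L_fix hSFq] at h
  exact hpq ▸ hq

end CalHAux

/-- For a square-free polynomial `p` and `t ≥ 1`, membership in `𝓗_t`,
in `H_t + 𝓘` and in `H_t` are all equivalent; in particular
`inf{λ : λ − p ∈ 𝓗_t} = inf{λ : λ − p ∈ H_t}`. -/
theorem calH_eq_Ht {n : ℕ} (p : MvPolynomial (Fin n) ℝ)
    (hsf : ∀ m ∈ p.support, ∀ i, m i ≤ 1) (t : ℕ) (ht : 1 ≤ t) :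
    (InCalH t p ↔ InHandelman t p) ∧
    (InCalH t p ↔ ∃ q r : MvPolynomial (Fin n) ℝ, InHandelman t q ∧
      r ∈ Ideal.span (Set.range fun i : Fin n => (X i) ^ 2 - X i) ∧ p = q + r) ∧
    sInf {lam : ℝ | InCalH t (C lam - p)} = sInf {lam : ℝ | InHandelman t (C lam - p)} := by
  have key : ∀ p' : MvPolynomial (Fin n) ℝ, (∀ m ∈ p'.support, ∀ i, m i ≤ 1) →
      (InCalH t p' ↔ InHandelman t p') := by
    intro p' hsf'
    constructor
    · intro h
      obtain ⟨q, r, hq, hr, hpqr⟩ := CalHAux.CH_decomp h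
      exact CalHAux.decomp_to_IH hsf' hq hr hpqr
    · exact CalHAux.IH_to_CH
  refine ⟨key p hsf, ⟨fun h => CalHAux.CH_decomp h, ?_⟩, ?_⟩
  · rintro ⟨q, r, hq, hr, hpqr⟩
    exact CalHAux.IH_to_CH (CalHAux.decomp_to_IH hsf hq hr hpqr)
  · refine congrArg sInf (Set.ext fun lam => ?_)
    simp only [Set.mem_setOf_eq]
    apply key
    intro m hm i
    have hmem := MvPolynomial.support_sub _ _ _ hm
    rcases Finset.mem_union.mp hmem with h | h
    · have h1 : m ∈ (monomial (0 : Fin n →₀ ℕ) lam).support := by rwa [C_apply] at h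
      have h0 : m = 0 := by
        by_cases hl : lam = 0
        · rw [support_monomial, if_pos hl] at h1; simp at h1
        · rw [support_monomial, if_neg hl] at h1; simpa using h1
      simp [h0]
    · exact hsf m h i
end

section
/- Let G = (V,E) be a finite simple graph with node weights w ∈ ℝ_+^V and edge weights satisfying w_{ij} ≥ min{w_i, w_j} for all edges ij ∈ E. Then α(G,w) = max_{x ∈ [0,1]^V} p_{G,w}(x) = max_{x ∈ {0,1}^V} p_{G,w}(x). -/
open MvPolynomial Finset

open Classical in
noncomputable def pGW {V : Type*} [Fintype V] (G : SimpleGraph V)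
    (w : V → ℝ) (W : V → V → ℝ) : MvPolynomial V ℝ :=
  (∑ i, C (w i) * X i) -
    C (2⁻¹ : ℝ) * ∑ q ∈ Finset.univ.filter (fun q : V × V => G.Adj q.1 q.2),
      C (W q.1 q.2) * (X q.1 * X q.2)

noncomputable def alphaW {V : Type*} (G : SimpleGraph V) (w : V → ℝ) : ℝ :=
  sSup {v : ℝ | ∃ S : Finset V, (∀ i ∈ S, ∀ j ∈ S, ¬ G.Adj i j) ∧ v = ∑ i ∈ S, w i}

open scoped Classical

noncomputable def fGW {V : Type*} [Fintype V] (G : SimpleGraph V)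
    (w : V → ℝ) (W : V → V → ℝ) (x : V → ℝ) : ℝ :=
  (∑ i, w i * x i) - 2⁻¹ * ∑ a, ∑ b, (if G.Adj a b then W a b * (x a * x b) else 0)

lemma eval_pGW {V : Type*} [Fintype V] (G : SimpleGraph V)
    (w : V → ℝ) (W : V → V → ℝ) (x : V → ℝ) :
    eval x (pGW G w W) = fGW G w W x := by
  have h : ∀ q : V × V, eval x (if G.Adj q.1 q.2 then C (W q.1 q.2) * (X q.1 * X q.2) else 0)
      = if G.Adj q.1 q.2 then W q.1 q.2 * (x q.1 * x q.2) else 0 := by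
    intro q; split <;> simp
  simp only [pGW, fGW, Finset.sum_filter, map_sub, map_mul, map_sum, eval_C, eval_X, h]
  rw [Fintype.sum_prod_type]

lemma fGW_update {V : Type*} [Fintype V] [DecidableEq V] (G : SimpleGraph V)
    (w : V → ℝ) (W : V → V → ℝ) (hWs : ∀ i j, W i j = W j i)
    (x : V → ℝ) (i : V) (t : ℝ) :
    fGW G w W (Function.update x i t)
      = fGW G w W (Function.update x i 0)
        + t * (w i - ∑ k, (if G.Adj i k then W i k * x k else 0)) := by
  have hlin : ∀ s : ℝ, (∑ j, w j * Function.update x i s j)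
      = w i * s + ∑ j ∈ univ.erase i, w j * x j := by
    intro s
    rw [← Finset.add_sum_erase _ _ (mem_univ i)]
    simp only [Function.update_self]
    congr 1
    refine Finset.sum_congr rfl fun j hj => ?_
    rw [Function.update_of_ne (Finset.ne_of_mem_erase hj)]
  have hquad : ∀ s : ℝ,
      (∑ a, ∑ b, (if G.Adj a b then W a b * (Function.update x i s a * Function.update x i s b) else 0))
      = (∑ a, ∑ b, (if G.Adj a b then W a b * (Function.update x i 0 a * Function.update x i 0 b) else 0))
        + s * (2 * ∑ k, (if G.Adj i k then W i k * x k else 0)) := by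
    intro s
    have key : ∀ a b : V,
        (if G.Adj a b then W a b * (Function.update x i s a * Function.update x i s b) else 0)
        = (if G.Adj a b then W a b * (Function.update x i 0 a * Function.update x i 0 b) else 0)
          + s * ((if a = i then (if G.Adj i b then W i b * x b else 0) else 0)
               + (if b = i then (if G.Adj i a then W i a * x a else 0) else 0)) := by
      intro a b
      rcases eq_or_ne a i with rfl | ha
      · rcases eq_or_ne b a with rfl | hb
        · simp [G.irrefl]
        · by_cases hAdj : G.Adj a b
          · have := G.ne_of_adj hAdj
            simp only [Function.update_self, Function.update_of_ne hb, if_pos hAdj,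
              if_pos rfl, if_neg hb, hWs a b]
            rw [if_pos trivial]; ring
          · simp [hAdj]
      · rcases eq_or_ne b i with rfl | hb
        · by_cases hAdj : G.Adj a b
          · have hAdj' : G.Adj b a := G.adj_symm hAdj
            simp only [Function.update_self, Function.update_of_ne ha, if_pos hAdj,
              if_pos hAdj', if_neg ha, if_pos rfl]
            rw [if_pos trivial, hWs a b]; ring
          · have : ¬ G.Adj b a := fun h => hAdj (G.adj_symm h)
            simp [hAdj, this, ha]
        · simp only [Function.update_of_ne ha, Function.update_of_ne hb, if_neg ha, if_neg hb]
          ring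
    have h1 : (∑ a, ∑ b, (if a = i then (if G.Adj i b then W i b * x b else 0) else 0))
        = ∑ k, (if G.Adj i k then W i k * x k else 0) := by
      rw [Finset.sum_comm]
      simp
    have h2 : (∑ a, ∑ b, (if b = i then (if G.Adj i a then W i a * x a else 0) else 0))
        = ∑ k, (if G.Adj i k then W i k * x k else 0) := by
      simp
    simp only [key, Finset.sum_add_distrib, ← Finset.mul_sum, h1, h2]
    ring
  simp only [fGW]
  rw [hlin t, hlin 0, hquad t]
  ring

lemma fGW_round {V : Type*} [Fintype V] [DecidableEq V] (G : SimpleGraph V)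
    (w : V → ℝ) (W : V → V → ℝ) (hWs : ∀ i j, W i j = W j i) :
    ∀ (n : ℕ) (x : V → ℝ), (∀ i, x i ∈ Set.Icc (0:ℝ) 1) →
      (univ.filter (fun i => x i ≠ 0 ∧ x i ≠ 1)).card ≤ n →
      ∃ y : V → ℝ, (∀ i, y i = 0 ∨ y i = 1) ∧ fGW G w W x ≤ fGW G w W y := by
  intro n
  induction n with
  | zero =>
    intro x hx hc
    refine ⟨x, fun i => ?_, le_refl _⟩
    by_contra h
    push_neg at h
    have : i ∈ univ.filter (fun i => x i ≠ 0 ∧ x i ≠ 1) := by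
      simp [h.1, h.2]
    have := Finset.card_pos.mpr ⟨i, this⟩
    omega
  | succ n ih =>
    intro x hx hc
    by_cases hne : (univ.filter (fun i => x i ≠ 0 ∧ x i ≠ 1)) = ∅
    · refine ⟨x, fun i => ?_, le_refl _⟩
      by_contra h
      push_neg at h
      have hmem : i ∈ univ.filter (fun i => x i ≠ 0 ∧ x i ≠ 1) := by simp [h.1, h.2]
      rw [hne] at hmem
      exact absurd hmem (Finset.notMem_empty i)
    · obtain ⟨i, hi⟩ := Finset.nonempty_iff_ne_empty.mpr hne
      set c := w i - ∑ k, (if G.Adj i k then W i k * x k else 0) with hcdef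
      have hx0 : fGW G w W x = fGW G w W (Function.update x i 0) + x i * c := by
        rw [← fGW_update G w W hWs x i (x i), Function.update_eq_self]
      have hsub : ∀ s : ℝ, (univ.filter (fun j => Function.update x i s j ≠ 0 ∧ Function.update x i s j ≠ 1)).card ≤ n → True := fun _ _ => trivial
      have hcard : ∀ s : ℝ, s = 0 ∨ s = 1 →
          (univ.filter (fun j => Function.update x i s j ≠ 0 ∧ Function.update x i s j ≠ 1)).card ≤ n := by
        intro s hs
        have hsubset : (univ.filter (fun j => Function.update x i s j ≠ 0 ∧ Function.update x i s j ≠ 1))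
            ⊆ (univ.filter (fun j => x j ≠ 0 ∧ x j ≠ 1)).erase i := by
          intro j hj
          simp only [Finset.mem_filter, Finset.mem_univ, true_and] at hj
          rcases eq_or_ne j i with rfl | hji
          · rw [Function.update_self] at hj
            rcases hs with rfl | rfl
            · exact absurd rfl hj.1
            · exact absurd rfl hj.2
          · rw [Function.update_of_ne hji] at hj
            exact Finset.mem_erase.mpr ⟨hji, by simp [hj.1, hj.2]⟩
        calc _ ≤ ((univ.filter (fun j => x j ≠ 0 ∧ x j ≠ 1)).erase i).card :=
              Finset.card_le_card hsubset
          _ = (univ.filter (fun j => x j ≠ 0 ∧ x j ≠ 1)).card - 1 := Finset.card_erase_of_mem hi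
          _ ≤ n := by omega
      have hmem : ∀ s : ℝ, s = 0 ∨ s = 1 → ∀ j, Function.update x i s j ∈ Set.Icc (0:ℝ) 1 := by
        intro s hs j
        rcases eq_or_ne j i with rfl | hji
        · rw [Function.update_self]
          rcases hs with rfl | rfl <;> norm_num
        · rw [Function.update_of_ne hji]; exact hx j
      by_cases hcpos : 0 ≤ c
      · obtain ⟨y, hy, hle⟩ := ih (Function.update x i 1) (hmem 1 (Or.inr rfl)) (hcard 1 (Or.inr rfl))
        refine ⟨y, hy, le_trans ?_ hle⟩
        rw [hx0, fGW_update G w W hWs x i 1, ← hcdef, one_mul]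
        have : x i * c ≤ c := by
          nlinarith [(hx i).2, (hx i).1]
        linarith
      · obtain ⟨y, hy, hle⟩ := ih (Function.update x i 0) (hmem 0 (Or.inl rfl)) (hcard 0 (Or.inl rfl))
        refine ⟨y, hy, le_trans ?_ hle⟩
        rw [hx0]
        have : x i * c ≤ 0 := by
          push_neg at hcpos
          nlinarith [(hx i).1]
        linarith

lemma fGW_stable_eq {V : Type*} [Fintype V] [DecidableEq V] (G : SimpleGraph V)
    (w : V → ℝ) (W : V → V → ℝ) (y : V → ℝ) (hy : ∀ i, y i = 0 ∨ y i = 1)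
    (hs : ∀ i ∈ univ.filter (fun i => y i = 1), ∀ j ∈ univ.filter (fun i => y i = 1), ¬ G.Adj i j) :
    fGW G w W y = ∑ i ∈ univ.filter (fun i => y i = 1), w i := by
  have hq : ∀ a b : V, (if G.Adj a b then W a b * (y a * y b) else 0) = 0 := by
    intro a b
    by_cases hAdj : G.Adj a b
    · rw [if_pos hAdj]
      have : y a = 0 ∨ y b = 0 := by
        by_contra h
        push_neg at h
        have ha : y a = 1 := (hy a).resolve_left h.1
        have hb : y b = 1 := (hy b).resolve_left h.2
        exact hs a (by simp [ha]) b (by simp [hb]) hAdj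
      rcases this with h | h <;> rw [h] <;> ring
    · rw [if_neg hAdj]
  have hl : (∑ i, w i * y i) = ∑ i ∈ univ.filter (fun i => y i = 1), w i := by
    rw [Finset.sum_filter]
    refine Finset.sum_congr rfl fun i _ => ?_
    rcases hy i with h | h <;> simp [h]
  simp only [fGW, hq, hl, Finset.sum_const_zero]
  ring

lemma fGW_zeroone_le {V : Type*} [Fintype V] [DecidableEq V] (G : SimpleGraph V)
    (w : V → ℝ) (W : V → V → ℝ) (hw : ∀ v, 0 ≤ w v)
    (hWs : ∀ i j, W i j = W j i)
    (hW : ∀ i j, G.Adj i j → min (w i) (w j) ≤ W i j) :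
    ∀ (n : ℕ) (y : V → ℝ), (∀ i, y i = 0 ∨ y i = 1) →
      (univ.filter (fun i => y i = 1)).card ≤ n →
      ∃ S : Finset V, (∀ i ∈ S, ∀ j ∈ S, ¬ G.Adj i j) ∧ fGW G w W y ≤ ∑ i ∈ S, w i := by
  intro n
  induction n with
  | zero =>
    intro y hy hc
    have hs : ∀ i ∈ univ.filter (fun i => y i = 1), ∀ j ∈ univ.filter (fun i => y i = 1), ¬ G.Adj i j := by
      intro i hi
      have hemp : filter (fun i => y i = 1) univ = ∅ :=
        Finset.card_eq_zero.mp (Nat.le_zero.mp hc)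
      rw [hemp] at hi
      exact absurd hi (Finset.notMem_empty i)
    exact ⟨univ.filter (fun i => y i = 1), hs, le_of_eq (fGW_stable_eq G w W y hy hs)⟩
  | succ n ih =>
    intro y hy hc
    by_cases hs : ∀ i ∈ univ.filter (fun i => y i = 1), ∀ j ∈ univ.filter (fun i => y i = 1), ¬ G.Adj i j
    · exact ⟨univ.filter (fun i => y i = 1), hs, le_of_eq (fGW_stable_eq G w W y hy hs)⟩
    · push_neg at hs
      obtain ⟨i, hi, j, hj, hAdj⟩ := hs
      -- main step for a vertex a in support adjacent to b in support with w a ≤ w b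
      have main : ∀ a b : V, y a = 1 → y b = 1 → G.Adj a b → w a ≤ w b →
          ∃ S : Finset V, (∀ i ∈ S, ∀ j ∈ S, ¬ G.Adj i j) ∧ fGW G w W y ≤ ∑ i ∈ S, w i := by
        intro a b ha hb hab hwab
        have hupd : fGW G w W y = fGW G w W (Function.update y a 0)
            + (w a - ∑ k, (if G.Adj a k then W a k * y k else 0)) := by
          conv_lhs => rw [← Function.update_eq_self a y, ha]
          rw [fGW_update G w W hWs y a 1, one_mul]
        have hterm : ∀ k, 0 ≤ (if G.Adj a k then W a k * y k else 0) := by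
          intro k
          by_cases h : G.Adj a k
          · rw [if_pos h]
            have h1 : 0 ≤ W a k := le_trans (le_min (hw a) (hw k)) (hW a k h)
            have h2 : 0 ≤ y k := by rcases hy k with h' | h' <;> rw [h'] <;> norm_num
            exact mul_nonneg h1 h2
          · rw [if_neg h]
        have hsum : w a ≤ ∑ k, (if G.Adj a k then W a k * y k else 0) := by
          have hone : w a ≤ (if G.Adj a b then W a b * y b else 0) := by
            rw [if_pos hab, hb, mul_one]
            calc w a = min (w a) (w b) := (min_eq_left hwab).symm
              _ ≤ W a b := hW a b hab
          calc w a ≤ _ := hone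
            _ ≤ _ := Finset.single_le_sum (fun k _ => hterm k) (mem_univ b)
        have hle : fGW G w W y ≤ fGW G w W (Function.update y a 0) := by
          rw [hupd]; linarith
        have hy' : ∀ k, Function.update y a 0 k = 0 ∨ Function.update y a 0 k = 1 := by
          intro k
          rcases eq_or_ne k a with rfl | hk
          · rw [Function.update_self]; exact Or.inl rfl
          · rw [Function.update_of_ne hk]; exact hy k
        have hfilter : univ.filter (fun k => Function.update y a 0 k = 1)
            = (univ.filter (fun k => y k = 1)).erase a := by
          ext k
          simp only [Finset.mem_filter, Finset.mem_univ, true_and, Finset.mem_erase]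
          rcases eq_or_ne k a with rfl | hk
          · simp [Function.update_self]
          · simp [Function.update_of_ne hk, hk]
        have hcard : (univ.filter (fun k => Function.update y a 0 k = 1)).card ≤ n := by
          rw [hfilter, Finset.card_erase_of_mem (by simp [ha])]
          omega
        obtain ⟨S, hS, hSle⟩ := ih (Function.update y a 0) hy' hcard
        exact ⟨S, hS, le_trans hle hSle⟩
      simp only [Finset.mem_filter, Finset.mem_univ, true_and] at hi hj
      by_cases hwij : w i ≤ w j
      · exact main i j hi hj hAdj hwij
      · exact main j i hj hi (G.adj_symm hAdj) (le_of_not_ge hwij)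

/-- For node weights `w ≥ 0` and edge weights `w_{ij} ≥ min(w_i,w_j)`,
`α(G,w)` equals the maximum of `p_{G,w}` over `[0,1]^V`, and also over `{0,1}^V`. -/
theorem alpha_eq_max_pGW {V : Type*} [Fintype V] [DecidableEq V] (G : SimpleGraph V)
    (w : V → ℝ) (W : V → V → ℝ) (hw : ∀ v, 0 ≤ w v)
    (hWs : ∀ i j, W i j = W j i)
    (hW : ∀ i j, G.Adj i j → min (w i) (w j) ≤ W i j) :
    alphaW G w = sSup {v : ℝ | ∃ x : V → ℝ,
        (∀ i, x i ∈ Set.Icc (0 : ℝ) 1) ∧ v = eval x (pGW G w W)} ∧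
    alphaW G w = sSup {v : ℝ | ∃ x : V → ℝ,
        (∀ i, x i = 0 ∨ x i = 1) ∧ v = eval x (pGW G w W)} := by
  set A : Set ℝ := {v : ℝ | ∃ S : Finset V, (∀ i ∈ S, ∀ j ∈ S, ¬ G.Adj i j) ∧ v = ∑ i ∈ S, w i} with hA
  set B : Set ℝ := {v : ℝ | ∃ x : V → ℝ,
      (∀ i, x i ∈ Set.Icc (0 : ℝ) 1) ∧ v = eval x (pGW G w W)} with hB
  set Cs : Set ℝ := {v : ℝ | ∃ x : V → ℝ,
      (∀ i, x i = 0 ∨ x i = 1) ∧ v = eval x (pGW G w W)} with hC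
  have halpha : alphaW G w = sSup A := rfl
  have hAfin : A.Finite := by
    apply Set.Finite.subset (Set.finite_range (fun S : Finset V => ∑ i ∈ S, w i))
    rintro v ⟨S, _, rfl⟩
    exact ⟨S, rfl⟩
  have hAbdd : BddAbove A := hAfin.bddAbove
  have hAne : A.Nonempty := ⟨0, ∅, by simp, by simp⟩
  -- every box point value is at most sSup A
  have hbound : ∀ x : V → ℝ, (∀ i, x i ∈ Set.Icc (0 : ℝ) 1) → fGW G w W x ≤ sSup A := by
    intro x hx
    obtain ⟨y, hy, hxy⟩ := fGW_round G w W hWs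
      (univ.filter (fun i => x i ≠ 0 ∧ x i ≠ 1)).card x hx le_rfl
    obtain ⟨S, hS, hSle⟩ := fGW_zeroone_le G w W hw hWs hW
      (univ.filter (fun i => y i = 1)).card y hy le_rfl
    exact le_trans hxy (le_trans hSle (le_csSup hAbdd ⟨S, hS, rfl⟩))
  have hBle : ∀ v ∈ B, v ≤ sSup A := by
    rintro v ⟨x, hx, rfl⟩
    rw [eval_pGW]
    exact hbound x hx
  have hBbdd : BddAbove B := ⟨sSup A, fun v hv => hBle v hv⟩
  have hCB : Cs ⊆ B := by
    rintro v ⟨x, hx, rfl⟩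
    refine ⟨x, fun i => ?_, rfl⟩
    rcases hx i with h | h <;> rw [h] <;> norm_num
  have hAC : A ⊆ Cs := by
    rintro v ⟨S, hS, rfl⟩
    refine ⟨fun i => if i ∈ S then (1:ℝ) else 0, fun i => ?_, ?_⟩
    · by_cases h : i ∈ S
      · exact Or.inr (if_pos h)
      · exact Or.inl (if_neg h)
    · rw [eval_pGW]
      have hy : ∀ i, (if i ∈ S then (1:ℝ) else 0) = 0 ∨ (if i ∈ S then (1:ℝ) else 0) = 1 := by
        intro i
        by_cases h : i ∈ S
        · exact Or.inr (if_pos h)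
        · exact Or.inl (if_neg h)
      have hfil : univ.filter (fun i => (if i ∈ S then (1:ℝ) else 0) = 1) = S := by
        ext i
        simp only [Finset.mem_filter, Finset.mem_univ, true_and]
        by_cases h : i ∈ S
        · simp [h]
        · simp [h]
      have hs' : ∀ i ∈ univ.filter (fun i => (if i ∈ S then (1:ℝ) else 0) = 1),
          ∀ j ∈ univ.filter (fun i => (if i ∈ S then (1:ℝ) else 0) = 1), ¬ G.Adj i j := by
        rw [hfil]; exact hS
      rw [fGW_stable_eq G w W _ hy hs', hfil]
  have hAB : A ⊆ B := fun v hv => hCB (hAC hv)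
  have hCbdd : BddAbove Cs := hBbdd.mono hCB
  have hCne : Cs.Nonempty := hAne.mono hAC
  have hBne : B.Nonempty := hCne.mono hCB
  constructor
  · rw [halpha]
    apply le_antisymm
    · exact csSup_le hAne (fun v hv => le_csSup hBbdd (hAB hv))
    · exact csSup_le hBne hBle
  · rw [halpha]
    apply le_antisymm
    · exact csSup_le hAne (fun v hv => le_csSup hCbdd (hAC hv))
    · exact csSup_le hCne (fun v hv => hBle v (hCB hv))
end

section
/- For the complete graph K_n, the polynomial f_{K_n} = 1 − Σ_{i=1}^n x_i + Σ_{1 ≤ i < j ≤ n} x_i x_j belongs to the Handelman set H_n. -/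
open MvPolynomial Finset

lemma handTerm_sum {V : Type*} [DecidableEq V] (t : Finset V) :
    ∑ I ∈ t.powerset, handTerm t I = 1 := by
  have h := Finset.prod_add (fun i : V => X i) (fun i : V => (1 : MvPolynomial V ℝ) - X i) t
  simp only [add_sub_cancel, Finset.prod_const_one] at h
  simp only [handTerm]
  exact h.symm

lemma handTerm_union {V : Type*} [DecidableEq V] (s A J : Finset V) (hA : A ⊆ s)
    (hJ : J ⊆ s \ A) :
    handTerm s (A ∪ J) = (∏ i ∈ A, X i) * handTerm (s \ A) J := by
  have hdisj : Disjoint A J := by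
    refine Finset.disjoint_left.mpr fun x hx hx' => ?_
    exact (Finset.mem_sdiff.mp (hJ hx')).2 hx
  have h1 : s \ (A ∪ J) = (s \ A) \ J := by
    ext x; simp [Finset.mem_sdiff]; tauto
  rw [handTerm, handTerm, Finset.prod_union hdisj, h1]
  ring

lemma sum_handTerm_subset {V : Type*} [DecidableEq V] (s A : Finset V) (hA : A ⊆ s) :
    ∑ I ∈ s.powerset.filter (fun I => A ⊆ I), handTerm s I = ∏ i ∈ A, X i := by
  have key : ∑ I ∈ s.powerset.filter (fun I => A ⊆ I), handTerm s I
      = ∑ J ∈ (s \ A).powerset, handTerm s (A ∪ J) := by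
    refine Finset.sum_nbij' (fun I => I \ A) (fun J => A ∪ J) ?_ ?_ ?_ ?_ ?_
    · intro I hI
      simp only [Finset.mem_filter, Finset.mem_powerset] at hI ⊢
      exact Finset.sdiff_subset_sdiff hI.1 (le_refl A)
    · intro J hJ
      simp only [Finset.mem_filter, Finset.mem_powerset] at hJ ⊢
      constructor
      · exact Finset.union_subset hA (hJ.trans (Finset.sdiff_subset))
      · exact Finset.subset_union_left
    · intro I hI
      simp only [Finset.mem_filter, Finset.mem_powerset] at hI
      exact Finset.union_sdiff_of_subset hI.2
    · intro J hJ
      simp only [Finset.mem_powerset] at hJ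
      have : Disjoint A J := by
        refine Finset.disjoint_left.mpr fun x hx hx' => ?_
        exact (Finset.mem_sdiff.mp (hJ hx')).2 hx
      show (A ∪ J) \ A = J
      rw [Finset.union_sdiff_cancel_left this]
    · intro I hI
      simp only [Finset.mem_filter, Finset.mem_powerset] at hI
      rw [Finset.union_sdiff_of_subset hI.2]
  rw [key]
  have : ∀ J ∈ (s \ A).powerset, handTerm s (A ∪ J)
      = (∏ i ∈ A, X i) * handTerm (s \ A) J := by
    intro J hJ
    exact handTerm_union s A J hA (Finset.mem_powerset.mp hJ)
  rw [Finset.sum_congr rfl this, ← Finset.mul_sum, handTerm_sum, mul_one]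

lemma card_lt_pairs {V : Type*} [DecidableEq V] [LinearOrder V] (s : Finset V) :
    ((s ×ˢ s).filter fun q => q.1 < q.2).card = s.card.choose 2 := by
  have himg : ((s ×ˢ s).filter fun q => q.2 < q.1)
      = (((s ×ˢ s).filter fun q => q.1 < q.2).image Prod.swap) := by
    ext ⟨a, b⟩
    simp only [Finset.mem_image, Finset.mem_filter, Finset.mem_product, Prod.exists,
      Prod.swap_prod_mk, Prod.mk.injEq]
    constructor
    · rintro ⟨⟨ha, hb⟩, h⟩
      exact ⟨b, a, ⟨⟨hb, ha⟩, h⟩, rfl, rfl⟩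
    · rintro ⟨x, y, ⟨⟨hx, hy⟩, h⟩, rfl, rfl⟩
      exact ⟨⟨hy, hx⟩, h⟩
  have hcard : ((s ×ˢ s).filter fun q => q.2 < q.1).card
      = ((s ×ˢ s).filter fun q => q.1 < q.2).card := by
    rw [himg, Finset.card_image_of_injective _ Prod.swap_injective]
  have hsplit : ((s ×ˢ s).filter fun q : V × V => q.1 ≠ q.2)
      = ((s ×ˢ s).filter fun q => q.1 < q.2) ∪ ((s ×ˢ s).filter fun q => q.2 < q.1) := by
    ext q
    simp only [Finset.mem_filter, Finset.mem_union]
    constructor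
    · rintro ⟨hq, hne⟩
      rcases lt_or_gt_of_ne hne with h | h
      · exact Or.inl ⟨hq, h⟩
      · exact Or.inr ⟨hq, h⟩
    · rintro (⟨hq, h⟩ | ⟨hq, h⟩)
      · exact ⟨hq, ne_of_lt h⟩
      · exact ⟨hq, (ne_of_lt h).symm⟩
  have hdisj : Disjoint ((s ×ˢ s).filter fun q : V × V => q.1 < q.2)
      ((s ×ˢ s).filter fun q => q.2 < q.1) := by
    refine Finset.disjoint_left.mpr fun q hq hq' => ?_
    simp only [Finset.mem_filter] at hq hq'
    exact absurd hq'.2 (not_lt.mpr hq.2.le)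
  have hoff : ((s ×ˢ s).filter fun q : V × V => q.1 ≠ q.2).card = s.card * s.card - s.card :=
    by rw [← Finset.offDiag_card s]; congr 1; ext q; simp [Finset.mem_offDiag, and_assoc]
  rw [hsplit, Finset.card_union_of_disjoint hdisj, hcard] at hoff
  have h2 : s.card.choose 2 = s.card * (s.card - 1) / 2 := Nat.choose_two_right s.card
  have : s.card * s.card - s.card = s.card * (s.card - 1) := by
    rw [Nat.mul_sub, mul_one]
  omega

lemma sum_card_handTerm {V : Type*} [Fintype V] [DecidableEq V] :
    ∑ I ∈ (Finset.univ : Finset V).powerset, (I.card : MvPolynomial V ℝ) * handTerm Finset.univ I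
      = ∑ i : V, X i := by
  have step1 : ∀ I ∈ (Finset.univ : Finset V).powerset,
      (I.card : MvPolynomial V ℝ) * handTerm Finset.univ I
        = ∑ i : V, if i ∈ I then handTerm Finset.univ I else 0 := by
    intro I _
    rw [← Finset.sum_filter]
    have : Finset.univ.filter (fun i => i ∈ I) = I := by
      ext i; simp
    rw [this, Finset.sum_const, nsmul_eq_mul]
  rw [Finset.sum_congr rfl step1, Finset.sum_comm]
  refine Finset.sum_congr rfl fun i _ => ?_
  rw [← Finset.sum_filter]
  have : (Finset.univ : Finset V).powerset.filter (fun I => i ∈ I)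
      = (Finset.univ : Finset V).powerset.filter (fun I => {i} ⊆ I) := by
    simp [Finset.singleton_subset_iff]
  rw [this, sum_handTerm_subset _ _ (Finset.subset_univ _), Finset.prod_singleton]

lemma sum_choose_handTerm {V : Type*} [Fintype V] [DecidableEq V] [LinearOrder V] :
    ∑ I ∈ (Finset.univ : Finset V).powerset,
        ((I.card.choose 2 : ℕ) : MvPolynomial V ℝ) * handTerm Finset.univ I
      = ∑ q ∈ Finset.univ.filter (fun q : V × V => q.1 < q.2), X q.1 * X q.2 := by
  have step1 : ∀ I ∈ (Finset.univ : Finset V).powerset,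
      ((I.card.choose 2 : ℕ) : MvPolynomial V ℝ) * handTerm Finset.univ I
        = ∑ q ∈ Finset.univ.filter (fun q : V × V => q.1 < q.2),
            if q.1 ∈ I ∧ q.2 ∈ I then handTerm Finset.univ I else 0 := by
    intro I _
    rw [← Finset.sum_filter]
    have hset : (Finset.univ.filter (fun q : V × V => q.1 < q.2)).filter
        (fun q => q.1 ∈ I ∧ q.2 ∈ I) = (I ×ˢ I).filter (fun q => q.1 < q.2) := by
      ext q
      simp only [Finset.mem_filter, Finset.mem_univ, Finset.mem_product, true_and]
      tauto
    rw [hset, Finset.sum_const, nsmul_eq_mul, card_lt_pairs]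
  rw [Finset.sum_congr rfl step1, Finset.sum_comm]
  refine Finset.sum_congr rfl fun q hq => ?_
  simp only [Finset.mem_filter, Finset.mem_univ, true_and] at hq
  rw [← Finset.sum_filter]
  have : (Finset.univ : Finset V).powerset.filter (fun I => q.1 ∈ I ∧ q.2 ∈ I)
      = (Finset.univ : Finset V).powerset.filter (fun I => {q.1, q.2} ⊆ I) := by
    simp [Finset.insert_subset_iff, Finset.singleton_subset_iff]
  rw [this, sum_handTerm_subset _ _ (Finset.subset_univ _),
    Finset.prod_pair (ne_of_lt hq)]

/-- For the complete graph `K_n`, the polynomial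
`f_{K_n} = 1 − Σ_i x_i + Σ_{i<j} x_i x_j` belongs to the Handelman set `H_n`. -/
theorem complete_graph_poly_mem_Handelman (n : ℕ) :
    InHandelman n ((1 : MvPolynomial (Fin n) ℝ) - (∑ i, X i) +
      ∑ q ∈ Finset.univ.filter (fun q : Fin n × Fin n => q.1 < q.2), X q.1 * X q.2) := by
  refine ⟨fun T I => if T = Finset.univ then ((I.card.choose 2 : ℝ) - I.card + 1) else 0,
    ?_, ?_⟩
  · intro T I
    dsimp only
    split
    · rw [Nat.cast_choose_two]
      generalize I.card = k
      rcases k with _ | _ | m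
      · norm_num
      · norm_num
      · push_cast
        nlinarith [sq_nonneg (m : ℝ)]
    · exact le_refl 0
  · dsimp only
    have hsingle : ∑ T ∈ Finset.univ.filter (fun T : Finset (Fin n) => T.card ≤ n),
          ∑ I ∈ T.powerset,
            C (if T = Finset.univ then ((I.card.choose 2 : ℝ) - I.card + 1) else 0)
              * handTerm T I
        = ∑ I ∈ (Finset.univ : Finset (Fin n)).powerset,
            C (if (Finset.univ : Finset (Fin n)) = Finset.univ
                then ((I.card.choose 2 : ℝ) - I.card + 1) else 0) * handTerm Finset.univ I := by
      refine Finset.sum_eq_single_of_mem _ ?_ ?_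
      · simp
      · intro T _ hT
        simp [hT]
    rw [hsingle]
    simp only [eq_self_iff_true, if_true]
    have expand : ∀ I ∈ (Finset.univ : Finset (Fin n)).powerset,
        C ((I.card.choose 2 : ℝ) - I.card + 1) * handTerm Finset.univ I
          = ((I.card.choose 2 : ℕ) : MvPolynomial (Fin n) ℝ) * handTerm Finset.univ I
            - (I.card : MvPolynomial (Fin n) ℝ) * handTerm Finset.univ I
            + handTerm Finset.univ I := by
      intro I _
      rw [map_add, map_sub, map_one, map_natCast, map_natCast]
      ring
    rw [Finset.sum_congr rfl expand, Finset.sum_add_distrib, Finset.sum_sub_distrib,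
      sum_choose_handTerm, sum_card_handTerm, handTerm_sum]
    ring
end

section
/- Let G = (V,E) be a finite simple graph with node weights w ∈ ℝ_+^V and edge weights satisfying w_{ij} ≥ min{w_i, w_j} for all edges ij ∈ E, and let t ≥ 2 be an integer. Then ρ_t(G,w) − p_{G,w} ∈ H_t, and consequently p_han^{(t)}(G,w) ≤ ρ_t(G,w). -/
open MvPolynomial Finset

def IsCliqueSet {V : Type*} (G : SimpleGraph V) (Cq : Finset V) : Prop :=
  ∀ i ∈ Cq, ∀ j ∈ Cq, i ≠ j → G.Adj i j

open Classical in
noncomputable def rhoT {V : Type*} [Fintype V] (G : SimpleGraph V) (w : V → ℝ) (t : ℕ) : ℝ :=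
  sInf {v : ℝ | ∃ lam : Finset V → ℝ, (∀ Cq, 0 ≤ lam Cq) ∧
    (∀ Cq, lam Cq ≠ 0 → IsCliqueSet G Cq ∧ Cq.card ≤ t) ∧
    (∀ i, (∑ Cq : Finset V, if i ∈ Cq then lam Cq else 0) = w i) ∧
    v = ∑ Cq : Finset V, lam Cq}

namespace HandProof
variable {V : Type*} [DecidableEq V]

noncomputable def q (m : ℕ) : ℝ := ((m : ℝ) - 1) * ((m : ℝ) - 2) / 2

lemma q_nonneg (m : ℕ) : 0 ≤ q m := by
  rcases m with _ | _ | m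
  · norm_num [q]
  · norm_num [q]
  · unfold q
    push_cast
    nlinarith [Nat.cast_nonneg (α := ℝ) m]

lemma q_succ (m : ℕ) : q (m + 1) = q m + ((m : ℝ) - 1) := by
  unfold q; push_cast; ring

lemma handTerm_insert_left {a : V} {T I : Finset V} (ha : a ∉ T) (hI : I ⊆ T) :
    handTerm (insert a T) I = (1 - X a) * handTerm T I := by
  have haI : a ∉ I := fun h => ha (hI h)
  have h1 : insert a T \ I = insert a (T \ I) := by
    ext x; simp only [mem_sdiff, mem_insert]
    constructor
    · rintro ⟨h1 | h1, h2⟩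
      · exact Or.inl h1
      · exact Or.inr ⟨h1, h2⟩
    · rintro (rfl | ⟨h1, h2⟩)
      · exact ⟨Or.inl rfl, haI⟩
      · exact ⟨Or.inr h1, h2⟩
  have h2 : a ∉ T \ I := fun h => ha (mem_sdiff.mp h).1
  rw [handTerm, h1, Finset.prod_insert h2, handTerm]; ring

lemma handTerm_insert_both {a : V} {T I : Finset V} (ha : a ∉ T) (hI : I ⊆ T) :
    handTerm (insert a T) (insert a I) = X a * handTerm T I := by
  have haI : a ∉ I := fun h => ha (hI h)
  have h1 : insert a T \ insert a I = T \ I := by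
    ext x; simp only [mem_sdiff, mem_insert]
    constructor
    · rintro ⟨h1 | h1, h2⟩
      · exact absurd (Or.inl h1) h2
      · push_neg at h2
        exact ⟨h1, h2.2⟩
    · rintro ⟨h1, h2⟩
      refine ⟨Or.inr h1, ?_⟩
      push_neg
      exact ⟨fun h => ha (h ▸ h1), h2⟩
  rw [handTerm, h1, Finset.prod_insert haI, handTerm]; ring

lemma sum_handTerm (T : Finset V) :
    ∑ I ∈ T.powerset, handTerm T I = 1 := by
  induction T using Finset.induction_on with
  | empty => simp [handTerm]
  | @insert a T ha ih =>
    rw [Finset.sum_powerset_insert ha]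
    have h1 : ∀ I ∈ T.powerset, handTerm (insert a T) I = (1 - X a) * handTerm T I :=
      fun I hI => handTerm_insert_left ha (mem_powerset.mp hI)
    have h2 : ∀ I ∈ T.powerset, handTerm (insert a T) (insert a I) = X a * handTerm T I :=
      fun I hI => handTerm_insert_both ha (mem_powerset.mp hI)
    rw [Finset.sum_congr rfl h1, Finset.sum_congr rfl h2, ← Finset.mul_sum, ← Finset.mul_sum, ih]
    ring

lemma sum_card_handTerm (T : Finset V) :
    ∑ I ∈ T.powerset, C ((I.card : ℝ)) * handTerm T I = ∑ i ∈ T, X i := by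
  induction T using Finset.induction_on with
  | empty => simp [handTerm]
  | @insert a T ha ih =>
    rw [Finset.sum_powerset_insert ha, Finset.sum_insert ha]
    have h2 : ∀ I ∈ T.powerset,
        C (((insert a I).card : ℝ)) * handTerm (insert a T) (insert a I)
          = (C ((I.card : ℝ)) + 1) * (X a * handTerm T I) := by
      intro I hI
      have haI : a ∉ I := fun h => ha (mem_powerset.mp hI h)
      rw [handTerm_insert_both ha (mem_powerset.mp hI), Finset.card_insert_of_notMem haI]
      push_cast
      rw [map_add, map_one]
    have h1 : ∀ I ∈ T.powerset,
        C ((I.card : ℝ)) * handTerm (insert a T) I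
          = C ((I.card : ℝ)) * ((1 - X a) * handTerm T I) :=
      fun I hI => by rw [handTerm_insert_left ha (mem_powerset.mp hI)]
    rw [Finset.sum_congr rfl h1, Finset.sum_congr rfl h2]
    have expand : ∀ I ∈ T.powerset,
        C ((I.card : ℝ)) * ((1 - X a) * handTerm T I) + (C ((I.card : ℝ)) + 1) * (X a * handTerm T I)
          = C ((I.card : ℝ)) * handTerm T I + X a * handTerm T I := fun I _ => by ring
    rw [← Finset.sum_add_distrib, Finset.sum_congr rfl expand, Finset.sum_add_distrib, ih,
      ← Finset.mul_sum, sum_handTerm]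
    ring

lemma sum_q_handTerm (T : Finset V) :
    ∑ I ∈ T.powerset, C (q I.card) * handTerm T I
      = 1 - (∑ i ∈ T, X i) + C (2⁻¹ : ℝ) * ∑ p ∈ T.offDiag, X p.1 * X p.2 := by
  induction T using Finset.induction_on with
  | empty => simp [handTerm, q]
  | @insert a T ha ih =>
    rw [Finset.sum_powerset_insert ha]
    have h1 : ∀ I ∈ T.powerset,
        C (q I.card) * handTerm (insert a T) I
          = C (q I.card) * ((1 - X a) * handTerm T I) :=
      fun I hI => by rw [handTerm_insert_left ha (mem_powerset.mp hI)]
    have h2 : ∀ I ∈ T.powerset,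
        C (q (insert a I).card) * handTerm (insert a T) (insert a I)
          = (C (q I.card) + (C ((I.card : ℝ)) - 1)) * (X a * handTerm T I) := by
      intro I hI
      have haI : a ∉ I := fun h => ha (mem_powerset.mp hI h)
      rw [handTerm_insert_both ha (mem_powerset.mp hI), Finset.card_insert_of_notMem haI,
        q_succ, map_add, map_sub, map_one]
    rw [Finset.sum_congr rfl h1, Finset.sum_congr rfl h2]
    have expand : ∀ I ∈ T.powerset,
        C (q I.card) * ((1 - X a) * handTerm T I)
          + (C (q I.card) + (C ((I.card : ℝ)) - 1)) * (X a * handTerm T I)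
        = C (q I.card) * handTerm T I
          + X a * (C ((I.card : ℝ)) * handTerm T I) - X a * handTerm T I := fun I _ => by ring
    rw [← Finset.sum_add_distrib, Finset.sum_congr rfl expand]
    rw [Finset.sum_sub_distrib, Finset.sum_add_distrib, ih, ← Finset.mul_sum, ← Finset.mul_sum,
      sum_card_handTerm, sum_handTerm]
    rw [Finset.sum_insert ha, Finset.offDiag_insert ha]
    have d1 : Disjoint (T.offDiag ∪ {a} ×ˢ T) (T ×ˢ {a}) := by
      rw [Finset.disjoint_left]
      rintro ⟨x, y⟩ hx hy
      simp only [Finset.mem_product, Finset.mem_singleton] at hy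
      rcases Finset.mem_union.mp hx with h | h
      · exact ha (hy.2 ▸ (Finset.mem_offDiag.mp h).2.1)
      · simp only [Finset.mem_product, Finset.mem_singleton] at h
        exact ha (hy.2 ▸ h.2)
    have d2 : Disjoint T.offDiag ({a} ×ˢ T) := by
      rw [Finset.disjoint_left]
      rintro ⟨x, y⟩ hx hy
      simp only [Finset.mem_product, Finset.mem_singleton] at hy
      exact ha (hy.1 ▸ (Finset.mem_offDiag.mp hx).1)
    rw [Finset.sum_union d1, Finset.sum_union d2]
    have e1 : (∑ p ∈ ({a} ×ˢ T : Finset (V × V)), X p.1 * X p.2 : MvPolynomial V ℝ)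
        = X a * ∑ i ∈ T, X i := by
      rw [Finset.singleton_product, Finset.sum_map, Finset.mul_sum]
      rfl
    have e2 : (∑ p ∈ (T ×ˢ ({a} : Finset V)), X p.1 * X p.2 : MvPolynomial V ℝ)
        = X a * ∑ i ∈ T, X i := by
      rw [Finset.product_singleton, Finset.sum_map, Finset.mul_sum]
      exact Finset.sum_congr rfl fun x _ => by simp [Function.Embedding.coeFn_mk]; ring
    rw [e1, e2]
    have h2inv : (C (2⁻¹ : ℝ) : MvPolynomial V ℝ) * 2 = 1 := by
      rw [show (2 : MvPolynomial V ℝ) = C 2 from (map_ofNat C 2).symm, ← map_mul]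
      norm_num
    linear_combination (-1 * X a * ∑ i ∈ T, X i) * h2inv

section Main

variable {V : Type*} [Fintype V] [DecidableEq V]

open Classical in
noncomputable def AdjP (G : SimpleGraph V) : Finset (V × V) :=
  Finset.univ.filter (fun q : V × V => G.Adj q.1 q.2)

lemma mem_AdjP {G : SimpleGraph V} {p : V × V} : p ∈ AdjP G ↔ G.Adj p.1 p.2 := by
  classical
  simp [AdjP]

theorem key (G : SimpleGraph V) (w : V → ℝ) (W : V → V → ℝ)
    (hW : ∀ i j, G.Adj i j → min (w i) (w j) ≤ W i j)
    (t : ℕ) (ht : 2 ≤ t) (lam : Finset V → ℝ) (hnn : ∀ Cq, 0 ≤ lam Cq)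
    (hsupp : ∀ Cq, lam Cq ≠ 0 → IsCliqueSet G Cq ∧ Cq.card ≤ t)
    (hcov : ∀ i, (∑ Cq : Finset V, if i ∈ Cq then lam Cq else 0) = w i) :
    ∃ c : Finset V → Finset V → ℝ,
      (∀ T I, 0 ≤ c T I) ∧
      C (∑ Cq : Finset V, lam Cq) - pGW G w W
        = ∑ T ∈ Finset.univ.filter (fun T : Finset V => T.card ≤ t),
            ∑ I ∈ T.powerset, C (c T I) * handTerm T I := by
  classical
  set σ : V → V → ℝ := fun i j => ∑ Cq : Finset V, if i ∈ Cq ∧ j ∈ Cq then lam Cq else 0 with hσ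
  have hσ_le : ∀ i j, σ i j ≤ w i := by
    intro i j
    rw [← hcov i]
    apply Finset.sum_le_sum
    intro Cq _
    by_cases h1 : i ∈ Cq ∧ j ∈ Cq
    · simp only [hσ, if_pos h1, if_pos h1.1]
      exact le_refl _
    · simp only [hσ, if_neg h1]
      split
      · exact hnn Cq
      · exact le_refl _
  have hσ_symm : ∀ i j, σ i j = σ j i := by
    intro i j
    apply Finset.sum_congr rfl
    intro Cq _
    by_cases h1 : i ∈ Cq ∧ j ∈ Cq
    · rw [if_pos h1, if_pos ⟨h1.2, h1.1⟩]
    · rw [if_neg h1, if_neg (fun h => h1 ⟨h.2, h.1⟩)]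
  have hσW : ∀ p ∈ AdjP G, σ p.1 p.2 ≤ W p.1 p.2 := by
    intro p hp
    have hadj := mem_AdjP.mp hp
    refine le_trans (le_min (hσ_le p.1 p.2) ?_) (hW _ _ hadj)
    rw [hσ_symm]; exact hσ_le p.2 p.1
  set e : Finset V → ℝ := fun T =>
    ∑ p ∈ (AdjP G).filter (fun p : V × V => ({p.1, p.2} : Finset V) = T),
      (W p.1 p.2 - σ p.1 p.2) / 2 with he
  have he_nonneg : ∀ T, 0 ≤ e T := by
    intro T
    apply Finset.sum_nonneg
    intro p hp
    have := hσW p (Finset.mem_filter.mp hp).1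
    linarith
  refine ⟨fun T I => lam T * q I.card + (if I = T ∧ T.card = 2 then e T else 0), ?_, ?_⟩
  · intro T I
    dsimp only
    have h1 : 0 ≤ lam T * q I.card := mul_nonneg (hnn T) (q_nonneg _)
    have h2 : (0:ℝ) ≤ if I = T ∧ T.card = 2 then e T else 0 := by
      split
      · exact he_nonneg T
      · exact le_refl _
    linarith
  -- main identity
  have csplit : ∀ T I, (C (lam T * q I.card + (if I = T ∧ T.card = 2 then e T else 0))
        : MvPolynomial V ℝ) * handTerm T I
      = C (lam T) * (C (q I.card) * handTerm T I)
        + (if I = T ∧ T.card = 2 then C (e T) else 0) * handTerm T I := by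
    intro T I
    rw [map_add, map_mul, apply_ite (C : ℝ → MvPolynomial V ℝ), map_zero]
    ring
  have split : ∑ T ∈ Finset.univ.filter (fun T : Finset V => T.card ≤ t),
        ∑ I ∈ T.powerset,
          C (lam T * q I.card + (if I = T ∧ T.card = 2 then e T else 0)) * handTerm T I
      = (∑ T ∈ Finset.univ.filter (fun T : Finset V => T.card ≤ t),
          C (lam T) * ∑ I ∈ T.powerset, C (q I.card) * handTerm T I)
        + ∑ T ∈ Finset.univ.filter (fun T : Finset V => T.card ≤ t),
            ∑ I ∈ T.powerset, (if I = T ∧ T.card = 2 then C (e T) else 0) * handTerm T I := by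
    rw [← Finset.sum_add_distrib]
    apply Finset.sum_congr rfl
    intro T _
    rw [Finset.mul_sum, ← Finset.sum_add_distrib]
    exact Finset.sum_congr rfl fun I _ => csplit T I
  rw [split]
  -- Part A
  have partA : (∑ T ∈ Finset.univ.filter (fun T : Finset V => T.card ≤ t),
        C (lam T) * ∑ I ∈ T.powerset, C (q I.card) * handTerm T I)
      = ∑ T : Finset V, C (lam T) *
          (1 - (∑ i ∈ T, X i) + C (2⁻¹ : ℝ) * ∑ p ∈ T.offDiag, X p.1 * X p.2) := by
    rw [Finset.sum_congr rfl (fun T _ => by rw [sum_q_handTerm T])]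
    apply Finset.sum_subset (Finset.filter_subset _ _)
    intro T _ hT
    have : lam T = 0 := by
      by_contra h
      exact hT (Finset.mem_filter.mpr ⟨Finset.mem_univ _, (hsupp T h).2⟩)
    rw [this, map_zero, zero_mul]
  rw [partA]
  have pGW_eq : pGW G w W = (∑ i, C (w i) * X i) -
      C (2⁻¹ : ℝ) * ∑ p ∈ AdjP G, C (W p.1 p.2) * (X p.1 * X p.2) := rfl
  -- Piece 2
  have piece2 : ∑ T : Finset V, C (lam T) * ∑ i ∈ T, X i
      = ∑ i, C (w i) * X i := by
    have inner : ∀ T : Finset V, (C (lam T) : MvPolynomial V ℝ) * ∑ i ∈ T, X i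
        = ∑ i : V, if i ∈ T then C (lam T) * X i else 0 := by
      intro T
      rw [Finset.sum_ite_mem, Finset.univ_inter, Finset.mul_sum]
    rw [Finset.sum_congr rfl fun T _ => inner T, Finset.sum_comm]
    apply Finset.sum_congr rfl
    intro i _
    have : ∀ T : Finset V, (if i ∈ T then (C (lam T) : MvPolynomial V ℝ) * X i else 0)
        = (if i ∈ T then C (lam T) else 0) * X i := by
      intro T
      rw [ite_mul, zero_mul]
    rw [Finset.sum_congr rfl fun T _ => this T, ← Finset.sum_mul]
    congr 1
    rw [← hcov i, map_sum]
    exact Finset.sum_congr rfl fun T _ => by rw [apply_ite (C : ℝ → MvPolynomial V ℝ), map_zero]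
  -- Piece 3
  have hoff : ∀ T : Finset V, T.offDiag
      = Finset.univ.offDiag.filter (fun p : V × V => p.1 ∈ T ∧ p.2 ∈ T) := by
    intro T
    ext p
    simp only [Finset.mem_offDiag, Finset.mem_filter, Finset.mem_univ, true_and]
    tauto
  have hAdjsub : AdjP G ⊆ Finset.univ.offDiag := by
    intro p hp
    have := mem_AdjP.mp hp
    exact Finset.mem_offDiag.mpr ⟨Finset.mem_univ _, Finset.mem_univ _, this.ne⟩
  have piece3 : ∑ T : Finset V, C (lam T) * ∑ p ∈ T.offDiag, X p.1 * X p.2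
      = ∑ p ∈ AdjP G, C (σ p.1 p.2) * (X p.1 * X p.2) := by
    have inner : ∀ T : Finset V, (C (lam T) : MvPolynomial V ℝ) * ∑ p ∈ T.offDiag, X p.1 * X p.2
        = ∑ p ∈ Finset.univ.offDiag,
            if p.1 ∈ T ∧ p.2 ∈ T then C (lam T) * (X p.1 * X p.2) else 0 := by
      intro T
      rw [hoff T, Finset.sum_filter, Finset.mul_sum]
      apply Finset.sum_congr rfl
      intro p _
      rw [mul_ite, mul_zero]
    rw [Finset.sum_congr rfl fun T _ => inner T, Finset.sum_comm]
    have step : ∀ p ∈ Finset.univ.offDiag,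
        (∑ T : Finset V, if p.1 ∈ T ∧ p.2 ∈ T then (C (lam T) : MvPolynomial V ℝ) * (X p.1 * X p.2) else 0)
        = C (σ p.1 p.2) * (X p.1 * X p.2) := by
      intro p _
      have : ∀ T : Finset V, (if p.1 ∈ T ∧ p.2 ∈ T then (C (lam T) : MvPolynomial V ℝ) * (X p.1 * X p.2) else 0)
          = (if p.1 ∈ T ∧ p.2 ∈ T then C (lam T) else 0) * (X p.1 * X p.2) := by
        intro T
        rw [ite_mul, zero_mul]
      rw [Finset.sum_congr rfl fun T _ => this T, ← Finset.sum_mul]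
      congr 1
      rw [hσ, map_sum]
      exact Finset.sum_congr rfl fun T _ => by rw [apply_ite (C : ℝ → MvPolynomial V ℝ), map_zero]
    rw [Finset.sum_congr rfl step]
    symm
    apply Finset.sum_subset hAdjsub
    intro p hp hnp
    have hne : p.1 ≠ p.2 := (Finset.mem_offDiag.mp hp).2.2
    have hnadj : ¬ G.Adj p.1 p.2 := fun h => hnp (mem_AdjP.mpr h)
    have : σ p.1 p.2 = 0 := by
      apply Finset.sum_eq_zero
      intro Cq _
      by_cases hmem : p.1 ∈ Cq ∧ p.2 ∈ Cq
      · rw [if_pos hmem]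
        by_contra hlam
        exact hnadj ((hsupp Cq hlam).1 p.1 hmem.1 p.2 hmem.2 hne)
      · rw [if_neg hmem]
    rw [this, map_zero, zero_mul]
  -- Part E
  have partE : ∑ T ∈ Finset.univ.filter (fun T : Finset V => T.card ≤ t),
        ∑ I ∈ T.powerset, (if I = T ∧ T.card = 2 then C (e T) else 0) * handTerm T I
      = ∑ p ∈ AdjP G, C ((W p.1 p.2 - σ p.1 p.2) / 2) * (X p.1 * X p.2) := by
    have inner : ∀ T : Finset V,
        (∑ I ∈ T.powerset, (if I = T ∧ T.card = 2 then (C (e T) : MvPolynomial V ℝ) else 0) * handTerm T I)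
        = if T.card = 2 then C (e T) * handTerm T T else 0 := by
      intro T
      rw [Finset.sum_eq_single T]
      · by_cases h : T.card = 2
        · simp [h]
        · simp [h]
      · intro I _ hne
        rw [if_neg (fun hc => hne hc.1), zero_mul]
      · intro h
        exact absurd (Finset.mem_powerset_self T) h
    rw [Finset.sum_congr rfl fun T _ => inner T, Finset.sum_filter]
    have collapse : ∀ T : Finset V,
        (if T.card ≤ t then (if T.card = 2 then (C (e T) : MvPolynomial V ℝ) * handTerm T T else 0) else 0)
        = if T.card = 2 then C (e T) * handTerm T T else 0 := by
      intro T
      by_cases h : T.card = 2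
      · have hle : T.card ≤ t := h ▸ ht
        simp [h, hle, ht]
      · simp [h]
    rw [Finset.sum_congr rfl fun T _ => collapse T, ← Finset.sum_filter]
    have maps : ∀ p ∈ AdjP G, ({p.1, p.2} : Finset V) ∈
        Finset.univ.filter (fun T : Finset V => T.card = 2) := by
      intro p hp
      exact Finset.mem_filter.mpr ⟨Finset.mem_univ _, Finset.card_pair (mem_AdjP.mp hp).ne⟩
    rw [← Finset.sum_fiberwise_of_maps_to maps
      (fun p : V × V => C ((W p.1 p.2 - σ p.1 p.2) / 2) * (X p.1 * X p.2))]
    apply Finset.sum_congr rfl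
    intro T hT
    rw [he, map_sum, Finset.sum_mul]
    apply Finset.sum_congr rfl
    intro p hp
    have hpT : ({p.1, p.2} : Finset V) = T := (Finset.mem_filter.mp hp).2
    have hne : p.1 ≠ p.2 := (mem_AdjP.mp (Finset.mem_filter.mp hp).1).ne
    have : handTerm T T = X p.1 * X p.2 := by
      rw [handTerm, Finset.sdiff_self, Finset.prod_empty, mul_one, ← hpT,
        Finset.prod_pair hne]
    rw [this]
  rw [partE, pGW_eq]
  have combine : C (2⁻¹ : ℝ) * ∑ p ∈ AdjP G, C (σ p.1 p.2) * (X p.1 * X p.2)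
        + ∑ p ∈ AdjP G, C ((W p.1 p.2 - σ p.1 p.2) / 2) * (X p.1 * X p.2)
      = C (2⁻¹ : ℝ) * ∑ p ∈ AdjP G, C (W p.1 p.2) * (X p.1 * X p.2) := by
    rw [Finset.mul_sum, Finset.mul_sum, ← Finset.sum_add_distrib]
    apply Finset.sum_congr rfl
    intro p _
    have hs : (2⁻¹ * σ p.1 p.2 + (W p.1 p.2 - σ p.1 p.2) / 2 : ℝ) = 2⁻¹ * W p.1 p.2 := by ring
    calc C (2⁻¹ : ℝ) * (C (σ p.1 p.2) * (X p.1 * X p.2))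
          + C ((W p.1 p.2 - σ p.1 p.2) / 2) * (X p.1 * X p.2)
        = C (2⁻¹ * σ p.1 p.2 + (W p.1 p.2 - σ p.1 p.2) / 2) * (X p.1 * X p.2) := by
          rw [map_add, map_mul]; ring
      _ = C (2⁻¹ * W p.1 p.2) * (X p.1 * X p.2) := by rw [hs]
      _ = C (2⁻¹ : ℝ) * (C (W p.1 p.2) * (X p.1 * X p.2)) := by rw [map_mul]; ring
  have expand : ∑ T : Finset V, C (lam T) *
        (1 - (∑ i ∈ T, X i) + C (2⁻¹ : ℝ) * ∑ p ∈ T.offDiag, X p.1 * X p.2)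
      = C (∑ Cq : Finset V, lam Cq) - (∑ i, C (w i) * X i)
        + C (2⁻¹ : ℝ) * ∑ p ∈ AdjP G, C (σ p.1 p.2) * (X p.1 * X p.2) := by
    have distrib : ∀ T : Finset V, (C (lam T) : MvPolynomial V ℝ) *
          (1 - (∑ i ∈ T, X i) + C (2⁻¹ : ℝ) * ∑ p ∈ T.offDiag, X p.1 * X p.2)
        = C (lam T) - C (lam T) * (∑ i ∈ T, X i)
          + C (2⁻¹ : ℝ) * (C (lam T) * ∑ p ∈ T.offDiag, X p.1 * X p.2) := fun T => by ring
    rw [Finset.sum_congr rfl fun T _ => distrib T, Finset.sum_add_distrib,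
      Finset.sum_sub_distrib, piece2, ← Finset.mul_sum, piece3, map_sum]
  rw [expand]
  linear_combination -combine


open Classical in
theorem rhoT_attained (G : SimpleGraph V) (w : V → ℝ) (hw : ∀ v, 0 ≤ w v)
    (t : ℕ) (ht : 1 ≤ t) :
    ∃ lam : Finset V → ℝ, (∀ Cq, 0 ≤ lam Cq) ∧
      (∀ Cq, lam Cq ≠ 0 → IsCliqueSet G Cq ∧ Cq.card ≤ t) ∧
      (∀ i, (∑ Cq : Finset V, if i ∈ Cq then lam Cq else 0) = w i) ∧
      rhoT G w t = ∑ Cq : Finset V, lam Cq := by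
  classical
  set Feas : (Finset V → ℝ) → Prop := fun lam =>
    (∀ Cq, 0 ≤ lam Cq) ∧ (∀ Cq, lam Cq ≠ 0 → IsCliqueSet G Cq ∧ Cq.card ≤ t) ∧
    (∀ i, (∑ Cq : Finset V, if i ∈ Cq then lam Cq else 0) = w i) with hFeas
  -- the baseline solution supported on singletons
  set lam₀ : Finset V → ℝ := fun Cq => ∑ j : V, if Cq = {j} then w j else 0 with hlam₀
  have hlam₀_nonneg : ∀ Cq, 0 ≤ lam₀ Cq := by
    intro Cq
    apply Finset.sum_nonneg
    intro j _
    split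
    · exact hw j
    · exact le_refl _
  have hlam₀_supp : ∀ Cq, lam₀ Cq ≠ 0 → IsCliqueSet G Cq ∧ Cq.card ≤ t := by
    intro Cq h
    have : ∃ j, Cq = {j} := by
      by_contra hc
      push_neg at hc
      exact h (Finset.sum_eq_zero fun j _ => if_neg (hc j))
    obtain ⟨j, rfl⟩ := this
    constructor
    · intro a ha b hb hab
      rw [Finset.mem_singleton] at ha hb
      exact absurd (ha.trans hb.symm) hab
    · simpa using ht
  have hcov₀ : ∀ i, (∑ Cq : Finset V, if i ∈ Cq then lam₀ Cq else 0) = w i := by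
    intro i
    have step1 : ∀ Cq : Finset V, (if i ∈ Cq then lam₀ Cq else 0)
        = ∑ j : V, if Cq = {j} then (if i ∈ Cq then w j else 0) else 0 := by
      intro Cq
      by_cases h : i ∈ Cq
      · rw [if_pos h, hlam₀]
        exact Finset.sum_congr rfl fun j _ => by rw [if_pos h]
      · rw [if_neg h]
        symm
        apply Finset.sum_eq_zero
        intro j _
        rw [if_neg h]
        split <;> rfl
    rw [Finset.sum_congr rfl fun Cq _ => step1 Cq, Finset.sum_comm]
    have step2 : ∀ j : V, (∑ Cq : Finset V, if Cq = {j} then (if i ∈ Cq then w j else 0) else 0)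
        = if i = j then w j else 0 := by
      intro j
      rw [Finset.sum_ite_eq' Finset.univ ({j} : Finset V)
        (fun Cq => if i ∈ Cq then w j else 0)]
      simp [Finset.mem_singleton]
    rw [Finset.sum_congr rfl fun j _ => step2 j]
    simp
  have hval₀ : (∑ Cq : Finset V, lam₀ Cq) = ∑ j : V, w j := by
    rw [hlam₀, Finset.sum_comm]
    apply Finset.sum_congr rfl
    intro j _
    rw [Finset.sum_ite_eq' Finset.univ ({j} : Finset V) (fun _ => w j)]
    simp
  have hFeas₀ : Feas lam₀ := ⟨hlam₀_nonneg, hlam₀_supp, hcov₀⟩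
  -- the compact feasible region
  set K : Set (Finset V → ℝ) := {lam | Feas lam ∧ (∑ Cq : Finset V, lam Cq) ≤ ∑ j : V, w j}
    with hK
  have hK_sub : K ⊆ Set.Icc (0 : Finset V → ℝ) (fun _ => ∑ j : V, w j) := by
    rintro lam ⟨⟨h1, _, _⟩, h4⟩
    constructor
    · intro Cq
      exact h1 Cq
    · intro Cq
      calc lam Cq ≤ ∑ Cq' : Finset V, lam Cq' :=
            Finset.single_le_sum (fun Cq' _ => h1 Cq') (Finset.mem_univ Cq)
        _ ≤ ∑ j : V, w j := h4
  have hK_closed : IsClosed K := by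
    have h1 : IsClosed {lam : Finset V → ℝ | ∀ Cq, 0 ≤ lam Cq} := by
      have : {lam : Finset V → ℝ | ∀ Cq, 0 ≤ lam Cq} = ⋂ Cq, {lam | 0 ≤ lam Cq} := by
        ext lam; simp
      rw [this]
      exact isClosed_iInter fun Cq => isClosed_le continuous_const (continuous_apply Cq)
    have h2 : IsClosed {lam : Finset V → ℝ |
        ∀ Cq, lam Cq ≠ 0 → IsCliqueSet G Cq ∧ Cq.card ≤ t} := by
      have : {lam : Finset V → ℝ | ∀ Cq, lam Cq ≠ 0 → IsCliqueSet G Cq ∧ Cq.card ≤ t}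
          = ⋂ Cq, {lam | lam Cq ≠ 0 → IsCliqueSet G Cq ∧ Cq.card ≤ t} := by
        ext lam; simp
      rw [this]
      apply isClosed_iInter
      intro Cq
      by_cases h : IsCliqueSet G Cq ∧ Cq.card ≤ t
      · have : {lam : Finset V → ℝ | lam Cq ≠ 0 → IsCliqueSet G Cq ∧ Cq.card ≤ t}
            = Set.univ := by
          ext lam; simp [h]
        rw [this]; exact isClosed_univ
      · have : {lam : Finset V → ℝ | lam Cq ≠ 0 → IsCliqueSet G Cq ∧ Cq.card ≤ t}
            = {lam | lam Cq = 0} := by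
          ext lam
          simp only [Set.mem_setOf_eq]
          constructor
          · intro himp
            by_contra hne
            exact h (himp hne)
          · intro h0 hne
            exact absurd h0 hne
        rw [this]
        exact isClosed_eq (continuous_apply Cq) continuous_const
    have h3 : IsClosed {lam : Finset V → ℝ |
        ∀ i, (∑ Cq : Finset V, if i ∈ Cq then lam Cq else 0) = w i} := by
      have : {lam : Finset V → ℝ | ∀ i, (∑ Cq : Finset V, if i ∈ Cq then lam Cq else 0) = w i}
          = ⋂ i, {lam | (∑ Cq : Finset V, if i ∈ Cq then lam Cq else 0) = w i} := by
        ext lam; simp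
      rw [this]
      apply isClosed_iInter
      intro i
      apply isClosed_eq _ continuous_const
      apply continuous_finset_sum
      intro Cq _
      by_cases h : i ∈ Cq
      · simpa [h] using continuous_apply Cq
      · simpa [h] using continuous_const
    have h4 : IsClosed {lam : Finset V → ℝ | (∑ Cq : Finset V, lam Cq) ≤ ∑ j : V, w j} :=
      isClosed_le (continuous_finset_sum _ fun Cq _ => continuous_apply Cq) continuous_const
    have : K = ({lam : Finset V → ℝ | ∀ Cq, 0 ≤ lam Cq}
        ∩ {lam | ∀ Cq, lam Cq ≠ 0 → IsCliqueSet G Cq ∧ Cq.card ≤ t}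
        ∩ {lam | ∀ i, (∑ Cq : Finset V, if i ∈ Cq then lam Cq else 0) = w i})
        ∩ {lam | (∑ Cq : Finset V, lam Cq) ≤ ∑ j : V, w j} := by
      ext lam
      simp only [hK, Set.mem_setOf_eq, Set.mem_inter_iff, hFeas]
      tauto
    rw [this]
    exact (((h1.inter h2).inter h3)).inter h4
  have hK_compact : IsCompact K :=
    IsCompact.of_isClosed_subset isCompact_Icc hK_closed hK_sub
  have hK_ne : K.Nonempty := ⟨lam₀, hFeas₀, le_of_eq hval₀⟩
  obtain ⟨lamS, hlamS_mem, hlamS_min⟩ :=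
    hK_compact.exists_isMinOn hK_ne
      ((continuous_finset_sum Finset.univ fun Cq _ => continuous_apply Cq).continuousOn :
        ContinuousOn (fun lam : Finset V → ℝ => ∑ Cq : Finset V, lam Cq) K)
  obtain ⟨hFeasS, hleS⟩ := hlamS_mem
  obtain ⟨hS1, hS2, hS3⟩ := hFeasS
  refine ⟨lamS, hS1, hS2, hS3, ?_⟩
  -- rhoT equals the attained minimum
  have hmemS : (∑ Cq : Finset V, lamS Cq) ∈ {v : ℝ | ∃ lam : Finset V → ℝ,
      (∀ Cq, 0 ≤ lam Cq) ∧ (∀ Cq, lam Cq ≠ 0 → IsCliqueSet G Cq ∧ Cq.card ≤ t) ∧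
      (∀ i, (∑ Cq : Finset V, if i ∈ Cq then lam Cq else 0) = w i) ∧
      v = ∑ Cq : Finset V, lam Cq} := ⟨lamS, hS1, hS2, hS3, rfl⟩
  have hlb : ∀ v ∈ {v : ℝ | ∃ lam : Finset V → ℝ,
      (∀ Cq, 0 ≤ lam Cq) ∧ (∀ Cq, lam Cq ≠ 0 → IsCliqueSet G Cq ∧ Cq.card ≤ t) ∧
      (∀ i, (∑ Cq : Finset V, if i ∈ Cq then lam Cq else 0) = w i) ∧
      v = ∑ Cq : Finset V, lam Cq}, (∑ Cq : Finset V, lamS Cq) ≤ v := by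
    rintro v ⟨lam, h1, h2, h3, rfl⟩
    by_cases h : (∑ Cq : Finset V, lam Cq) ≤ ∑ j : V, w j
    · exact hlamS_min (⟨⟨h1, h2, h3⟩, h⟩ : lam ∈ K)
    · push_neg at h
      calc (∑ Cq : Finset V, lamS Cq) ≤ ∑ j : V, w j := hleS
        _ ≤ ∑ Cq : Finset V, lam Cq := le_of_lt h
  have hbdd : BddBelow {v : ℝ | ∃ lam : Finset V → ℝ,
      (∀ Cq, 0 ≤ lam Cq) ∧ (∀ Cq, lam Cq ≠ 0 → IsCliqueSet G Cq ∧ Cq.card ≤ t) ∧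
      (∀ i, (∑ Cq : Finset V, if i ∈ Cq then lam Cq else 0) = w i) ∧
      v = ∑ Cq : Finset V, lam Cq} := by
    refine ⟨0, ?_⟩
    rintro v ⟨lam, h1, _, _, rfl⟩
    exact Finset.sum_nonneg fun Cq _ => h1 Cq
  rw [rhoT]
  have key := le_antisymm (csInf_le hbdd hmemS) (le_csInf ⟨_, hmemS⟩ hlb)
  convert key using 2
  congr!
  ext v
  constructor <;> rintro ⟨lam, h1, h2, h3, h4⟩ <;>
    exact ⟨lam, h1, h2, fun i => by
      rw [← h3 i]; exact Finset.sum_congr rfl fun Cq _ => by split_ifs <;> rfl, by convert h4 using 1⟩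

end Main
end HandProof

/-- For node weights `w ≥ 0`, edge weights `w_{ij} ≥ min(w_i,w_j)` and
`t ≥ 2`: `ρ_t(G,w) − p_{G,w} ∈ H_t`, and consequently `p_han^{(t)}(G,w) ≤ ρ_t(G,w)`. -/
theorem rhoT_sub_pGW_mem_Handelman {V : Type*} [Fintype V] [DecidableEq V]
    (G : SimpleGraph V) (w : V → ℝ) (W : V → V → ℝ) (hw : ∀ v, 0 ≤ w v)
    (hWs : ∀ i j, W i j = W j i)
    (hW : ∀ i j, G.Adj i j → min (w i) (w j) ≤ W i j)
    (t : ℕ) (ht : 2 ≤ t) :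
    InHandelman t (C (rhoT G w t) - pGW G w W) ∧
    sInf {lam : ℝ | InHandelman t (C lam - pGW G w W)} ≤ rhoT G w t := by
  obtain ⟨lam, h1, h2, h3, h4⟩ := HandProof.rhoT_attained G w hw t (le_trans one_le_two ht)
  have main : InHandelman t (C (rhoT G w t) - pGW G w W) := by
    rw [h4]
    obtain ⟨c, hc, heq⟩ := HandProof.key G w W hW t ht lam h1 h2 h3
    exact ⟨c, hc, heq⟩
  refine ⟨main, ?_⟩
  have hbdd : BddBelow {lam : ℝ | InHandelman t (C lam - pGW G w W)} := by
    refine ⟨0, ?_⟩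
    rintro v ⟨c, hc, heq⟩
    have hev := congrArg (MvPolynomial.eval (fun _ : V => (0 : ℝ))) heq
    have h0 : MvPolynomial.eval (fun _ : V => (0 : ℝ)) (C v - pGW G w W) = v := by
      simp [pGW]
    have hR : 0 ≤ MvPolynomial.eval (fun _ : V => (0 : ℝ))
        (∑ T ∈ Finset.univ.filter (fun T : Finset V => T.card ≤ t),
          ∑ I ∈ T.powerset, C (c T I) * handTerm T I) := by
      rw [map_sum]
      apply Finset.sum_nonneg
      intro T _
      rw [map_sum]
      apply Finset.sum_nonneg
      intro I _
      rw [map_mul, eval_C]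
      apply mul_nonneg (hc T I)
      rw [handTerm, map_mul]
      apply mul_nonneg
      · rw [map_prod]
        apply Finset.prod_nonneg
        intro i _
        rw [eval_X]
      · rw [map_prod]
        apply Finset.prod_nonneg
        intro j _
        rw [map_sub, map_one, eval_X]
        norm_num
    rw [h0] at hev
    rw [hev]
    exact hR
  exact csInf_le hbdd main
end

section
/- Let G = (V,E) be a finite simple graph with node weights w ∈ ℝ_+^V and edge weights satisfying w_{ij} ≥ min{w_i, w_j} for all edges ij ∈ E. Then the Handelman bound of order 2 equals the fractional 2-clique cover number: p_han^{(2)}(G,w) = ρ_2(G,w). -/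
open MvPolynomial Finset

section Helpers
variable {V : Type*} [Fintype V] [DecidableEq V]

noncomputable def covFn (μ : Finset V → ℝ) (i : V) : ℝ :=
  ∑ C : Finset V, if i ∈ C then μ C else 0

noncomputable def ecovFn (μ : Finset V → ℝ) (i : V) : ℝ :=
  ∑ C : Finset V, if C.card = 2 ∧ i ∈ C then μ C else 0

lemma covFn_add (f g : Finset V → ℝ) (i : V) :
    covFn (fun C => f C + g C) i = covFn f i + covFn g i := by
  unfold covFn
  rw [← Finset.sum_add_distrib]
  exact Finset.sum_congr rfl fun C _ => by split_ifs <;> ring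

lemma covFn_site (a : Finset V) (x : ℝ) (i : V) :
    covFn (fun C => if C = a then x else 0) i = if i ∈ a then x else 0 := by
  unfold covFn
  rw [show (∑ C : Finset V, if i ∈ C then (if C = a then x else 0) else 0)
      = ∑ C : Finset V, if C = a then (if i ∈ a then x else 0) else 0 from
    Finset.sum_congr rfl fun C _ => by split_ifs <;> simp_all]
  simp [Finset.sum_ite_eq']

lemma ecovFn_add (f g : Finset V → ℝ) (i : V) :
    ecovFn (fun C => f C + g C) i = ecovFn f i + ecovFn g i := by
  unfold ecovFn
  rw [← Finset.sum_add_distrib]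
  exact Finset.sum_congr rfl fun C _ => by split_ifs <;> ring

lemma ecovFn_site (a : Finset V) (x : ℝ) (i : V) :
    ecovFn (fun C => if C = a then x else 0) i
      = if a.card = 2 ∧ i ∈ a then x else 0 := by
  unfold ecovFn
  rw [show (∑ C : Finset V, if C.card = 2 ∧ i ∈ C then (if C = a then x else 0) else 0)
      = ∑ C : Finset V, if C = a then (if a.card = 2 ∧ i ∈ a then x else 0) else 0 from
    Finset.sum_congr rfl fun C _ => by split_ifs <;> simp_all]
  simp [Finset.sum_ite_eq']

lemma ecovFn_le_covFn (μ : Finset V → ℝ) (hμ : ∀ C, 0 ≤ μ C) (i : V) :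
    ecovFn μ i ≤ covFn μ i := by
  refine Finset.sum_le_sum fun C _ => ?_
  split_ifs with h1 h2
  · exact le_refl _
  · exact absurd h1.2 h2
  · exact hμ C
  · exact le_refl _

lemma sum_singletons (f : Finset V → ℝ) :
    ∑ C ∈ Finset.univ.filter (fun C : Finset V => C.card = 1), f C = ∑ a : V, f {a} := by
  refine (Finset.sum_bij (fun a _ => ({a} : Finset V)) ?_ ?_ ?_ ?_).symm
  · intro a _; simp
  · intro a _ b _ h; exact Finset.singleton_injective h
  · intro C hC
    simp only [Finset.mem_filter] at hC
    obtain ⟨a, rfl⟩ := Finset.card_eq_one.mp hC.2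
    exact ⟨a, Finset.mem_univ a, rfl⟩
  · intro a _; rfl

lemma pair_eq_pair_iff' {i j a b : V} :
    ({a, b} : Finset V) = {i, j} ↔ (a = i ∧ b = j) ∨ (a = j ∧ b = i) := by
  rw [← Finset.coe_inj]
  push_cast
  exact Set.pair_eq_pair_iff

lemma sum_pairs_at (i : V) (f : Finset V → ℝ) :
    ∑ T ∈ Finset.univ.filter (fun T : Finset V => T.card = 2 ∧ i ∈ T), f T
      = ∑ j ∈ Finset.univ.filter (fun j : V => j ≠ i), f {i, j} := by
  refine (Finset.sum_bij (fun j _ => ({i, j} : Finset V)) ?_ ?_ ?_ ?_).symm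
  · intro j hj
    simp only [Finset.mem_filter] at hj ⊢
    refine ⟨Finset.mem_univ _, ?_, by simp⟩
    rw [Finset.card_insert_of_notMem (by simp [Ne.symm hj.2]), Finset.card_singleton]
  · intro a ha b hb h
    simp only [Finset.mem_filter] at ha hb
    have h' : ({i, a} : Finset V) = {i, b} := h
    have : a ∈ ({i, b} : Finset V) := by rw [← h']; simp
    simp only [Finset.mem_insert, Finset.mem_singleton] at this
    rcases this with rfl | rfl
    · exact absurd rfl ha.2
    · rfl
  · intro T hT
    simp only [Finset.mem_filter] at hT
    obtain ⟨_, hc, hiT⟩ := hT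
    obtain ⟨a, b, hab, rfl⟩ := Finset.card_eq_two.mp hc
    simp only [Finset.mem_insert, Finset.mem_singleton] at hiT
    rcases hiT with rfl | rfl
    · exact ⟨b, by simp [Finset.mem_filter, Ne.symm hab], rfl⟩
    · exact ⟨a, by simp [Finset.mem_filter, hab], Finset.pair_comm i a⟩
  · intro j _; rfl

end Helpers
section Reduce
set_option linter.unusedSectionVars false
variable {V : Type*} [Fintype V] [DecidableEq V]

noncomputable def measureFn (w : V → ℝ) (μ : Finset V → ℝ) : ℕ :=
  (Finset.univ.filter fun C : Finset V => C.card = 2 ∧ μ C ≠ 0).card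
    + (Finset.univ.filter fun i : V => w i < ecovFn μ i).card

lemma finish_case (G : SimpleGraph V) (w : V → ℝ) (μ : Finset V → ℝ)
    (hnn : ∀ C, 0 ≤ μ C)
    (hsupp : ∀ C, μ C ≠ 0 → IsCliqueSet G C ∧ C.card ≤ 2)
    (hcov : ∀ i, w i ≤ covFn μ i)
    (hno : ∀ i, ecovFn μ i ≤ w i) :
    ∃ ν : Finset V → ℝ, (∀ C, 0 ≤ ν C) ∧
      (∀ C, ν C ≠ 0 → IsCliqueSet G C ∧ C.card ≤ 2) ∧
      (∀ i, covFn ν i = w i) ∧ ∑ C : Finset V, ν C ≤ ∑ C : Finset V, μ C := by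
  have hslack : ∀ a : V, w a - ecovFn μ a ≤ μ {a} := by
    intro a
    have h1 : covFn μ a ≤ ecovFn μ a + ∑ C : Finset V, (if C = {a} then μ C else 0) := by
      unfold covFn ecovFn
      rw [← Finset.sum_add_distrib]
      refine Finset.sum_le_sum fun C _ => ?_
      by_cases hac : a ∈ C
      · by_cases h2 : C.card = 2
        · have h0 : (0:ℝ) ≤ (if C = {a} then μ C else 0) := by
            split_ifs <;> [exact hnn C; exact le_refl 0]
          simp only [hac, h2, if_pos, and_self, if_true]
          linarith
        · by_cases h3 : C = {a}
          · subst h3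
            simp [hac, h2]
          · have hz : μ C = 0 := by
              by_contra hne
              obtain ⟨_, hle⟩ := hsupp C hne
              have h1' : C.card ≠ 0 := by
                intro h0
                rw [Finset.card_eq_zero] at h0
                subst h0; exact absurd hac (Finset.notMem_empty a)
              have : C.card = 1 := by omega
              obtain ⟨x, rfl⟩ := Finset.card_eq_one.mp this
              rw [Finset.mem_singleton] at hac
              exact h3 (by rw [hac])
            simp [hz, hac, h2, h3]
      · have h4 : C ≠ {a} := fun h => hac (h ▸ Finset.mem_singleton_self a)
        have h5 : ¬ (C.card = 2 ∧ a ∈ C) := fun h => hac h.2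
        simp [hac, h4, h5]
    rw [Finset.sum_ite_eq' Finset.univ ({a} : Finset V) μ] at h1
    simp only [Finset.mem_univ, if_true] at h1
    linarith [hcov a]
  refine ⟨fun C => (if C.card = 2 then μ C else 0)
      + (if C.card = 1 then ∑ i ∈ C, (w i - ecovFn μ i) else 0), ?_, ?_, ?_, ?_⟩
  · intro C
    have h1 : (0:ℝ) ≤ (if C.card = 2 then μ C else 0) := by
      split_ifs <;> [exact hnn C; exact le_refl 0]
    have h2 : (0:ℝ) ≤ (if C.card = 1 then ∑ i ∈ C, (w i - ecovFn μ i) else 0) := by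
      split_ifs with h
      · exact Finset.sum_nonneg fun i _ => by linarith [hno i]
      · exact le_refl 0
    exact add_nonneg h1 h2
  · intro C hC
    dsimp only at hC
    by_cases h2 : C.card = 2
    · rw [if_pos h2, if_neg (by omega : ¬ C.card = 1), add_zero] at hC
      exact hsupp C hC
    · by_cases h1 : C.card = 1
      · refine ⟨fun x hx y hy hxy => ?_, by omega⟩
        obtain ⟨z, rfl⟩ := Finset.card_eq_one.mp h1
        rw [Finset.mem_singleton] at hx hy
        exact absurd (hx.trans hy.symm) hxy
      · simp [h1, h2] at hC
  · intro i
    rw [covFn_add]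
    have e2 : covFn (fun C => if C.card = 2 then μ C else 0) i = ecovFn μ i := by
      unfold covFn ecovFn
      refine Finset.sum_congr rfl fun C _ => ?_
      by_cases h1 : C.card = 2 <;> by_cases h2 : i ∈ C <;> simp [h1, h2]
    have e1 : covFn (fun C => if C.card = 1 then ∑ j ∈ C, (w j - ecovFn μ j) else 0) i
        = w i - ecovFn μ i := by
      unfold covFn
      rw [Finset.sum_eq_single_of_mem ({i} : Finset V) (Finset.mem_univ _)]
      · simp
      · intro C _ hC
        by_cases hiC : i ∈ C
        · by_cases h1 : C.card = 1
          · obtain ⟨z, rfl⟩ := Finset.card_eq_one.mp h1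
            rw [Finset.mem_singleton] at hiC
            exact absurd (by rw [hiC]) hC
          · simp [h1]
        · simp [hiC]
    rw [e2, e1]; ring
  · rw [Finset.sum_add_distrib]
    have s2 : ∑ C : Finset V, (if C.card = 2 then μ C else 0)
        = ∑ C ∈ Finset.univ.filter (fun C : Finset V => C.card = 2), μ C :=
      (Finset.sum_filter _ _).symm
    have s1 : ∑ C : Finset V, (if C.card = 1 then ∑ j ∈ C, (w j - ecovFn μ j) else 0)
        ≤ ∑ C ∈ Finset.univ.filter (fun C : Finset V => C.card = 1), μ C := by
      rw [← Finset.sum_filter]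
      rw [sum_singletons (fun C => ∑ j ∈ C, (w j - ecovFn μ j)), sum_singletons μ]
      refine Finset.sum_le_sum fun a _ => ?_
      rw [Finset.sum_singleton]
      exact hslack a
    have hdisj : Disjoint (Finset.univ.filter (fun C : Finset V => C.card = 2))
        (Finset.univ.filter (fun C : Finset V => C.card = 1)) := by
      rw [Finset.disjoint_left]
      intro C h1 h2
      simp only [Finset.mem_filter] at h1 h2
      omega
    calc ∑ C : Finset V, (if C.card = 2 then μ C else 0)
          + ∑ C : Finset V, (if C.card = 1 then ∑ j ∈ C, (w j - ecovFn μ j) else 0)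
        ≤ ∑ C ∈ Finset.univ.filter (fun C : Finset V => C.card = 2), μ C
          + ∑ C ∈ Finset.univ.filter (fun C : Finset V => C.card = 1), μ C := by
          rw [s2]; exact add_le_add le_rfl s1
      _ = ∑ C ∈ (Finset.univ.filter (fun C : Finset V => C.card = 2))
            ∪ (Finset.univ.filter (fun C : Finset V => C.card = 1)), μ C :=
          (Finset.sum_union hdisj).symm
      _ ≤ ∑ C : Finset V, μ C := by
          refine Finset.sum_le_sum_of_subset_of_nonneg (Finset.subset_univ _)
            fun C _ _ => hnn C

end Reduce
section Reduce2
set_option linter.unusedSectionVars false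
variable {V : Type*} [Fintype V] [DecidableEq V]

lemma reduce (G : SimpleGraph V) (w : V → ℝ) (hw : ∀ i, 0 ≤ w i) :
    ∀ (n : ℕ) (μ : Finset V → ℝ), measureFn w μ ≤ n →
    (∀ C, 0 ≤ μ C) →
    (∀ C, μ C ≠ 0 → IsCliqueSet G C ∧ C.card ≤ 2) →
    (∀ i, w i ≤ covFn μ i) →
    ∃ ν : Finset V → ℝ, (∀ C, 0 ≤ ν C) ∧
      (∀ C, ν C ≠ 0 → IsCliqueSet G C ∧ C.card ≤ 2) ∧
      (∀ i, covFn ν i = w i) ∧ ∑ C : Finset V, ν C ≤ ∑ C : Finset V, μ C := by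
  intro n
  induction n with
  | zero =>
    intro μ hm hnn hsupp hcov
    refine finish_case G w μ hnn hsupp hcov fun i => ?_
    by_contra hlt
    push_neg at hlt
    have hmem : i ∈ Finset.univ.filter (fun i : V => w i < ecovFn μ i) := by
      simp [Finset.mem_filter, hlt]
    have : 0 < (Finset.univ.filter fun i : V => w i < ecovFn μ i).card :=
      Finset.card_pos.mpr ⟨i, hmem⟩
    unfold measureFn at hm
    omega
  | succ n ih =>
    intro μ hm hnn hsupp hcov
    by_cases hex : ∃ i, w i < ecovFn μ i
    · obtain ⟨i, hi⟩ := hex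
      have hwi := hw i
      have hedge : ∃ e : Finset V, e.card = 2 ∧ i ∈ e ∧ μ e ≠ 0 := by
        by_contra hcon
        push_neg at hcon
        have hz : ecovFn μ i = 0 := by
          unfold ecovFn
          refine Finset.sum_eq_zero fun C _ => ?_
          split_ifs with h
          · exact hcon C h.1 h.2
          · rfl
        linarith
      obtain ⟨e, hcard, hie, hμe⟩ := hedge
      obtain ⟨a, b, hab, he⟩ := Finset.card_eq_two.mp hcard
      have hj : ∃ j : V, j ≠ i ∧ e = {i, j} := by
        have hie' : i = a ∨ i = b := by
          rw [he] at hie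
          simpa using hie
        rcases hie' with rfl | rfl
        · exact ⟨b, Ne.symm hab, he⟩
        · exact ⟨a, hab, he.trans (Finset.pair_comm a i)⟩
      obtain ⟨j, hji, hej⟩ := hj
      set ε := min (μ e) (ecovFn μ i - w i) with hεdef
      have hε0 : 0 < ε := lt_min ((hnn e).lt_of_ne' hμe) (by linarith)
      have hεμ : ε ≤ μ e := min_le_left _ _
      have hεe : ε ≤ ecovFn μ i - w i := min_le_right _ _
      have hesing : e ≠ ({j} : Finset V) := by
        intro h
        rw [h] at hcard
        simp at hcard
      set μ' := fun C => μ C + ((if C = e then -ε else 0) + (if C = {j} then ε else 0))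
        with hμ'def
      have hcov' : ∀ v, covFn μ' v
          = covFn μ v + ((if v ∈ e then -ε else 0) + (if v ∈ ({j} : Finset V) then ε else 0)) := by
        intro v
        rw [hμ'def, covFn_add, covFn_add, covFn_site, covFn_site]
      have hecov' : ∀ v, ecovFn μ' v = ecovFn μ v + (if v ∈ e then -ε else 0) := by
        intro v
        rw [hμ'def, ecovFn_add, ecovFn_add, ecovFn_site, ecovFn_site]
        have h1 : ¬ (({j} : Finset V).card = 2 ∧ v ∈ ({j} : Finset V)) := by simp
        rw [if_neg h1, add_zero]
        congr 1
        simp [hcard]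
      have hsum' : ∑ C : Finset V, μ' C = ∑ C : Finset V, μ C := by
        rw [hμ'def]
        rw [Finset.sum_add_distrib, Finset.sum_add_distrib,
          Finset.sum_ite_eq' Finset.univ e, Finset.sum_ite_eq' Finset.univ ({j} : Finset V)]
        simp
      have hnn' : ∀ C, 0 ≤ μ' C := by
        intro C
        rw [hμ'def]
        dsimp only
        by_cases h1 : C = e
        · subst h1
          rw [if_pos rfl, if_neg hesing]
          linarith
        · rw [if_neg h1]
          split_ifs with h2
          · linarith [hnn C]
          · linarith [hnn C]
      have hsupp' : ∀ C, μ' C ≠ 0 → IsCliqueSet G C ∧ C.card ≤ 2 := by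
        intro C hC
        by_cases h1 : C = e
        · subst h1
          exact hsupp C hμe
        · by_cases h2 : C = {j}
          · subst h2
            refine ⟨fun x hx y hy hxy => ?_, by simp⟩
            rw [Finset.mem_singleton] at hx hy
            exact absurd (hx.trans hy.symm) hxy
          · refine hsupp C fun h0 => hC ?_
            rw [hμ'def]
            simp [h1, h2, h0]
      have hije : i ∈ e := by rw [hej]; simp
      have hje : j ∈ e := by rw [hej]; simp
      have hcovge' : ∀ v, w v ≤ covFn μ' v := by
        intro v
        rw [hcov' v]
        by_cases hvj : v = j
        · subst hvj
          simp only [hje, if_pos, Finset.mem_singleton, if_true]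
          linarith [hcov v]
        · have hvj' : v ∉ ({j} : Finset V) := by simp [hvj]
          rw [if_neg hvj', add_zero]
          by_cases hve : v ∈ e
          · have hvi : v = i := by
              rw [hej] at hve
              simp only [Finset.mem_insert, Finset.mem_singleton] at hve
              tauto
            subst hvi
            rw [if_pos hve]
            have := ecovFn_le_covFn μ hnn v
            linarith
          · rw [if_neg hve, add_zero]
            exact hcov v
      have hA : (Finset.univ.filter fun C : Finset V => C.card = 2 ∧ μ' C ≠ 0)
          ⊆ (Finset.univ.filter fun C : Finset V => C.card = 2 ∧ μ C ≠ 0) := by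
        intro C hC
        simp only [Finset.mem_filter, Finset.mem_univ, true_and] at hC ⊢
        refine ⟨hC.1, ?_⟩
        by_cases h1 : C = e
        · subst h1; exact hμe
        · by_cases h2 : C = {j}
          · exfalso
            rw [h2] at hC
            simp at hC
          · intro h0
            apply hC.2
            rw [hμ'def]
            simp [h1, h2, h0]
      have hB : (Finset.univ.filter fun v : V => w v < ecovFn μ' v)
          ⊆ (Finset.univ.filter fun v : V => w v < ecovFn μ v) := by
        intro v hv
        simp only [Finset.mem_filter, Finset.mem_univ, true_and] at hv ⊢
        refine lt_of_lt_of_le hv ?_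
        rw [hecov' v]
        split_ifs <;> linarith
      have hmeas : measureFn w μ' < measureFn w μ := by
        rcases le_total (μ e) (ecovFn μ i - w i) with hc | hc
        · -- ε = μ e : edge e dies
          have hεval : ε = μ e := min_eq_left hc
          have hznew : μ' e = 0 := by
            rw [hμ'def]
            dsimp only
            rw [if_pos rfl, if_neg hesing, hεval]
            ring
          have hemem : e ∈ (Finset.univ.filter fun C : Finset V => C.card = 2 ∧ μ C ≠ 0) := by
            simp [Finset.mem_filter, hcard, hμe]
          have hnmem : e ∉ (Finset.univ.filter fun C : Finset V => C.card = 2 ∧ μ' C ≠ 0) := by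
            simp [Finset.mem_filter, hznew]
          have h1 : (Finset.univ.filter fun C : Finset V => C.card = 2 ∧ μ' C ≠ 0).card
              < (Finset.univ.filter fun C : Finset V => C.card = 2 ∧ μ C ≠ 0).card :=
            Finset.card_lt_card ⟨hA, fun hsub => hnmem (hsub hemem)⟩
          have h2 := Finset.card_le_card hB
          unfold measureFn
          omega
        · -- ε = excess at i : i's excess dies
          have hεval : ε = ecovFn μ i - w i := min_eq_right hc
          have hznew : ecovFn μ' i = w i := by
            rw [hecov' i, if_pos hije, hεval]; ring
          have himem : i ∈ (Finset.univ.filter fun v : V => w v < ecovFn μ v) := by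
            simp [Finset.mem_filter, hi]
          have hnmem : i ∉ (Finset.univ.filter fun v : V => w v < ecovFn μ' v) := by
            simp [Finset.mem_filter, hznew]
          have h1 : (Finset.univ.filter fun v : V => w v < ecovFn μ' v).card
              < (Finset.univ.filter fun v : V => w v < ecovFn μ v).card :=
            Finset.card_lt_card ⟨hB, fun hsub => hnmem (hsub himem)⟩
          have h2 := Finset.card_le_card hA
          unfold measureFn
          omega
      obtain ⟨ν, hν1, hν2, hν3, hν4⟩ := ih μ' (by omega) hnn' hsupp' hcovge'
      exact ⟨ν, hν1, hν2, hν3, by rw [← hsum']; exact hν4⟩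
    · push_neg at hex
      exact finish_case G w μ hnn hsupp hcov hex

end Reduce2
section Eval
set_option linter.unusedSectionVars false
variable {V : Type*} [Fintype V] [DecidableEq V]

noncomputable def chi (R : Finset V) : V → ℝ := fun v => if v ∈ R then 1 else 0

lemma eval_handTerm (R T I : Finset V) :
    MvPolynomial.eval (chi R) (handTerm T I)
      = if I ⊆ R ∧ Disjoint (T \ I) R then 1 else 0 := by
  unfold handTerm
  rw [map_mul, map_prod, map_prod]
  by_cases h1 : I ⊆ R
  · by_cases h2 : Disjoint (T \ I) R
    · rw [if_pos ⟨h1, h2⟩]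
      rw [Finset.prod_eq_one (fun i hi => by simp [chi, h1 hi]),
          Finset.prod_eq_one (fun j hj => by simp [chi, Finset.disjoint_left.mp h2 hj]),
          one_mul]
    · rw [if_neg (fun h => h2 h.2)]
      obtain ⟨j, hj1, hj2⟩ := Finset.not_disjoint_iff.mp h2
      rw [Finset.prod_eq_zero hj1 (by simp [chi, hj2]), mul_zero]
  · rw [if_neg (fun h => h1 h.1)]
    obtain ⟨i, hi1, hi2⟩ := Finset.not_subset.mp h1
    rw [Finset.prod_eq_zero hi1 (by simp [chi, hi2]), zero_mul]

lemma inner_eval (c : Finset V → Finset V → ℝ) (T R : Finset V) :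
    (∑ I ∈ T.powerset, c T I * (if I ⊆ R ∧ Disjoint (T \ I) R then 1 else 0))
      = c T (T ∩ R) := by
  rw [Finset.sum_eq_single_of_mem (T ∩ R)
    (Finset.mem_powerset.mpr Finset.inter_subset_left)]
  · have hd : Disjoint (T \ (T ∩ R)) R := by
      rw [Finset.disjoint_left]
      intro x hx hxR
      rw [Finset.mem_sdiff] at hx
      exact hx.2 (Finset.mem_inter.mpr ⟨hx.1, hxR⟩)
    rw [if_pos ⟨Finset.inter_subset_right, hd⟩, mul_one]
  · intro I hI hne
    have hni : ¬ (I ⊆ R ∧ Disjoint (T \ I) R) := by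
      rintro ⟨hIR, hdisj⟩
      apply hne
      refine Finset.Subset.antisymm (Finset.subset_inter (Finset.mem_powerset.mp hI) hIR) ?_
      intro x hx
      rw [Finset.mem_inter] at hx
      by_contra hxI
      exact Finset.disjoint_left.mp hdisj (Finset.mem_sdiff.mpr ⟨hx.1, hxI⟩) hx.2
    rw [if_neg hni, mul_zero]

lemma quad_sum (R : Finset V) (s : Finset (V × V)) (f : V × V → ℝ) :
    (∑ q ∈ s, f q * (chi R q.1 * chi R q.2))
      = ∑ q ∈ s.filter (fun q : V × V => q.1 ∈ R ∧ q.2 ∈ R), f q := by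
  rw [Finset.sum_filter]
  refine Finset.sum_congr rfl fun q _ => ?_
  unfold chi
  by_cases h1 : q.1 ∈ R <;> by_cases h2 : q.2 ∈ R <;> simp [h1, h2]

open Classical in
lemma eval_pGW_gen (G : SimpleGraph V) (w : V → ℝ) (W : V → V → ℝ) (R : Finset V) :
    MvPolynomial.eval (chi R) (pGW G w W)
      = (∑ i ∈ R, w i) - 2⁻¹ *
        ∑ q ∈ (Finset.univ.filter (fun q : V × V => G.Adj q.1 q.2)).filter
            (fun q : V × V => q.1 ∈ R ∧ q.2 ∈ R), W q.1 q.2 := by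
  unfold pGW
  rw [map_sub, map_mul, map_sum, MvPolynomial.eval_C]
  congr 1
  · simp only [map_mul, MvPolynomial.eval_C, MvPolynomial.eval_X]
    unfold chi
    simp only [mul_ite, mul_one, mul_zero]
    rw [Finset.sum_ite_mem, Finset.univ_inter]
  · congr 1
    rw [map_sum, ← quad_sum]
    refine Finset.sum_congr rfl fun q _ => ?_
    rw [map_mul, map_mul, MvPolynomial.eval_C, MvPolynomial.eval_X, MvPolynomial.eval_X]

end Eval
section Facts
set_option linter.unusedSectionVars false
variable {V : Type*} [Fintype V] [DecidableEq V]

open Classical in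
lemma eval_pGW_empty (G : SimpleGraph V) (w : V → ℝ) (W : V → V → ℝ) :
    MvPolynomial.eval (chi (∅ : Finset V)) (pGW G w W) = 0 := by
  rw [eval_pGW_gen]
  simp

open Classical in
lemma eval_pGW_single (G : SimpleGraph V) (w : V → ℝ) (W : V → V → ℝ) (i : V) :
    MvPolynomial.eval (chi ({i} : Finset V)) (pGW G w W) = w i := by
  rw [eval_pGW_gen]
  have hemp : (Finset.univ.filter (fun q : V × V => G.Adj q.1 q.2)).filter
      (fun q : V × V => q.1 ∈ ({i} : Finset V) ∧ q.2 ∈ ({i} : Finset V)) = ∅ := by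
    rw [Finset.filter_eq_empty_iff]
    intro q hq
    simp only [Finset.mem_filter, Finset.mem_univ, true_and] at hq
    rintro ⟨h1, h2⟩
    rw [Finset.mem_singleton] at h1 h2
    rw [h1, h2] at hq
    exact G.irrefl hq
  rw [hemp, Finset.sum_empty, Finset.sum_singleton]
  ring

open Classical in
lemma eval_pGW_pair (G : SimpleGraph V) (w : V → ℝ) (W : V → V → ℝ)
    (hWs : ∀ i j, W i j = W j i) (i j : V) (hij : i ≠ j) :
    MvPolynomial.eval (chi ({i, j} : Finset V)) (pGW G w W)
      = w i + w j - (if G.Adj i j then W i j else 0) := by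
  rw [eval_pGW_gen, Finset.sum_pair hij]
  by_cases hadj : G.Adj i j
  · have hset : (Finset.univ.filter (fun q : V × V => G.Adj q.1 q.2)).filter
        (fun q : V × V => q.1 ∈ ({i, j} : Finset V) ∧ q.2 ∈ ({i, j} : Finset V))
        = ({(i, j), (j, i)} : Finset (V × V)) := by
      ext q
      simp only [Finset.mem_filter, Finset.mem_univ, true_and, Finset.mem_insert,
        Finset.mem_singleton]
      constructor
      · rintro ⟨hadjq, hq1 | hq1, hq2 | hq2⟩
        · exfalso; rw [hq1, hq2] at hadjq; exact G.irrefl hadjq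
        · exact Or.inl (Prod.ext hq1 hq2)
        · exact Or.inr (Prod.ext hq1 hq2)
        · exfalso; rw [hq1, hq2] at hadjq; exact G.irrefl hadjq
      · rintro (rfl | rfl)
        · exact ⟨hadj, Or.inl rfl, Or.inr rfl⟩
        · exact ⟨hadj.symm, Or.inr rfl, Or.inl rfl⟩
    rw [hset, Finset.sum_pair (by simp [Prod.ext_iff, hij] : ((i, j) : V × V) ≠ (j, i))]
    rw [if_pos hadj]
    have := hWs i j
    dsimp only
    rw [← this]
    ring
  · have hset : (Finset.univ.filter (fun q : V × V => G.Adj q.1 q.2)).filter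
        (fun q : V × V => q.1 ∈ ({i, j} : Finset V) ∧ q.2 ∈ ({i, j} : Finset V)) = ∅ := by
      rw [Finset.filter_eq_empty_iff]
      intro q hq
      simp only [Finset.mem_filter, Finset.mem_univ, true_and] at hq
      rintro ⟨h1, h2⟩
      simp only [Finset.mem_insert, Finset.mem_singleton] at h1 h2
      rcases h1 with rfl | rfl <;> rcases h2 with h2 | h2 <;> rw [h2] at hq
      · exact G.irrefl hq
      · exact hadj hq
      · exact hadj hq.symm
      · exact G.irrefl hq
    rw [hset, Finset.sum_empty, if_neg hadj]
    ring

open Classical in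
lemma key_facts (G : SimpleGraph V) (w : V → ℝ) (W : V → V → ℝ)
    (hWs : ∀ i j, W i j = W j i) (lam : ℝ) (c : Finset V → Finset V → ℝ)
    (heq : (MvPolynomial.C lam - pGW G w W : MvPolynomial V ℝ)
      = ∑ T ∈ Finset.univ.filter (fun T : Finset V => T.card ≤ 2),
          ∑ I ∈ T.powerset, MvPolynomial.C (c T I) * handTerm T I) :
    (lam = ∑ T ∈ Finset.univ.filter (fun T : Finset V => T.card ≤ 2), c T ∅)
    ∧ (∀ i : V, lam - w i
        = ∑ T ∈ Finset.univ.filter (fun T : Finset V => T.card ≤ 2), c T (T ∩ {i}))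
    ∧ (∀ i j : V, i ≠ j →
        lam - (w i + w j - (if G.Adj i j then W i j else 0))
        = ∑ T ∈ Finset.univ.filter (fun T : Finset V => T.card ≤ 2), c T (T ∩ ({i, j} : Finset V))) := by
  have key : ∀ R : Finset V,
      lam - MvPolynomial.eval (chi R) (pGW G w W)
        = ∑ T ∈ Finset.univ.filter (fun T : Finset V => T.card ≤ 2), c T (T ∩ R) := by
    intro R
    have h := congrArg (MvPolynomial.eval (chi R)) heq
    rw [map_sub, MvPolynomial.eval_C, map_sum] at h
    rw [h]
    refine Finset.sum_congr rfl fun T _ => ?_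
    rw [map_sum, ← inner_eval c T R]
    refine Finset.sum_congr rfl fun I _ => ?_
    rw [map_mul, MvPolynomial.eval_C, eval_handTerm]
  refine ⟨?_, fun i => ?_, fun i j hij => ?_⟩
  · have h := key ∅
    rw [eval_pGW_empty, sub_zero] at h
    rw [h]
    exact Finset.sum_congr rfl fun T _ => by rw [Finset.inter_empty]
  · have h := key {i}
    rw [eval_pGW_single] at h
    exact h
  · have h := key {i, j}
    rw [eval_pGW_pair G w W hWs i j hij] at h
    exact h

end Facts
section Small
set_option linter.unusedSectionVars false
variable {V : Type*} [Fintype V] [DecidableEq V]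

lemma inter_single_mem {T : Finset V} {i : V} (h : i ∈ T) : T ∩ {i} = {i} := by
  ext x
  simp only [Finset.mem_inter, Finset.mem_singleton]
  constructor
  · exact fun hx => hx.2
  · rintro rfl; exact ⟨h, rfl⟩

lemma inter_single_not_mem {T : Finset V} {i : V} (h : i ∉ T) : T ∩ {i} = ∅ := by
  ext x
  simp only [Finset.mem_inter, Finset.mem_singleton, Finset.notMem_empty, iff_false]
  rintro ⟨hx, rfl⟩; exact h hx

lemma inter_pair_both {T : Finset V} {i j : V} (hi : i ∈ T) (hj : j ∈ T) :
    T ∩ {i, j} = {i, j} := by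
  ext x
  simp only [Finset.mem_inter, Finset.mem_insert, Finset.mem_singleton]
  constructor
  · exact fun hx => hx.2
  · rintro (rfl | rfl)
    · exact ⟨hi, Or.inl rfl⟩
    · exact ⟨hj, Or.inr rfl⟩

lemma inter_pair_left {T : Finset V} {i j : V} (hi : i ∈ T) (hj : j ∉ T) :
    T ∩ {i, j} = {i} := by
  ext x
  simp only [Finset.mem_inter, Finset.mem_insert, Finset.mem_singleton]
  constructor
  · rintro ⟨hxT, rfl | rfl⟩
    · rfl
    · exact absurd hxT hj
  · rintro rfl; exact ⟨hi, Or.inl rfl⟩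

lemma inter_pair_right {T : Finset V} {i j : V} (hi : i ∉ T) (hj : j ∈ T) :
    T ∩ {i, j} = {j} := by
  ext x
  simp only [Finset.mem_inter, Finset.mem_insert, Finset.mem_singleton]
  constructor
  · rintro ⟨hxT, rfl | rfl⟩
    · exact absurd hxT hi
    · rfl
  · rintro rfl; exact ⟨hj, Or.inr rfl⟩

lemma inter_pair_none {T : Finset V} {i j : V} (hi : i ∉ T) (hj : j ∉ T) :
    T ∩ {i, j} = ∅ := by
  ext x
  simp only [Finset.mem_inter, Finset.mem_insert, Finset.mem_singleton,
    Finset.notMem_empty, iff_false]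
  rintro ⟨hxT, rfl | rfl⟩
  · exact hi hxT
  · exact hj hxT

lemma clique_pair_iff (G : SimpleGraph V) {i j : V} (hij : i ≠ j) :
    IsCliqueSet G {i, j} ↔ G.Adj i j := by
  constructor
  · intro h
    exact h i (by simp) j (by simp) hij
  · intro hadj x hx y hy hxy
    simp only [Finset.mem_insert, Finset.mem_singleton] at hx hy
    rcases hx with rfl | rfl <;> rcases hy with rfl | rfl
    · exact absurd rfl hxy
    · exact hadj
    · exact hadj.symm
    · exact absurd rfl hxy

lemma singleton_clique (G : SimpleGraph V) (j : V) : IsCliqueSet G {j} := by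
  intro x hx y hy hxy
  rw [Finset.mem_singleton] at hx hy
  exact absurd (hx.trans hy.symm) hxy

lemma max_sum_bound {a f p q : ℝ} (ha : 0 ≤ a) (hf : 0 ≤ f) (hp : 0 ≤ p) (hq : 0 ≤ q)
    (h : a + f = p + q) : max (a - p) 0 + max (a - q) 0 ≤ a := by
  rcases le_total (a - p) 0 with h1 | h1 <;> rcases le_total (a - q) 0 with h2 | h2
  · rw [max_eq_right h1, max_eq_right h2]; linarith
  · rw [max_eq_right h1, max_eq_left h2]; linarith
  · rw [max_eq_left h1, max_eq_right h2]; linarith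
  · rw [max_eq_left h1, max_eq_left h2]; linarith

end Small
section PairId
set_option linter.unusedSectionVars false
variable {V : Type*} [Fintype V] [DecidableEq V]

open Classical in
lemma pair_identity (G : SimpleGraph V) (w : V → ℝ) (W : V → V → ℝ) (lam : ℝ)
    (c : Finset V → Finset V → ℝ)
    (F1 : lam = ∑ T ∈ Finset.univ.filter (fun T : Finset V => T.card ≤ 2), c T ∅)
    (F2 : ∀ i : V, lam - w i
      = ∑ T ∈ Finset.univ.filter (fun T : Finset V => T.card ≤ 2), c T (T ∩ {i}))
    (F3 : ∀ i j : V, i ≠ j →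
      lam - (w i + w j - (if G.Adj i j then W i j else 0))
      = ∑ T ∈ Finset.univ.filter (fun T : Finset V => T.card ≤ 2), c T (T ∩ ({i, j} : Finset V)))
    {i j : V} (hij : i ≠ j) :
    c {i, j} ∅ + c {i, j} {i, j} - c {i, j} {i} - c {i, j} {j}
      = (if G.Adj i j then W i j else 0) := by
  have hpaircard : ({i, j} : Finset V).card = 2 := by
    rw [Finset.card_insert_of_notMem (by simp [hij]), Finset.card_singleton]
  have key : ∑ T ∈ Finset.univ.filter (fun T : Finset V => T.card ≤ 2),
      (c T (T ∩ ({i, j} : Finset V)) - c T (T ∩ {i}) - c T (T ∩ {j}) + c T ∅)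
      = c {i, j} {i, j} - c {i, j} {i} - c {i, j} {j} + c {i, j} ∅ := by
    have step1 : ∀ T ∈ Finset.univ.filter (fun T : Finset V => T.card ≤ 2),
        (c T (T ∩ ({i, j} : Finset V)) - c T (T ∩ {i}) - c T (T ∩ {j}) + c T ∅)
        = if T = ({i, j} : Finset V) then
            (c T (T ∩ ({i, j} : Finset V)) - c T (T ∩ {i}) - c T (T ∩ {j}) + c T ∅) else 0 := by
      intro T hT
      simp only [Finset.mem_filter, Finset.mem_univ, true_and] at hT
      by_cases heq' : T = ({i, j} : Finset V)
      · rw [if_pos heq']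
      · rw [if_neg heq']
        by_cases hi : i ∈ T <;> by_cases hj : j ∈ T
        · exfalso
          apply heq'
          have hsub : ({i, j} : Finset V) ⊆ T := by
            intro x hx
            simp only [Finset.mem_insert, Finset.mem_singleton] at hx
            rcases hx with rfl | rfl
            · exact hi
            · exact hj
          exact (Finset.eq_of_subset_of_card_le hsub (by omega)).symm
        · rw [inter_pair_left hi hj, inter_single_mem hi, inter_single_not_mem hj]
          ring
        · rw [inter_pair_right hi hj, inter_single_not_mem hi, inter_single_mem hj]
          ring
        · rw [inter_pair_none hi hj, inter_single_not_mem hi, inter_single_not_mem hj]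
          ring
    rw [Finset.sum_congr rfl step1, Finset.sum_ite_eq' (Finset.univ.filter
      (fun T : Finset V => T.card ≤ 2)) ({i, j} : Finset V)]
    rw [if_pos (by simp [Finset.mem_filter, hpaircard])]
    rw [Finset.inter_self, inter_single_mem (by simp : i ∈ ({i, j} : Finset V)),
      inter_single_mem (by simp : j ∈ ({i, j} : Finset V))]
  have expand : ∑ T ∈ Finset.univ.filter (fun T : Finset V => T.card ≤ 2),
      (c T (T ∩ ({i, j} : Finset V)) - c T (T ∩ {i}) - c T (T ∩ {j}) + c T ∅)
      = (∑ T ∈ Finset.univ.filter (fun T : Finset V => T.card ≤ 2), c T (T ∩ ({i, j} : Finset V)))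
        - (∑ T ∈ Finset.univ.filter (fun T : Finset V => T.card ≤ 2), c T (T ∩ {i}))
        - (∑ T ∈ Finset.univ.filter (fun T : Finset V => T.card ≤ 2), c T (T ∩ {j}))
        + (∑ T ∈ Finset.univ.filter (fun T : Finset V => T.card ≤ 2), c T ∅) := by
    rw [Finset.sum_add_distrib, Finset.sum_sub_distrib, Finset.sum_sub_distrib]
  have h3 := F3 i j hij
  have h2i := F2 i
  have h2j := F2 j
  rw [expand, ← h3, ← h2i, ← h2j, ← F1] at key
  linarith [key]

end PairId
section VertexId
set_option linter.unusedSectionVars false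
variable {V : Type*} [Fintype V] [DecidableEq V]

lemma insert_singleton_split (i : V) :
    Finset.univ.filter (fun T : Finset V => T.card ≤ 2 ∧ i ∈ T)
      = insert ({i} : Finset V)
          (Finset.univ.filter (fun T : Finset V => T.card = 2 ∧ i ∈ T)) := by
  ext T
  simp only [Finset.mem_filter, Finset.mem_univ, true_and, Finset.mem_insert]
  constructor
  · rintro ⟨hc, hi⟩
    have h1 : T.card ≠ 0 := by
      intro h0
      rw [Finset.card_eq_zero] at h0
      subst h0
      exact Finset.notMem_empty i hi
    by_cases h2 : T.card = 2
    · exact Or.inr ⟨h2, hi⟩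
    · have : T.card = 1 := by omega
      obtain ⟨x, rfl⟩ := Finset.card_eq_one.mp this
      rw [Finset.mem_singleton] at hi
      exact Or.inl (by rw [hi])
  · rintro (rfl | ⟨hc, hi⟩)
    · exact ⟨by simp, Finset.mem_singleton_self i⟩
    · exact ⟨by omega, hi⟩

lemma vertex_identity (w : V → ℝ) (lam : ℝ) (c : Finset V → Finset V → ℝ)
    (F1 : lam = ∑ T ∈ Finset.univ.filter (fun T : Finset V => T.card ≤ 2), c T ∅)
    (F2 : ∀ i : V, lam - w i
      = ∑ T ∈ Finset.univ.filter (fun T : Finset V => T.card ≤ 2), c T (T ∩ {i}))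
    (i : V) :
    w i = (c {i} ∅ - c {i} {i})
      + ∑ j ∈ Finset.univ.filter (fun j : V => j ≠ i), (c {i, j} ∅ - c {i, j} {i}) := by
  have h0 : w i = ∑ T ∈ Finset.univ.filter (fun T : Finset V => T.card ≤ 2),
      (c T ∅ - c T (T ∩ {i})) := by
    rw [Finset.sum_sub_distrib, ← F1, ← F2 i]
    ring
  have h1 : ∑ T ∈ Finset.univ.filter (fun T : Finset V => T.card ≤ 2),
      (c T ∅ - c T (T ∩ {i}))
      = ∑ T ∈ Finset.univ.filter (fun T : Finset V => T.card ≤ 2 ∧ i ∈ T),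
        (c T ∅ - c T (T ∩ {i})) := by
    rw [Finset.sum_filter, Finset.sum_filter]
    refine Finset.sum_congr rfl fun T _ => ?_
    by_cases hc : T.card ≤ 2 <;> by_cases hi : i ∈ T
    · simp [hc, hi]
    · rw [if_pos hc, if_neg (fun h => hi h.2), inter_single_not_mem hi, sub_self]
    · simp [hc]
    · simp [hc]
  have h2 : ({i} : Finset V) ∉
      Finset.univ.filter (fun T : Finset V => T.card = 2 ∧ i ∈ T) := by
    simp
  rw [h0, h1, insert_singleton_split i, Finset.sum_insert h2,
    sum_pairs_at i (fun T => c T ∅ - c T (T ∩ {i}))]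
  congr 1
  · rw [Finset.inter_self]
  · refine Finset.sum_congr rfl fun j hj => ?_
    rw [inter_single_mem (by simp : i ∈ ({i, j} : Finset V))]

end VertexId
section PartB
set_option linter.unusedSectionVars false
variable {V : Type*} [Fintype V] [DecidableEq V]

open Classical in
lemma partB (G : SimpleGraph V) (w : V → ℝ) (W : V → V → ℝ)
    (hw : ∀ v, 0 ≤ w v) (hWs : ∀ i j, W i j = W j i) (lam : ℝ)
    (c : Finset V → Finset V → ℝ) (hcnn : ∀ T I, 0 ≤ c T I)
    (heq : (MvPolynomial.C lam - pGW G w W : MvPolynomial V ℝ)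
      = ∑ T ∈ Finset.univ.filter (fun T : Finset V => T.card ≤ 2),
          ∑ I ∈ T.powerset, MvPolynomial.C (c T I) * handTerm T I) :
    ∃ ν : Finset V → ℝ, (∀ Cq, 0 ≤ ν Cq) ∧
      (∀ Cq, ν Cq ≠ 0 → IsCliqueSet G Cq ∧ Cq.card ≤ 2) ∧
      (∀ i, covFn ν i = w i) ∧ (∑ Cq : Finset V, ν Cq) ≤ lam := by
  obtain ⟨F1, F2, F3⟩ := key_facts G w W hWs lam c heq
  have pid : ∀ {i j : V}, i ≠ j →
      c {i, j} ∅ + c {i, j} {i, j} - c {i, j} {i} - c {i, j} {j}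
        = (if G.Adj i j then W i j else 0) :=
    fun hij => pair_identity G w W lam c F1 F2 F3 hij
  set A : V → ℝ := fun i => c {i} ∅ +
    ∑ j ∈ Finset.univ.filter (fun j : V => j ≠ i ∧ ¬ G.Adj i j),
      max (c {i, j} ∅ - c {i, j} {i}) 0 with hA
  have hAnn : ∀ i, 0 ≤ A i := by
    intro i
    rw [hA]
    refine add_nonneg (hcnn _ _) (Finset.sum_nonneg fun j _ => le_max_right _ _)
  set μ : Finset V → ℝ := fun C =>
    (if C.card = 2 ∧ IsCliqueSet G C then c C ∅ else 0)
      + (if C.card = 1 then ∑ i ∈ C, A i else 0) with hμ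
  have hμnn : ∀ C, 0 ≤ μ C := by
    intro C
    rw [hμ]
    refine add_nonneg ?_ ?_
    · split_ifs
      · exact hcnn _ _
      · exact le_refl 0
    · split_ifs
      · exact Finset.sum_nonneg fun i _ => hAnn i
      · exact le_refl 0
  have hμsupp : ∀ C, μ C ≠ 0 → IsCliqueSet G C ∧ C.card ≤ 2 := by
    intro C hC
    rw [hμ] at hC
    dsimp only at hC
    by_cases h2 : C.card = 2
    · rw [if_neg (by omega : ¬ C.card = 1), add_zero] at hC
      split_ifs at hC with h
      · exact ⟨h.2, by omega⟩
      · exact absurd rfl hC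
    · by_cases h1 : C.card = 1
      · refine ⟨?_, by omega⟩
        obtain ⟨z, rfl⟩ := Finset.card_eq_one.mp h1
        exact singleton_clique G z
      · exfalso
        apply hC
        rw [if_neg (by tauto), if_neg h1, add_zero]
  -- coverage
  have hμcov : ∀ i, w i ≤ covFn μ i := by
    intro i
    rw [hμ, covFn_add]
    have e1 : covFn (fun C => if C.card = 1 then ∑ i ∈ C, A i else 0) i = A i := by
      unfold covFn
      rw [Finset.sum_eq_single_of_mem ({i} : Finset V) (Finset.mem_univ _)]
      · simp
      · intro C _ hC
        by_cases hiC : i ∈ C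
        · by_cases h1 : C.card = 1
          · obtain ⟨z, rfl⟩ := Finset.card_eq_one.mp h1
            rw [Finset.mem_singleton] at hiC
            exact absurd (by rw [hiC]) hC
          · simp [h1]
        · simp [hiC]
    have e2 : covFn (fun C => if C.card = 2 ∧ IsCliqueSet G C then c C ∅ else 0) i
        = ∑ j ∈ Finset.univ.filter (fun j : V => j ≠ i),
            (if IsCliqueSet G {i, j} then c {i, j} ∅ else 0) := by
      unfold covFn
      rw [← sum_pairs_at i (fun T => if IsCliqueSet G T then c T ∅ else 0),
        Finset.sum_filter]
      refine Finset.sum_congr rfl fun C _ => ?_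
      by_cases hiC : i ∈ C <;> by_cases h2 : C.card = 2 <;>
        by_cases hcl : IsCliqueSet G C <;> simp [hiC, h2, hcl]
    rw [e1, e2]
    simp only [hA]
    have hsplit : ∑ j ∈ Finset.univ.filter (fun j : V => j ≠ i ∧ ¬ G.Adj i j),
        max (c {i, j} ∅ - c {i, j} {i}) 0
        = ∑ j ∈ Finset.univ.filter (fun j : V => j ≠ i),
            (if ¬ G.Adj i j then max (c {i, j} ∅ - c {i, j} {i}) 0 else 0) := by
      rw [← Finset.sum_filter, Finset.filter_filter]
    rw [hsplit]
    rw [vertex_identity w lam c F1 F2 i]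
    have hterm : ∀ j ∈ Finset.univ.filter (fun j : V => j ≠ i),
        c {i, j} ∅ - c {i, j} {i}
          ≤ (if ¬ G.Adj i j then max (c {i, j} ∅ - c {i, j} {i}) 0 else 0)
            + (if IsCliqueSet G {i, j} then c {i, j} ∅ else 0) := by
      intro j hj
      simp only [Finset.mem_filter, Finset.mem_univ, true_and] at hj
      by_cases hadj : G.Adj i j
      · rw [if_neg (not_not_intro hadj),
          if_pos ((clique_pair_iff G (Ne.symm hj)).mpr hadj)]
        linarith [hcnn ({i, j} : Finset V) ({i} : Finset V)]
      · rw [if_pos hadj]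
        have h1 : (0:ℝ) ≤ (if IsCliqueSet G {i, j} then c {i, j} ∅ else 0) := by
          split_ifs
          · exact hcnn _ _
          · exact le_refl 0
        linarith [le_max_left (c {i, j} ∅ - c {i, j} {i}) (0:ℝ)]
    have hsum := Finset.sum_le_sum hterm
    rw [Finset.sum_add_distrib] at hsum
    have hci := hcnn ({i} : Finset V) ({i} : Finset V)
    linarith
  -- total bound
  have hμtot : ∑ C : Finset V, μ C ≤ lam := by
    rw [hμ, Finset.sum_add_distrib]
    have s2 : ∑ C : Finset V, (if C.card = 2 ∧ IsCliqueSet G C then c C ∅ else 0)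
        = ∑ C ∈ Finset.univ.filter (fun C : Finset V => C.card = 2 ∧ IsCliqueSet G C),
            c C ∅ := (Finset.sum_filter _ _).symm
    have s1 : ∑ C : Finset V, (if C.card = 1 then ∑ i ∈ C, A i else 0)
        = ∑ a : V, A a := by
      rw [← Finset.sum_filter, sum_singletons (fun C => ∑ i ∈ C, A i)]
      exact Finset.sum_congr rfl fun a _ => Finset.sum_singleton _ _
    have sA : ∑ a : V, A a = (∑ a : V, c {a} ∅)
        + ∑ a : V, ∑ j ∈ Finset.univ.filter (fun j : V => j ≠ a ∧ ¬ G.Adj a j),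
            max (c {a, j} ∅ - c {a, j} {a}) 0 := by
      rw [hA, Finset.sum_add_distrib]
    -- the double sum D is bounded by the weight of non-clique pairs
    have hD : ∑ a : V, ∑ j ∈ Finset.univ.filter (fun j : V => j ≠ a ∧ ¬ G.Adj a j),
          max (c {a, j} ∅ - c {a, j} {a}) 0
        ≤ ∑ T ∈ Finset.univ.filter
            (fun T : Finset V => T.card = 2 ∧ ¬ IsCliqueSet G T), c T ∅ := by
      have hprod : ∑ a : V, ∑ j ∈ Finset.univ.filter (fun j : V => j ≠ a ∧ ¬ G.Adj a j),
            max (c {a, j} ∅ - c {a, j} {a}) 0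
          = ∑ q ∈ (Finset.univ : Finset (V × V)).filter
              (fun q : V × V => q.2 ≠ q.1 ∧ ¬ G.Adj q.1 q.2),
              max (c {q.1, q.2} ∅ - c {q.1, q.2} {q.1}) 0 := by
        rw [Finset.sum_filter, ← Finset.univ_product_univ, Finset.sum_product]
        refine Finset.sum_congr rfl fun a _ => ?_
        rw [Finset.sum_filter]
      rw [hprod]
      rw [← Finset.sum_fiberwise_of_maps_to (g := fun q : V × V => ({q.1, q.2} : Finset V))
        (t := Finset.univ.filter (fun T : Finset V => T.card = 2 ∧ ¬ IsCliqueSet G T)) ?_]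
      · refine Finset.sum_le_sum fun T hT => ?_
        simp only [Finset.mem_filter, Finset.mem_univ, true_and] at hT
        obtain ⟨i, j, hij, rfl⟩ := Finset.card_eq_two.mp hT.1
        have hnadj : ¬ G.Adj i j := fun h => hT.2 ((clique_pair_iff G hij).mpr h)
        have hfib : ((Finset.univ : Finset (V × V)).filter
              (fun q : V × V => q.2 ≠ q.1 ∧ ¬ G.Adj q.1 q.2)).filter
              (fun q : V × V => ({q.1, q.2} : Finset V) = {i, j})
            = ({(i, j), (j, i)} : Finset (V × V)) := by
          ext q
          simp only [Finset.mem_filter, Finset.mem_univ, true_and, Finset.mem_insert,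
            Finset.mem_singleton]
          constructor
          · rintro ⟨⟨hne, hnadjq⟩, hset⟩
            rcases (pair_eq_pair_iff').mp hset with ⟨h1, h2⟩ | ⟨h1, h2⟩
            · exact Or.inl (Prod.ext h1 h2)
            · exact Or.inr (Prod.ext h1 h2)
          · rintro (rfl | rfl)
            · exact ⟨⟨Ne.symm hij, hnadj⟩, rfl⟩
            · exact ⟨⟨hij, fun h => hnadj h.symm⟩, Finset.pair_comm j i⟩
        rw [hfib, Finset.sum_pair (by simp [Prod.ext_iff, hij] : ((i, j) : V × V) ≠ (j, i))]
        have hcomm : ({j, i} : Finset V) = {i, j} := Finset.pair_comm j i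
        dsimp only
        rw [hcomm]
        have hp := pid hij
        rw [if_neg hnadj] at hp
        exact max_sum_bound (f := c {i, j} {i, j}) (hcnn _ _) (hcnn _ _) (hcnn _ _)
          (hcnn _ _) (by linarith)
      · intro q hq
        simp only [Finset.mem_filter, Finset.mem_univ, true_and] at hq ⊢
        constructor
        · rw [Finset.card_insert_of_notMem (by simp [Ne.symm hq.1]), Finset.card_singleton]
        · intro hcl
          exact hq.2 (hcl q.1 (by simp) q.2 (by simp) (Ne.symm hq.1))
    -- assemble
    have hsing : ∑ a : V, c {a} ∅
        = ∑ C ∈ Finset.univ.filter (fun C : Finset V => C.card = 1), c C ∅ :=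
      (sum_singletons (fun C => c C ∅)).symm
    have hsplit2 : ∑ C ∈ Finset.univ.filter
          (fun C : Finset V => C.card = 2 ∧ IsCliqueSet G C), c C ∅
        + ∑ T ∈ Finset.univ.filter
          (fun T : Finset V => T.card = 2 ∧ ¬ IsCliqueSet G T), c T ∅
        = ∑ C ∈ Finset.univ.filter (fun C : Finset V => C.card = 2), c C ∅ := by
      rw [show Finset.univ.filter (fun C : Finset V => C.card = 2 ∧ IsCliqueSet G C)
          = (Finset.univ.filter (fun C : Finset V => C.card = 2)).filter
            (fun C => IsCliqueSet G C) by rw [Finset.filter_filter],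
        show Finset.univ.filter (fun C : Finset V => C.card = 2 ∧ ¬ IsCliqueSet G C)
          = (Finset.univ.filter (fun C : Finset V => C.card = 2)).filter
            (fun C => ¬ IsCliqueSet G C) by rw [Finset.filter_filter]]
      exact Finset.sum_filter_add_sum_filter_not _ _ _
    have hfinal : ∑ C ∈ Finset.univ.filter (fun C : Finset V => C.card = 2), c C ∅
        + ∑ C ∈ Finset.univ.filter (fun C : Finset V => C.card = 1), c C ∅
        ≤ ∑ T ∈ Finset.univ.filter (fun T : Finset V => T.card ≤ 2), c T ∅ := by
      have hdisj : Disjoint (Finset.univ.filter (fun C : Finset V => C.card = 2))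
          (Finset.univ.filter (fun C : Finset V => C.card = 1)) := by
        rw [Finset.disjoint_left]
        intro C h1 h2
        simp only [Finset.mem_filter] at h1 h2
        omega
      rw [← Finset.sum_union hdisj]
      refine Finset.sum_le_sum_of_subset_of_nonneg ?_ fun C _ _ => hcnn C ∅
      intro C hC
      rw [Finset.mem_union] at hC
      simp only [Finset.mem_filter, Finset.mem_univ, true_and] at hC ⊢
      omega
    rw [s2, s1, sA, F1]
    linarith
  obtain ⟨ν, h1, h2, h3, h4⟩ :=
    reduce G w hw (measureFn w μ) μ (le_refl _) hμnn hμsupp hμcov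
  exact ⟨ν, h1, h2, h3, le_trans h4 hμtot⟩

end PartB
section PartAHelp
set_option linter.unusedSectionVars false
variable {V : Type*} [Fintype V] [DecidableEq V]

lemma prod_one_sub_small (x : V → ℝ) (T : Finset V) (hT : T.card ≤ 2) :
    ∏ j ∈ T, (1 - x j)
      = 1 - (∑ j ∈ T, x j) + (if T.card = 2 then ∏ j ∈ T, x j else 0) := by
  by_cases h2 : T.card = 2
  · obtain ⟨a, b, hab, rfl⟩ := Finset.card_eq_two.mp h2
    rw [if_pos h2, Finset.prod_pair hab, Finset.prod_pair hab, Finset.sum_pair hab]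
    ring
  · rw [if_neg h2]
    have h1 : T.card = 0 ∨ T.card = 1 := by omega
    rcases h1 with h1 | h1
    · rw [Finset.card_eq_zero] at h1
      subst h1
      simp
    · obtain ⟨a, rfl⟩ := Finset.card_eq_one.mp h1
      rw [Finset.prod_singleton, Finset.sum_singleton]
      ring

lemma sum_extend_two (f : Finset V → ℝ)
    (hf : ∀ T : Finset V, ¬ T.card ≤ 2 → f T = 0) :
    ∑ T ∈ Finset.univ.filter (fun T : Finset V => T.card ≤ 2), f T
      = ∑ T : Finset V, f T := by
  refine Finset.sum_subset (Finset.filter_subset _ _) fun T _ hT => ?_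
  refine hf T fun hc => hT ?_
  simp [Finset.mem_filter, hc]

open Classical in
lemma fiber_pair (G : SimpleGraph V) {i j : V} (hij : i ≠ j) :
    (Finset.univ.filter (fun q : V × V => G.Adj q.1 q.2)).filter
      (fun q : V × V => ({q.1, q.2} : Finset V) = ({i, j} : Finset V))
    = if G.Adj i j then ({(i, j), (j, i)} : Finset (V × V)) else ∅ := by
  split_ifs with hadj
  · ext q
    simp only [Finset.mem_filter, Finset.mem_univ, true_and, Finset.mem_insert,
      Finset.mem_singleton]
    constructor
    · rintro ⟨hq, hset⟩
      rcases pair_eq_pair_iff'.mp hset with ⟨h1, h2⟩ | ⟨h1, h2⟩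
      · exact Or.inl (Prod.ext h1 h2)
      · exact Or.inr (Prod.ext h1 h2)
    · rintro (rfl | rfl)
      · exact ⟨hadj, rfl⟩
      · exact ⟨hadj.symm, Finset.pair_comm j i⟩
  · rw [Finset.filter_eq_empty_iff]
    intro q hq
    simp only [Finset.mem_filter, Finset.mem_univ, true_and] at hq
    intro hset
    rcases pair_eq_pair_iff'.mp hset with ⟨h1, h2⟩ | ⟨h1, h2⟩
    · rw [h1, h2] at hq
      exact hadj hq
    · rw [h1, h2] at hq
      exact hadj hq.symm

open Classical in
lemma WT_pair (G : SimpleGraph V) (W : V → V → ℝ) (hWs : ∀ i j, W i j = W j i)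
    {i j : V} (hij : i ≠ j) :
    (2⁻¹ : ℝ) * ∑ q ∈ (Finset.univ.filter (fun q : V × V => G.Adj q.1 q.2)).filter
        (fun q : V × V => ({q.1, q.2} : Finset V) = ({i, j} : Finset V)), W q.1 q.2
      = if G.Adj i j then W i j else 0 := by
  rw [fiber_pair G hij]
  split_ifs with hadj
  · rw [Finset.sum_pair (by simp [Prod.ext_iff, hij] : ((i, j) : V × V) ≠ (j, i))]
    dsimp only
    rw [← hWs i j]
    ring
  · simp

end PartAHelp
section PartA
set_option linter.unusedSectionVars false
variable {V : Type*} [Fintype V] [DecidableEq V]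

open Classical in
lemma partA (G : SimpleGraph V) (w : V → ℝ) (W : V → V → ℝ)
    (hWs : ∀ i j, W i j = W j i)
    (hW : ∀ i j, G.Adj i j → min (w i) (w j) ≤ W i j)
    (lamF : Finset V → ℝ) (hnn : ∀ Cq, 0 ≤ lamF Cq)
    (hsupp : ∀ Cq, lamF Cq ≠ 0 → IsCliqueSet G Cq ∧ Cq.card ≤ 2)
    (hcov : ∀ i, covFn lamF i = w i) :
    InHandelman 2 (MvPolynomial.C (∑ Cq : Finset V, lamF Cq) - pGW G w W) := by
  set WT : Finset V → ℝ := fun T => 2⁻¹ *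
    ∑ q ∈ (Finset.univ.filter (fun q : V × V => G.Adj q.1 q.2)).filter
      (fun q : V × V => ({q.1, q.2} : Finset V) = T), W q.1 q.2 with hWTdef
  have hzero_big : ∀ T : Finset V, ¬ T.card ≤ 2 → lamF T = 0 := by
    intro T hT
    by_contra hne
    exact hT (hsupp T hne).2
  have hlam_le : ∀ T : Finset V, T.card = 2 → lamF T ≤ WT T := by
    intro T hc
    obtain ⟨i, j, hij, rfl⟩ := Finset.card_eq_two.mp hc
    have hWTval : WT {i, j} = if G.Adj i j then W i j else 0 := by
      rw [hWTdef]
      exact WT_pair G W hWs hij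
    by_cases hadj : G.Adj i j
    · have h1 : lamF {i, j} ≤ w i := by
        rw [← hcov i]
        unfold covFn
        have := Finset.single_le_sum
          (f := fun C : Finset V => if i ∈ C then lamF C else 0)
          (fun C _ => by split_ifs; exacts [hnn C, le_refl 0])
          (Finset.mem_univ ({i, j} : Finset V))
        rwa [if_pos (by simp : i ∈ ({i, j} : Finset V))] at this
      have h2 : lamF {i, j} ≤ w j := by
        rw [← hcov j]
        unfold covFn
        have := Finset.single_le_sum
          (f := fun C : Finset V => if j ∈ C then lamF C else 0)
          (fun C _ => by split_ifs; exacts [hnn C, le_refl 0])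
          (Finset.mem_univ ({i, j} : Finset V))
        rwa [if_pos (by simp : j ∈ ({i, j} : Finset V))] at this
      rw [hWTval, if_pos hadj]
      exact le_trans (le_min h1 h2) (hW i j hadj)
    · have h0 : lamF {i, j} = 0 := by
        by_contra hne
        exact hadj ((clique_pair_iff G hij).mp (hsupp _ hne).1)
      rw [hWTval, if_neg hadj, h0]
  refine ⟨fun T I => (if I = ∅ then lamF T else 0)
      + (if I = T ∧ T.card = 2 then WT T - lamF T else 0), fun T I => ?_, ?_⟩
  · refine add_nonneg ?_ ?_
    · split_ifs
      · exact hnn T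
      · exact le_refl 0
    · split_ifs with h
      · linarith [hlam_le T h.2]
      · exact le_refl 0
  · apply MvPolynomial.funext
    intro x
    rw [map_sub, MvPolynomial.eval_C]
    have hpgw : MvPolynomial.eval x (pGW G w W)
        = (∑ i, w i * x i) - 2⁻¹ *
          ∑ q ∈ Finset.univ.filter (fun q : V × V => G.Adj q.1 q.2),
            W q.1 q.2 * (x q.1 * x q.2) := by
      simp only [pGW, map_sub, map_mul, map_sum, MvPolynomial.eval_C, MvPolynomial.eval_X]
    have hrhs : MvPolynomial.eval x
        (∑ T ∈ Finset.univ.filter (fun T : Finset V => T.card ≤ 2),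
          ∑ I ∈ T.powerset, MvPolynomial.C
            ((if I = ∅ then lamF T else 0)
              + (if I = T ∧ T.card = 2 then WT T - lamF T else 0)) * handTerm T I)
        = ∑ T ∈ Finset.univ.filter (fun T : Finset V => T.card ≤ 2),
            ∑ I ∈ T.powerset,
              ((if I = ∅ then lamF T else 0)
                + (if I = T ∧ T.card = 2 then WT T - lamF T else 0))
                * ((∏ i ∈ I, x i) * ∏ j ∈ T \ I, (1 - x j)) := by
      simp only [handTerm, map_sum, map_mul, map_prod, map_sub, map_one,
        MvPolynomial.eval_C, MvPolynomial.eval_X]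
    rw [hpgw, hrhs]
    -- compute the inner sums
    have inner : ∀ T ∈ Finset.univ.filter (fun T : Finset V => T.card ≤ 2),
        (∑ I ∈ T.powerset,
          ((if I = ∅ then lamF T else 0)
            + (if I = T ∧ T.card = 2 then WT T - lamF T else 0))
            * ((∏ i ∈ I, x i) * ∏ j ∈ T \ I, (1 - x j)))
        = lamF T * ∏ j ∈ T, (1 - x j)
          + (if T.card = 2 then (WT T - lamF T) * ∏ i ∈ T, x i else 0) := by
      intro T hT
      have split : ∀ I ∈ T.powerset,
          ((if I = ∅ then lamF T else 0)
            + (if I = T ∧ T.card = 2 then WT T - lamF T else 0))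
            * ((∏ i ∈ I, x i) * ∏ j ∈ T \ I, (1 - x j))
          = (if I = ∅ then lamF T * ((∏ i ∈ I, x i) * ∏ j ∈ T \ I, (1 - x j)) else 0)
            + (if I = T ∧ T.card = 2 then
                (WT T - lamF T) * ((∏ i ∈ I, x i) * ∏ j ∈ T \ I, (1 - x j)) else 0) := by
        intro I _
        split_ifs <;> ring
      rw [Finset.sum_congr rfl split, Finset.sum_add_distrib]
      congr 1
      · rw [Finset.sum_ite_eq' T.powerset (∅ : Finset V)]
        rw [if_pos (Finset.empty_mem_powerset T)]
        rw [Finset.prod_empty, one_mul, Finset.sdiff_empty]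
      · by_cases h2 : T.card = 2
        · have hc : ∀ I ∈ T.powerset,
              (if I = T ∧ T.card = 2 then
                (WT T - lamF T) * ((∏ i ∈ I, x i) * ∏ j ∈ T \ I, (1 - x j)) else 0)
              = (if I = T then
                (WT T - lamF T) * ((∏ i ∈ I, x i) * ∏ j ∈ T \ I, (1 - x j)) else 0) := by
            intro I _
            simp [h2]
          rw [Finset.sum_congr rfl hc, Finset.sum_ite_eq' T.powerset T]
          rw [if_pos (Finset.mem_powerset_self T), if_pos h2]
          rw [Finset.sdiff_self, Finset.prod_empty, mul_one]
        · rw [if_neg h2]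
          refine Finset.sum_eq_zero fun I _ => ?_
          rw [if_neg (fun h => h2 h.2)]
    rw [Finset.sum_congr rfl inner, Finset.sum_add_distrib]
    -- expand the (1-x) products
    have part1 : ∑ T ∈ Finset.univ.filter (fun T : Finset V => T.card ≤ 2),
        lamF T * ∏ j ∈ T, (1 - x j)
        = (∑ T ∈ Finset.univ.filter (fun T : Finset V => T.card ≤ 2), lamF T)
          - (∑ T ∈ Finset.univ.filter (fun T : Finset V => T.card ≤ 2),
              lamF T * ∑ j ∈ T, x j)
          + ∑ T ∈ Finset.univ.filter (fun T : Finset V => T.card ≤ 2),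
              (if T.card = 2 then lamF T * ∏ i ∈ T, x i else 0) := by
      have hcong : ∀ T ∈ Finset.univ.filter (fun T : Finset V => T.card ≤ 2),
          lamF T * ∏ j ∈ T, (1 - x j)
          = lamF T - lamF T * ∑ j ∈ T, x j
            + (if T.card = 2 then lamF T * ∏ i ∈ T, x i else 0) := by
        intro T hT
        simp only [Finset.mem_filter, Finset.mem_univ, true_and] at hT
        rw [prod_one_sub_small x T hT]
        split_ifs <;> ring
      rw [Finset.sum_congr rfl hcong, Finset.sum_add_distrib, Finset.sum_sub_distrib]
    rw [part1]
    -- merge the two if-sums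
    have merge : ∑ T ∈ Finset.univ.filter (fun T : Finset V => T.card ≤ 2),
          (if T.card = 2 then lamF T * ∏ i ∈ T, x i else 0)
        + ∑ T ∈ Finset.univ.filter (fun T : Finset V => T.card ≤ 2),
          (if T.card = 2 then (WT T - lamF T) * ∏ i ∈ T, x i else 0)
        = ∑ T ∈ Finset.univ.filter (fun T : Finset V => T.card ≤ 2),
          (if T.card = 2 then WT T * ∏ i ∈ T, x i else 0) := by
      rw [← Finset.sum_add_distrib]
      refine Finset.sum_congr rfl fun T _ => ?_
      split_ifs <;> ring
    -- L1
    have L1 : ∑ T ∈ Finset.univ.filter (fun T : Finset V => T.card ≤ 2), lamF T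
        = ∑ Cq : Finset V, lamF Cq := sum_extend_two lamF hzero_big
    -- L2
    have L2 : ∑ T ∈ Finset.univ.filter (fun T : Finset V => T.card ≤ 2),
        lamF T * ∑ j ∈ T, x j = ∑ i, w i * x i := by
      rw [sum_extend_two (fun T => lamF T * ∑ j ∈ T, x j)
        (fun T hT => by rw [hzero_big T hT, zero_mul])]
      have step1 : ∀ T : Finset V, lamF T * ∑ j ∈ T, x j
          = ∑ j : V, (if j ∈ T then lamF T * x j else 0) := by
        intro T
        rw [Finset.mul_sum, Finset.sum_ite_mem, Finset.univ_inter]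
      rw [Finset.sum_congr rfl fun T _ => step1 T, Finset.sum_comm]
      refine Finset.sum_congr rfl fun j _ => ?_
      have := hcov j
      unfold covFn at this
      rw [← this, Finset.sum_mul]
      refine Finset.sum_congr rfl fun T _ => ?_
      split_ifs <;> ring
    -- L3
    have hfilter22 : (Finset.univ.filter (fun T : Finset V => T.card ≤ 2)).filter
        (fun T : Finset V => T.card = 2)
        = Finset.univ.filter (fun T : Finset V => T.card = 2) := by
      rw [Finset.filter_filter]
      ext T
      simp only [Finset.mem_filter, Finset.mem_univ, true_and]
      omega
    have L3 : ∑ T ∈ Finset.univ.filter (fun T : Finset V => T.card ≤ 2),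
        (if T.card = 2 then WT T * ∏ i ∈ T, x i else 0)
        = 2⁻¹ * ∑ q ∈ Finset.univ.filter (fun q : V × V => G.Adj q.1 q.2),
            W q.1 q.2 * (x q.1 * x q.2) := by
      rw [← Finset.sum_filter, hfilter22]
      have hmaps : ∀ q ∈ Finset.univ.filter (fun q : V × V => G.Adj q.1 q.2),
          ({q.1, q.2} : Finset V) ∈ Finset.univ.filter (fun T : Finset V => T.card = 2) := by
        intro q hq
        simp only [Finset.mem_filter, Finset.mem_univ, true_and] at hq ⊢
        rw [Finset.card_insert_of_notMem (by simpa using hq.ne), Finset.card_singleton]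
      rw [← Finset.sum_fiberwise_of_maps_to hmaps
        (fun q : V × V => W q.1 q.2 * (x q.1 * x q.2))]
      rw [Finset.mul_sum]
      refine Finset.sum_congr rfl fun T hT => ?_
      have hinner : ∑ q ∈ (Finset.univ.filter (fun q : V × V => G.Adj q.1 q.2)).filter
            (fun q : V × V => ({q.1, q.2} : Finset V) = T),
            W q.1 q.2 * (x q.1 * x q.2)
          = (∑ q ∈ (Finset.univ.filter (fun q : V × V => G.Adj q.1 q.2)).filter
            (fun q : V × V => ({q.1, q.2} : Finset V) = T), W q.1 q.2) * ∏ i ∈ T, x i := by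
        rw [Finset.sum_mul]
        refine Finset.sum_congr rfl fun q hq => ?_
        simp only [Finset.mem_filter, Finset.mem_univ, true_and] at hq
        rw [← hq.2, Finset.prod_pair hq.1.ne]
      rw [hinner, hWTdef]
      ring
    linarith [merge, L1, L2, L3]

end PartA
/-- For node weights `w ≥ 0` and edge weights `w_{ij} ≥ min(w_i,w_j)`,
the Handelman bound of order 2 equals the fractional 2-clique cover number:
`p_han^{(2)}(G,w) = ρ_2(G,w)`. -/
theorem handelman_two_eq_rho_two {V : Type*} [Fintype V] [DecidableEq V]
    (G : SimpleGraph V) (w : V → ℝ) (W : V → V → ℝ) (hw : ∀ v, 0 ≤ w v)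
    (hWs : ∀ i j, W i j = W j i)
    (hW : ∀ i j, G.Adj i j → min (w i) (w j) ≤ W i j) :
    sInf {lam : ℝ | InHandelman 2 (C lam - pGW G w W)} = rhoT G w 2 := by
  set S := {lam : ℝ | InHandelman 2 (C lam - pGW G w W)} with hS
  set R := {v : ℝ | ∃ lam : Finset V → ℝ, (∀ Cq, 0 ≤ lam Cq) ∧
    (∀ Cq, lam Cq ≠ 0 → IsCliqueSet G Cq ∧ Cq.card ≤ 2) ∧
    (∀ i, (∑ Cq : Finset V, if i ∈ Cq then lam Cq else 0) = w i) ∧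
    v = ∑ Cq : Finset V, lam Cq} with hR
  have hrho : rhoT G w 2 = sInf R := by
    unfold rhoT
    congr 1
    ext v
    constructor
    · rintro ⟨lamF, h1, h2, h3, h4⟩
      refine ⟨lamF, h1, h2, fun i => ?_, h4⟩
      rw [← h3 i]
      exact Finset.sum_congr rfl fun C _ => by by_cases h : i ∈ C <;> simp [h]
    · rintro ⟨lamF, h1, h2, h3, h4⟩
      refine ⟨lamF, h1, h2, fun i => ?_, h4⟩
      rw [← h3 i]
      exact Finset.sum_congr rfl fun C _ => by by_cases h : i ∈ C <;> simp [h]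
  rw [hrho]
  have hconv : ∀ (ν : Finset V → ℝ) (i : V),
      (∑ Cq : Finset V, if i ∈ Cq then ν Cq else 0) = covFn ν i := by
    intro ν i
    unfold covFn
    refine Finset.sum_congr rfl fun C _ => ?_
    by_cases h : i ∈ C <;> simp [h]
  have hR0 : ∀ v ∈ R, (0:ℝ) ≤ v := by
    rintro v ⟨lamF, h1, _, _, rfl⟩
    exact Finset.sum_nonneg fun C _ => h1 C
  have hRne : R.Nonempty := by
    refine ⟨∑ Cq : Finset V, (if Cq.card = 1 then ∑ i ∈ Cq, w i else 0),
      fun Cq => if Cq.card = 1 then ∑ i ∈ Cq, w i else 0, ?_, ?_, ?_, rfl⟩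
    · intro Cq
      dsimp only
      split_ifs
      · exact Finset.sum_nonneg fun i _ => hw i
      · exact le_refl 0
    · intro Cq hCq
      dsimp only at hCq
      split_ifs at hCq with h1
      · obtain ⟨z, rfl⟩ := Finset.card_eq_one.mp h1
        exact ⟨singleton_clique G z, by simp⟩
      · exact absurd rfl hCq
    · intro i
      rw [hconv]
      unfold covFn
      rw [Finset.sum_eq_single_of_mem ({i} : Finset V) (Finset.mem_univ _)]
      · simp
      · intro C _ hC
        by_cases hiC : i ∈ C
        · by_cases h1 : C.card = 1
          · obtain ⟨z, rfl⟩ := Finset.card_eq_one.mp h1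
            rw [Finset.mem_singleton] at hiC
            exact absurd (by rw [hiC]) hC
          · simp [h1]
        · simp [hiC]
  have hsub : R ⊆ S := by
    rintro v ⟨lamF, h1, h2, h3, rfl⟩
    exact partA G w W hWs hW lamF h1 h2 fun i => by rw [← hconv]; exact h3 i
  have hS_lb : ∀ lam ∈ S, (0:ℝ) ≤ lam := by
    rintro lam ⟨c, hcnn, heq⟩
    obtain ⟨F1, _, _⟩ := key_facts G w W hWs lam c heq
    rw [F1]
    exact Finset.sum_nonneg fun T _ => hcnn T ∅
  have hSne : S.Nonempty := ⟨_, hsub hRne.choose_spec⟩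
  have hRlb : BddBelow R := ⟨0, fun v hv => hR0 v hv⟩
  have hSlb : BddBelow S := ⟨0, fun lam hlam => hS_lb lam hlam⟩
  apply le_antisymm
  · exact csInf_le_csInf hSlb hRne hsub
  · refine le_csInf hSne fun lam hlam => ?_
    obtain ⟨c, hcnn, heq⟩ := hlam
    obtain ⟨ν, h1, h2, h3, h4⟩ := partB G w W hw hWs lam c hcnn heq
    refine le_trans (csInf_le hRlb ?_) h4
    exact ⟨ν, h1, h2, fun i => by rw [hconv]; exact h3 i, rfl⟩
end
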